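/- arXiv:2006.10339 — 11 statements merged into one kernel-verified Lean document; each statement's English description precedes it below -/
import Mathlib

section
/- Let G be a finite permutation group on a set Ω containing a sharply transitive subset, and let ω ∈ Ω. Then every intersecting set S ⊆ G satisfies |S| ≤ |G_ω|; that is, G has the EKR property. -/
/-- Let `G` be a finite permutation group on a finite set `Ω`
containing a sharply transitive subset `C`, and let `ω ∈ Ω`.  Then every
intersecting set `S ⊆ G` satisfies `|S| ≤ |G_ω|`; that is, `G` has the EKR
property. -/
theorem stmt2 {Ω : Type*} [Fintype Ω] {G : Type*} [Group G] [Fintype G]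
    [MulAction G Ω] [FaithfulSMul G Ω]
    (C : Set G) (hC : ∀ α β : Ω, ∃! c, c ∈ C ∧ c • α = β)
    (ω : Ω) (S : Set G)
    (hS : ∀ x ∈ S, ∀ y ∈ S, ∃ α : Ω, x • α = y • α) :
    S.ncard ≤ Nat.card (MulAction.stabilizer G ω) := by
  -- the action is transitive
  have htrans : MulAction.IsPretransitive G Ω :=
    ⟨fun α β => ((hC α β).exists).imp fun c hc => hc.2⟩
  -- the map (s, c) ↦ s * c is injective on S × C
  have hinj : Function.Injective (fun p : S × C => (p.1 : G) * (p.2 : G)) := by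
    rintro ⟨⟨s₁, hs₁⟩, ⟨c₁, hc₁⟩⟩ ⟨⟨s₂, hs₂⟩, ⟨c₂, hc₂⟩⟩ h
    simp only at h
    obtain ⟨α, hα⟩ := hS s₂ hs₂ s₁ hs₁
    have hcc : c₁ = c₂ := by
      have key : c₂ • (c₁⁻¹ • α) = c₁ • (c₁⁻¹ • α) := by
        have hc2eq : c₂ = s₂⁻¹ * (s₁ * c₁) := by
          rw [h]; group
        rw [hc2eq]
        simp only [mul_smul, smul_inv_smul]
        rw [← hα, inv_smul_smul]
      exact ((hC (c₁⁻¹ • α) (c₁ • (c₁⁻¹ • α))).unique ⟨hc₂, key⟩ ⟨hc₁, rfl⟩).symm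
    have hss : s₁ = s₂ := by
      subst hcc
      exact mul_right_cancel h
    simp [hss, hcc]
  have hcard1 : Nat.card (S × C) ≤ Nat.card G := Nat.card_le_card_of_injective _ hinj
  -- C is in bijection with Ω
  have hCΩ : Nat.card C = Nat.card Ω := by
    have : Function.Bijective (fun c : C => (c : G) • ω) := by
      constructor
      · rintro ⟨c₁, hc₁⟩ ⟨c₂, hc₂⟩ h
        simp only at h
        exact Subtype.ext ((hC ω (c₂ • ω)).unique ⟨hc₁, h⟩ ⟨hc₂, rfl⟩)
      · intro β
        obtain ⟨c, ⟨hc, hcβ⟩, -⟩ := hC ω β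
        exact ⟨⟨c, hc⟩, hcβ⟩
    exact Nat.card_eq_of_bijective _ this
  -- orbit-stabilizer
  have horb : (MulAction.stabilizer G ω).index = Nat.card Ω :=
    MulAction.index_stabilizer_of_transitive G ω
  have hos : Nat.card Ω * Nat.card (MulAction.stabilizer G ω) = Nat.card G := by
    rw [← horb]; exact Subgroup.index_mul_card _
  rcases S.eq_empty_or_nonempty with rfl | ⟨s, hs⟩
  · simp
  · obtain ⟨α, -⟩ := hS s hs s hs
    have hΩpos : 0 < Nat.card Ω := Nat.card_pos_iff.mpr ⟨⟨α⟩, inferInstance⟩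
    have : S.ncard * Nat.card Ω ≤ Nat.card Ω * Nat.card (MulAction.stabilizer G ω) := by
      calc S.ncard * Nat.card Ω = Nat.card (S × C) := by
            rw [Nat.card_prod, Nat.card_coe_set_eq, hCΩ]
        _ ≤ Nat.card G := hcard1
        _ = _ := hos.symm
    rw [mul_comm (Nat.card Ω)] at this
    exact Nat.le_of_mul_le_mul_right this hΩpos
end

section
/- For every natural number M > 0 there exist a finite nonempty set Ω, a transitive permutation group G ≤ Sym(Ω), an intersecting set S ⊆ G, and a point ω ∈ Ω such that |S| > M·|G_ω|. -/
open Equiv MulAction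

namespace Stmt3Aux

abbrev V (n : ℕ) := Fin (n+1) → ZMod 2

def e0 (n : ℕ) : V n := fun _ => 1

lemma exists_sigma (n : ℕ) (c : V n) (hc : c ≠ 0) :
    ∃ σ : Equiv.Perm (V n), σ * Equiv.addLeft (e0 n) = Equiv.addLeft c * σ := by
  obtain ⟨i, hi⟩ : ∃ i, c i = 1 := by
    by_contra h
    push_neg at h
    apply hc
    funext j
    have h1 : ∀ u : ZMod 2, u ≠ 1 → u = 0 := by decide
    exact h1 _ (h j)
  have inv : Function.Involutive (fun (x : V n) (j : Fin (n+1)) => x j + x i * (1 + c j)) := by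
    intro x
    funext j
    simp only
    have hxi : x i + x i * (1 + c i) = x i := by
      rw [hi]
      have : ∀ u : ZMod 2, u + u * (1 + 1) = u := by decide
      exact this _
    rw [hxi]
    have : ∀ u v w : ZMod 2, (u + v * (1 + w)) + v * (1 + w) = u := by decide
    exact this _ _ _
  refine ⟨inv.toPerm _, ?_⟩
  ext x j
  simp only [Equiv.Perm.mul_apply, Function.Involutive.coe_toPerm, Equiv.coe_addLeft,
    Pi.add_apply, e0]
  have : ∀ u v w : ZMod 2, (1 + u) + (1 + v) * (1 + w) = w + (u + v * (1 + w)) := by decide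
  exact this (x j) (x i) (c j)


abbrev A (n : ℕ) := Equiv.Perm (V n)

def t (n : ℕ) : A n := Equiv.addLeft (e0 n)

def H (n : ℕ) : Subgroup (A n) := Subgroup.zpowers (t n)

-- elements of zpowers t are addLeft translations by 0 or e0
lemma mem_H_iff (x : A n) : x ∈ H n ↔ x = 1 ∨ x = t n := by
  constructor
  · rintro ⟨k, rfl⟩
    have huu : ∀ u : ZMod 2, u + u = 0 := by decide
    rcases Int.even_or_odd k with ⟨m, hm⟩ | ⟨m, hm⟩
    · left
      subst hm
      show Equiv.addLeft (e0 n) ^ (m + m) = 1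
      rw [zsmul_addLeft]
      have h0 : (m + m) • e0 n = 0 := by
        funext j
        simp only [Pi.smul_apply, e0, zsmul_one, Pi.zero_apply, Int.cast_add]
        exact huu _
      rw [h0, addLeft_zero]
    · right
      subst hm
      show Equiv.addLeft (e0 n) ^ (2 * m + 1) = t n
      rw [zsmul_addLeft]
      show _ = Equiv.addLeft (e0 n)
      congr 1
      funext j
      simp only [Pi.smul_apply, e0, zsmul_one, Int.cast_add, Int.cast_mul, Int.cast_ofNat,
        Int.cast_one]
      have : ∀ u : ZMod 2, 2 * u + 1 = 1 := by decide
      exact this _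
  · rintro (rfl | rfl)
    · exact one_mem _
    · exact Subgroup.mem_zpowers _


lemma addLeft_inj' {n : ℕ} (u v : V n) (h : Equiv.addLeft u = Equiv.addLeft v) : u = v := by
  have := congrFun (congrArg (fun (e : Equiv.Perm (V n)) => (e : V n → V n)) h) 0
  simpa using this

end Stmt3Aux

open Stmt3Aux

/-- For every natural number `M > 0` there exist a finite nonempty
set `Ω`, a transitive permutation group `G ≤ Sym(Ω)`, an intersecting set `S ⊆ G`
and a point `ω ∈ Ω` such that `|S| > M · |G_ω|`. -/
theorem stmt3 (M : ℕ) (hM : 0 < M) :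
    ∃ (Ω : Type) (_ : Fintype Ω) (_ : Nonempty Ω) (G : Subgroup (Equiv.Perm Ω)),
      MulAction.IsPretransitive G Ω ∧
      ∃ (S : Set G) (ω : Ω),
        (∀ x ∈ S, ∀ y ∈ S, ∃ α : Ω, x • α = y • α) ∧
        S.ncard > M * Nat.card (MulAction.stabilizer G ω) := by
  classical
  set n := M + 1 with hn
  set Ω := A n ⧸ H n with hΩ
  set π := MulAction.toPermHom (A n) Ω with hπ
  refine ⟨Ω, Fintype.ofFinite Ω, ⟨(1 : A n)⟩, π.range, ?_, ?_⟩
  · constructor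
    intro ω₁ ω₂
    induction' ω₁ using QuotientGroup.induction_on with g₁
    induction' ω₂ using QuotientGroup.induction_on with g₂
    refine ⟨⟨π (g₂ * g₁⁻¹), ⟨_, rfl⟩⟩, ?_⟩
    show π (g₂ * g₁⁻¹) • ((g₁ : A n) : Ω) = ((g₂ : A n) : Ω)
    show (g₂ * g₁⁻¹) • ((g₁ : A n) : Ω) = ((g₂ : A n) : Ω)
    rw [MulAction.Quotient.smul_mk]
    rw [smul_eq_mul]
    congr 1
    group
  · set φ : (Fin n → ZMod 2) → π.range :=
      fun w => ⟨π (Equiv.addLeft (Fin.cons 0 w)), ⟨_, rfl⟩⟩ with hφ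
    refine ⟨Set.range φ, ((1 : A n) : Ω), ?_, ?_⟩
    · -- intersecting
      rintro x ⟨w, rfl⟩ y ⟨w', rfl⟩
      set a : V n := Fin.cons 0 w with ha
      set b : V n := Fin.cons 0 w' with hb
      by_cases hab : a = b
      · have hw : w = w' := by
          funext j
          have := congrFun hab j.succ
          simpa [ha, hb] using this
        exact ⟨((1 : A n) : Ω), by rw [hw]⟩
      · have hc : (-a + b : V n) ≠ 0 := by
          intro h0
          exact hab (by linear_combination (norm := abel) -h0) -- a = b from -a+b=0
        obtain ⟨σ, hσ⟩ := exists_sigma n (-a + b) hc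
        have hconj : σ⁻¹ * Equiv.addLeft (-a + b) * σ = t n := by
          rw [mul_assoc, ← hσ, t]; group
        refine ⟨((σ : A n) : Ω), ?_⟩
        show π (Equiv.addLeft a) • ((σ : A n) : Ω) = π (Equiv.addLeft b) • ((σ : A n) : Ω)
        show Equiv.addLeft a • ((σ : A n) : Ω) = Equiv.addLeft b • ((σ : A n) : Ω)
        rw [MulAction.Quotient.smul_mk, MulAction.Quotient.smul_mk, smul_eq_mul, smul_eq_mul]
        rw [QuotientGroup.eq]
        have : (Equiv.addLeft a * σ)⁻¹ * (Equiv.addLeft b * σ)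
            = σ⁻¹ * Equiv.addLeft (-a + b) * σ := by
          rw [addLeft_add, ← neg_addLeft]
          group
        rw [this, hconj]
        exact Subgroup.mem_zpowers _
    · -- counting
      have ht2 : t n ^ 2 = 1 := by
        show Equiv.addLeft (e0 n) ^ 2 = 1
        rw [nsmul_addLeft]
        have h0 : (2 : ℕ) • e0 n = 0 := by
          funext j
          have : ∀ u : ZMod 2, u + u = 0 := by decide
          simp only [Pi.smul_apply, e0, smul_eq_mul, Pi.zero_apply, two_smul]
          exact this _
        rw [h0, addLeft_zero]
      have htne : t n ≠ 1 := by
        intro h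
        have := congrFun (congrArg (fun (e : Perm (V n)) => (e : V n → V n)) h) 0
        simp only [t, Equiv.coe_addLeft, Equiv.Perm.coe_one, id_eq] at this
        have h1 := congrFun this 0
        simp [e0] at h1
      have hcardH : Nat.card (H n) = 2 := by
        rw [H, Nat.card_zpowers]
        exact orderOf_eq_prime ht2 htne
      have hstab : Nat.card (stabilizer π.range ((1 : A n) : Ω)) ≤ 2 := by
        have hsurj : Function.Surjective
            (fun h : H n => (⟨⟨π h, ⟨h, rfl⟩⟩, by
              rw [mem_stabilizer_iff]
              show (h : A n) • ((1 : A n) : Ω) = ((1 : A n) : Ω)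
              rw [MulAction.Quotient.smul_mk, smul_eq_mul, mul_one, QuotientGroup.eq]
              simpa using inv_mem h.2⟩ :
              stabilizer π.range ((1 : A n) : Ω))) := by
          rintro ⟨⟨p, g, rfl⟩, hs⟩
          have hg : g ∈ H n := by
            rw [mem_stabilizer_iff] at hs
            have hs2 : (g : A n) • ((1 : A n) : Ω) = ((1 : A n) : Ω) := hs
            rw [MulAction.Quotient.smul_mk, smul_eq_mul, mul_one, QuotientGroup.eq] at hs2
            simpa using inv_mem hs2
          exact ⟨⟨g, hg⟩, by ext : 2 <;> rfl⟩
        calc Nat.card (stabilizer π.range ((1 : A n) : Ω))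
            ≤ Nat.card (H n) := Nat.card_le_card_of_surjective _ hsurj
          _ = 2 := hcardH
      have hφinj : Function.Injective φ := by
        intro w w' h
        have h1 : π (Equiv.addLeft (Fin.cons 0 w)) = π (Equiv.addLeft (Fin.cons 0 w')) := by
          simpa [hφ, Subtype.ext_iff] using h
        have h2 : (Equiv.addLeft (Fin.cons 0 w) : A n) • ((1:A n) : Ω)
            = (Equiv.addLeft (Fin.cons 0 w') : A n) • ((1:A n) : Ω) :=
          congrArg (fun (p : Perm Ω) => p ((1:A n) : Ω)) h1
        rw [MulAction.Quotient.smul_mk, MulAction.Quotient.smul_mk, smul_eq_mul, mul_one,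
          smul_eq_mul, mul_one, QuotientGroup.eq] at h2
        rw [neg_addLeft, ← addLeft_add] at h2
        rcases (mem_H_iff (n := n) _).mp h2 with h3 | h3
        · have h4 : -Fin.cons 0 w + Fin.cons 0 w' = (0 : V n) :=
            addLeft_inj' _ _ (by rw [h3, addLeft_zero])
          have h5 : (Fin.cons 0 w : V n) = Fin.cons 0 w' := by
            linear_combination (norm := abel) -h4
          funext j
          have := congrFun h5 j.succ
          simpa using this
        · exfalso
          have h4 : -Fin.cons 0 w + Fin.cons 0 w' = e0 n :=
            addLeft_inj' _ _ h3
          have h5 := congrFun h4 0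
          simp [e0] at h5
      have hS : (Set.range φ).ncard = 2 ^ n := by
        rw [← Set.image_univ, Set.ncard_image_of_injective _ hφinj, Set.ncard_univ]
        simp [Nat.card_eq_fintype_card]
      rw [hS]
      calc M * Nat.card (stabilizer π.range ((1 : A n) : Ω))
          ≤ M * 2 := Nat.mul_le_mul_left M hstab
        _ < 2 ^ n := by
            rw [hn, pow_succ]
            have h6 := Nat.lt_two_pow_self (n := M)
            nlinarith
end

section
/- Let p be a prime, q = p^d, let K be a finite field with q² elements and F ⊆ K a subfield with q elements. Let G be the group of permutations of K of the form x ↦ a·x + b with a ∈ Kˣ, b ∈ K; let H ≤ G be the subgroup of maps with a ∈ Fˣ and b ∈ F, and S ≤ G the subgroup of maps with a ∈ Fˣ and b ∈ K. Consider the action of G by left multiplication on the coset space Ω = G/H. Then: (a) every element of S is conjugate in G to an element of H, so S is an intersecting set; (b) every intersecting set T ⊆ G satisfies |T| ≤ |S|, i.e. S is a maximum intersecting set; (c) |Ω| = q(q+1) and |S| = q·|H|, so |S| < √|Ω|·|H|. -/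
/-- Let `p` be a prime, `q = p^d`, `K` a finite field with `q²`
elements and `F ⊆ K` a subfield with `q` elements.  Let `G` be the group of
permutations of `K` of the form `x ↦ a·x + b` with `a ∈ Kˣ`, `b ∈ K`, let `H ≤ G`
be the subgroup of maps with `a ∈ Fˣ`, `b ∈ F`, and `S ≤ G` the subgroup of maps
with `a ∈ Fˣ`, `b ∈ K`, with `G` acting by left multiplication on `Ω = G ⧸ H`.
Then: (a) every element of `S` is conjugate in `G` to an element of `H`, so `S` is
an intersecting set; (b) every intersecting set `T ⊆ G` satisfies `|T| ≤ |S|`;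
(c) `|Ω| = q(q+1)` and `|S| = q·|H|`, so `|S| < √|Ω|·|H|`. -/
theorem stmt4 (p d : ℕ) (hp : p.Prime) (hd : 0 < d) (q : ℕ) (hq : q = p ^ d)
    (K : Type*) [Field K] [Fintype K] (hK : Fintype.card K = q ^ 2)
    (F : Subfield K) (hF : Nat.card F = q)
    (G : Subgroup (Equiv.Perm K))
    (hG : ∀ e : Equiv.Perm K, e ∈ G ↔ ∃ a b : K, a ≠ 0 ∧ ∀ x, e x = a * x + b)
    (H S : Subgroup G)
    (hH : ∀ e : G, e ∈ H ↔
      ∃ a b : K, a ∈ F ∧ b ∈ F ∧ a ≠ 0 ∧ ∀ x, (e : Equiv.Perm K) x = a * x + b)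
    (hS : ∀ e : G, e ∈ S ↔
      ∃ a b : K, a ∈ F ∧ a ≠ 0 ∧ ∀ x, (e : Equiv.Perm K) x = a * x + b) :
    (∀ s ∈ S, ∃ g : G, g * s * g⁻¹ ∈ H) ∧
    (∀ x ∈ (S : Set G), ∀ y ∈ (S : Set G), ∃ α : G ⧸ H, x • α = y • α) ∧
    (∀ T : Set G, (∀ x ∈ T, ∀ y ∈ T, ∃ α : G ⧸ H, x • α = y • α) →
        T.ncard ≤ Nat.card S) ∧
    Nat.card (G ⧸ H) = q * (q + 1) ∧
    Nat.card S = q * Nat.card H ∧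
    (Nat.card S : ℝ) < Real.sqrt (Nat.card (G ⧸ H)) * (Nat.card H : ℝ) := by
  classical
  -- every element of G has a representation x ↦ a x + b
  have rep : ∀ e : G, ∃ a b : K, a ≠ 0 ∧ ∀ x, (e : Equiv.Perm K) x = a * x + b :=
    fun e => (hG e).mp e.2
  -- uniqueness of the representation
  have uniq : ∀ (e : Equiv.Perm K) (a b a' b' : K),
      (∀ x, e x = a * x + b) → (∀ x, e x = a' * x + b') → a = a' ∧ b = b' := by
    intro e a b a' b' h1 h2
    have hb : b = b' := by have := (h1 0).symm.trans (h2 0); simpa using this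
    have ha : a + b = a' + b' := by have := (h1 1).symm.trans (h2 1); simpa using this
    constructor
    · have : a = a' := by rw [hb] at ha; exact add_right_cancel ha
      exact this
    · exact hb
  -- multiplication of representations
  have mulrep : ∀ (e f : G) (a b a' b' : K),
      (∀ x, (e : Equiv.Perm K) x = a * x + b) →
      (∀ x, (f : Equiv.Perm K) x = a' * x + b') →
      ∀ x, ((e * f : G) : Equiv.Perm K) x = (a * a') * x + (a * b' + b) := by
    intro e f a b a' b' he hf x
    have h0 : ((e * f : G) : Equiv.Perm K) x = (e : Equiv.Perm K) ((f : Equiv.Perm K) x) := rfl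
    rw [h0, hf x, he]; ring
  -- constructing affine elements of G
  have mk : ∀ (a b : K), a ≠ 0 → ∃ g : G, ∀ x, (g : Equiv.Perm K) x = a * x + b := by
    intro a b ha
    exact ⟨⟨(Equiv.mulLeft₀ a ha).trans (Equiv.addRight b),
      (hG _).mpr ⟨a, b, ha, fun x => rfl⟩⟩, fun x => rfl⟩
  -- representation of a conjugate
  have conjrep : ∀ (g s : G) (c t a b : K),
      (∀ x, (g : Equiv.Perm K) x = c * x + t) →
      (∀ x, (s : Equiv.Perm K) x = a * x + b) →
      ∀ x, ((g * s * g⁻¹ : G) : Equiv.Perm K) x = a * x + (c * b + t - a * t) := by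
    intro g s c t a b hg hs0
    obtain ⟨c', t', hc', hginv⟩ := rep g⁻¹
    have h1 : ∀ x, ((g * g⁻¹ : G) : Equiv.Perm K) x = (c * c') * x + (c * t' + t) :=
      mulrep _ _ _ _ _ _ hg hginv
    have h2 : ∀ x, ((g * g⁻¹ : G) : Equiv.Perm K) x = 1 * x + 0 := by
      intro x; simp
    obtain ⟨hcc, hct⟩ := uniq _ _ _ _ _ h1 h2
    intro x
    have h0 : ((g * s * g⁻¹ : G) : Equiv.Perm K) x
        = (g : Equiv.Perm K) ((s : Equiv.Perm K) (((g⁻¹ : G) : Equiv.Perm K) x)) := rfl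
    rw [h0, hginv x, hs0, hg]
    linear_combination (a * x) * hcc + a * hct
  -- (a) every element of S is conjugate into H
  have conjH : ∀ s ∈ S, ∃ g : G, g * s * g⁻¹ ∈ H := by
    intro s hs
    obtain ⟨a, b, haF, ha, hab⟩ := (hS s).mp hs
    by_cases h1 : a = 1
    · subst h1
      by_cases hb : b = 0
      · refine ⟨1, ?_⟩
        have : (1 : G) * s * (1 : G)⁻¹ = s := by group
        rw [this]
        exact (hH s).mpr ⟨1, 0, F.one_mem, F.zero_mem, one_ne_zero, by simpa [hb] using hab⟩
      · obtain ⟨g, hg⟩ := mk b⁻¹ 0 (inv_ne_zero hb)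
        refine ⟨g, (hH _).mpr ⟨1, 1, F.one_mem, F.one_mem, one_ne_zero, ?_⟩⟩
        have := conjrep g s b⁻¹ 0 1 b hg hab
        intro x
        rw [this x]
        field_simp
        ring
    · obtain ⟨g, hg⟩ := mk 1 (b / (a - 1)) one_ne_zero
      refine ⟨g, (hH _).mpr ⟨a, 0, haF, F.zero_mem, ha, ?_⟩⟩
      have := conjrep g s 1 (b / (a - 1)) a b hg hab
      intro x
      rw [this x]
      have ha1 : a - 1 ≠ 0 := sub_ne_zero.mpr h1
      field_simp
      ring
  -- membership in S from a representation with a ∈ F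
  have memS : ∀ e : G, ∀ a b : K, a ∈ F → (∀ x, (e : Equiv.Perm K) x = a * x + b) → e ∈ S := by
    intro e a b haF hab
    obtain ⟨a₀, b₀, ha₀, h₀⟩ := rep e
    obtain ⟨h1, h2⟩ := uniq _ _ _ _ _ hab h₀
    exact (hS e).mpr ⟨a, b, haF, h1 ▸ ha₀, hab⟩
  -- elements of H have multiplier in F
  have multH : ∀ h : G, h ∈ H → ∀ a b : K, (∀ x, (h : Equiv.Perm K) x = a * x + b) → a ∈ F := by
    intro h hh a b hab
    obtain ⟨a', b', ha'F, hb'F, ha', h'⟩ := (hH h).mp hh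
    obtain ⟨h1, h2⟩ := uniq _ _ _ _ _ hab h'
    rw [h1]; exact ha'F
  -- intersecting property of S
  have inter : ∀ x ∈ (S : Set G), ∀ y ∈ (S : Set G), ∃ α : G ⧸ H, x • α = y • α := by
    intro x hx y hy
    obtain ⟨g, hg⟩ := conjH (x⁻¹ * y) (S.mul_mem (S.inv_mem hx) hy)
    refine ⟨QuotientGroup.mk g⁻¹, ?_⟩
    show QuotientGroup.mk (x * g⁻¹) = QuotientGroup.mk (y * g⁻¹)
    rw [QuotientGroup.eq]
    have heq : (x * g⁻¹)⁻¹ * (y * g⁻¹) = g * (x⁻¹ * y) * g⁻¹ := by group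
    rw [heq]; exact hg
  -- (b) every intersecting set has size at most |S|
  have maxT : ∀ T : Set G, (∀ x ∈ T, ∀ y ∈ T, ∃ α : G ⧸ H, x • α = y • α) →
      T.ncard ≤ Nat.card S := by
    intro T hT
    rcases T.eq_empty_or_nonempty with rfl | ⟨x₀, hx₀⟩
    · simp
    have hsub : T ⊆ (fun y => x₀ * y) '' (S : Set G) := by
      intro x hx
      obtain ⟨α, hα⟩ := hT x hx x₀ hx₀
      obtain ⟨g, rfl⟩ := QuotientGroup.mk_surjective α
      have h' : (QuotientGroup.mk (x * g) : G ⧸ H) = QuotientGroup.mk (x₀ * g) := hα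
      have hmemH : (x * g)⁻¹ * (x₀ * g) ∈ H := QuotientGroup.eq.mp h'
      set h : G := (x * g)⁻¹ * (x₀ * g) with hh
      have hx0 : x⁻¹ * x₀ = g * h * g⁻¹ := by rw [hh]; group
      obtain ⟨c, t, hc, hgrep⟩ := rep g
      obtain ⟨a, b, ha, hhrep⟩ := rep h
      have hconj := conjrep g h c t a b hgrep hhrep
      have haF : a ∈ F := multH h hmemH a b hhrep
      have hmemS : x⁻¹ * x₀ ∈ S := by
        refine memS _ a (c * b + t - a * t) haF ?_
        intro x'
        rw [hx0]; exact hconj x'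
      refine ⟨x₀⁻¹ * x, ?_, by group⟩
      have hinv := S.inv_mem hmemS
      simpa [mul_inv_rev] using hinv
    calc T.ncard ≤ ((fun y => x₀ * y) '' (S : Set G)).ncard :=
          Set.ncard_le_ncard hsub (Set.toFinite _)
      _ = (S : Set G).ncard :=
          Set.ncard_image_of_injective _ (mul_right_injective x₀)
      _ = Nat.card S := (Nat.card_coe_set_eq _).symm
  -- cardinalities
  have hq2 : 2 ≤ q := by
    rw [hq]; exact Nat.one_lt_pow hd.ne' hp.one_lt
  have cardK : Nat.card K = q ^ 2 := by rw [Nat.card_eq_fintype_card, hK]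
  -- |G| = (q^2 - 1) * q^2
  obtain ⟨Φ, hΦ⟩ : ∃ Φ : {a : K // a ≠ 0} × K → G,
      ∀ p : {a : K // a ≠ 0} × K, ∀ x, ((Φ p : G) : Equiv.Perm K) x = p.1.1 * x + p.2 :=
    ⟨fun p => ⟨(Equiv.mulLeft₀ p.1.1 p.1.2).trans (Equiv.addRight p.2),
      (hG _).mpr ⟨p.1.1, p.2, p.1.2, fun x => rfl⟩⟩, fun p x => rfl⟩
  have hΦbij : Function.Bijective Φ := by
    constructor
    · intro p p' hpp
      have h2 : ∀ x, ((Φ p : G) : Equiv.Perm K) x = p'.1.1 * x + p'.2 := by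
        rw [hpp]; exact hΦ p'
      obtain ⟨h3, h4⟩ := uniq _ _ _ _ _ (hΦ p) h2
      exact Prod.ext (Subtype.ext h3) h4
    · intro e
      obtain ⟨a, b, ha, hab⟩ := rep e
      refine ⟨⟨⟨a, ha⟩, b⟩, ?_⟩
      apply Subtype.ext; apply Equiv.ext
      intro x; rw [hΦ _ x, hab x]
  have cardG : Nat.card G = (q ^ 2 - 1) * q ^ 2 := by
    rw [← Nat.card_eq_of_bijective Φ hΦbij, Nat.card_prod,
      Nat.card_congr (unitsEquivNeZero (G₀ := K)).symm, Nat.card_units, cardK]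
  -- |H| = (q - 1) * q
  obtain ⟨Ψ, hΨ⟩ : ∃ Ψ : {a : F // a ≠ 0} × F → H,
      ∀ p : {a : F // a ≠ 0} × F, ∀ x,
        (((Ψ p : H) : G) : Equiv.Perm K) x = (p.1.1 : K) * x + (p.2 : K) := by
    refine ⟨fun p => ⟨⟨(Equiv.mulLeft₀ (p.1.1 : K) (by
        simpa using p.1.2)).trans (Equiv.addRight (p.2 : K)),
      (hG _).mpr ⟨(p.1.1 : K), (p.2 : K), by simpa using p.1.2, fun x => rfl⟩⟩,
      (hH _).mpr ⟨(p.1.1 : K), (p.2 : K), p.1.1.2, p.2.2, by simpa using p.1.2,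
        fun x => rfl⟩⟩, fun p x => rfl⟩
  have hΨbij : Function.Bijective Ψ := by
    constructor
    · intro p p' hpp
      have h2 : ∀ x, (((Ψ p : H) : G) : Equiv.Perm K) x = (p'.1.1 : K) * x + (p'.2 : K) := by
        rw [hpp]; exact hΨ p'
      obtain ⟨h3, h4⟩ := uniq _ _ _ _ _ (hΨ p) h2
      exact Prod.ext (Subtype.ext (Subtype.ext h3)) (Subtype.ext h4)
    · intro e
      obtain ⟨a, b, haF, hbF, ha, hab⟩ := (hH e).mp e.2
      refine ⟨⟨⟨⟨a, haF⟩, by simpa [Subtype.ext_iff] using ha⟩, ⟨b, hbF⟩⟩, ?_⟩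
      apply Subtype.ext; apply Subtype.ext; apply Equiv.ext
      intro x; rw [hΨ _ x, hab x]
  have cardF : Nat.card F = q := hF
  have cardH : Nat.card H = (q - 1) * q := by
    rw [← Nat.card_eq_of_bijective Ψ hΨbij, Nat.card_prod,
      Nat.card_congr (unitsEquivNeZero (G₀ := F)).symm, Nat.card_units, cardF]
  -- |S| = (q - 1) * q^2
  obtain ⟨Θ, hΘ⟩ : ∃ Θ : {a : F // a ≠ 0} × K → S,
      ∀ p : {a : F // a ≠ 0} × K, ∀ x,
        (((Θ p : S) : G) : Equiv.Perm K) x = (p.1.1 : K) * x + p.2 := by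
    refine ⟨fun p => ⟨⟨(Equiv.mulLeft₀ (p.1.1 : K) (by
        simpa using p.1.2)).trans (Equiv.addRight p.2),
      (hG _).mpr ⟨(p.1.1 : K), p.2, by simpa using p.1.2, fun x => rfl⟩⟩,
      (hS _).mpr ⟨(p.1.1 : K), p.2, p.1.1.2, by simpa using p.1.2,
        fun x => rfl⟩⟩, fun p x => rfl⟩
  have hΘbij : Function.Bijective Θ := by
    constructor
    · intro p p' hpp
      have h2 : ∀ x, (((Θ p : S) : G) : Equiv.Perm K) x = (p'.1.1 : K) * x + p'.2 := by
        rw [hpp]; exact hΘ p'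
      obtain ⟨h3, h4⟩ := uniq _ _ _ _ _ (hΘ p) h2
      exact Prod.ext (Subtype.ext (Subtype.ext h3)) h4
    · intro e
      obtain ⟨a, b, haF, ha, hab⟩ := (hS e).mp e.2
      refine ⟨⟨⟨⟨a, haF⟩, by simpa [Subtype.ext_iff] using ha⟩, b⟩, ?_⟩
      apply Subtype.ext; apply Subtype.ext; apply Equiv.ext
      intro x; rw [hΘ _ x, hab x]
  have cardS : Nat.card S = (q - 1) * q ^ 2 := by
    rw [← Nat.card_eq_of_bijective Θ hΘbij, Nat.card_prod,
      Nat.card_congr (unitsEquivNeZero (G₀ := F)).symm, Nat.card_units, cardF, cardK]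
  -- |G/H| = q(q+1)
  obtain ⟨r, rfl⟩ : ∃ r, q = r + 1 := ⟨q - 1, by omega⟩
  have hr : 1 ≤ r := by omega
  have key : Nat.card G = Nat.card (G ⧸ H) * Nat.card H :=
    Subgroup.card_eq_card_quotient_mul_card_subgroup H
  have cardQ : Nat.card (G ⧸ H) = (r + 1) * (r + 1 + 1) := by
    have e1 : (r + 1) ^ 2 - 1 = r * (r + 2) := by
      have : (r + 1) ^ 2 = r * (r + 2) + 1 := by ring
      omega
    rw [cardG, cardH, e1] at key
    have e2 : r + 1 - 1 = r := by omega
    rw [e2] at key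
    have e3 : r * (r + 2) * (r + 1) ^ 2 = ((r + 1) * (r + 1 + 1)) * (r * (r + 1)) := by ring
    rw [e3] at key
    have hpos : 0 < r * (r + 1) := by positivity
    exact (Nat.eq_of_mul_eq_mul_right hpos key.symm)
  have cardSH : Nat.card S = (r + 1) * Nat.card H := by
    rw [cardS, cardH]
    have e2 : r + 1 - 1 = r := by omega
    rw [e2]; ring
  refine ⟨conjH, inter, maxT, cardQ, cardSH, ?_⟩
  -- final inequality
  rw [cardQ, cardSH, cardH]
  have e2 : r + 1 - 1 = r := by omega
  rw [e2]
  have hHpos : (0 : ℝ) < (r * (r + 1) : ℕ) := by positivity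
  have hlt : ((r + 1 : ℕ) : ℝ) < Real.sqrt ((r + 1) * (r + 1 + 1) : ℕ) := by
    rw [Real.lt_sqrt (by positivity)]
    push_cast
    nlinarith
  calc (((r + 1) * (r * (r + 1)) : ℕ) : ℝ)
      = ((r + 1 : ℕ) : ℝ) * ((r * (r + 1) : ℕ) : ℝ) := by push_cast; ring
    _ < Real.sqrt ((r + 1) * (r + 1 + 1) : ℕ) * ((r * (r + 1) : ℕ) : ℝ) :=
        mul_lt_mul_of_pos_right hlt hHpos
    _ = Real.sqrt (((r + 1) * (r + 1 + 1) : ℕ)) * ((r * (r + 1) : ℕ) : ℝ) := rfl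
end

section
/- For every natural number M > 0 and every real ε with 0 < ε < 1, there exist a finite nonempty set Ω and a transitive permutation group G ≤ Sym(Ω) such that |Ω| is not a perfect power (there are no integers n and m ≥ 2 with |Ω| = n^m, hence G admits no product decomposition), and the maximum size s of an intersecting set in G satisfies s > M·|G_ω| and (1−ε)·√|Ω|·|G_ω| < s < √|Ω|·|G_ω|, where G_ω is a point stabilizer. -/
namespace Stmt5Aux

noncomputable section

open Equiv

variable (p : ℕ) [hp : Fact p.Prime]

abbrev F2 : Type := GaloisField p 2

/-- The affine group `AGL(1, p²)`: pairs `(a, b)` acting as `x ↦ a x + b`. -/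
@[ext] structure Aff : Type where
  a : (F2 p)ˣ
  b : F2 p

instance : Mul (Aff p) := ⟨fun x y => ⟨x.a * y.a, (x.a : F2 p) * y.b + x.b⟩⟩
instance : One (Aff p) := ⟨⟨1, 0⟩⟩
instance : Inv (Aff p) := ⟨fun x => ⟨x.a⁻¹, -((x.a⁻¹ : F2 p) * x.b)⟩⟩

@[simp] lemma mul_a (x y : Aff p) : (x * y).a = x.a * y.a := rfl
@[simp] lemma mul_b (x y : Aff p) : (x * y).b = (x.a : F2 p) * y.b + x.b := rfl
@[simp] lemma one_a : (1 : Aff p).a = 1 := rfl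
@[simp] lemma one_b : (1 : Aff p).b = 0 := rfl
@[simp] lemma inv_a (x : Aff p) : (x⁻¹).a = x.a⁻¹ := rfl
@[simp] lemma inv_b (x : Aff p) : (x⁻¹).b = -((x.a⁻¹ : F2 p) * x.b) := rfl

instance : Group (Aff p) where
  mul_assoc x y z := by
    ext
    · exact congrArg Units.val (mul_assoc x.a y.a z.a)
    · simp; ring
  one_mul x := by ext <;> simp
  mul_one x := by ext <;> simp
  inv_mul_cancel x := by ext <;> simp

/-- multiplier homomorphism -/
def pi : Aff p →* (F2 p)ˣ where
  toFun x := x.a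
  map_one' := rfl
  map_mul' _ _ := rfl

/-- the subfield `F_p` inside `F_{p²}`, as a subring -/
def Fr : Subring (F2 p) := (algebraMap (ZMod p) (F2 p)).range

lemma Fr_inv_mem {z : F2 p} (hz : z ∈ Fr p) : z⁻¹ ∈ Fr p := by
  obtain ⟨k, rfl⟩ := hz
  exact ⟨k⁻¹, map_inv₀ (algebraMap (ZMod p) (F2 p)) k⟩

/-- the subgroup `AGL(1,p)` of `AGL(1,p²)` -/
def H0 : Subgroup (Aff p) where
  carrier := {x | (x.a : F2 p) ∈ Fr p ∧ x.b ∈ Fr p}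
  mul_mem' := by
    rintro x y ⟨hxa, hxb⟩ ⟨hya, hyb⟩
    exact ⟨by simpa using mul_mem hxa hya, by simpa using add_mem (mul_mem hxa hyb) hxb⟩
  one_mem' := ⟨by simp only [one_a, Units.val_one]; exact one_mem _, by simp only [one_b]; exact zero_mem _⟩
  inv_mem' := by
    rintro x ⟨hxa, hxb⟩
    refine ⟨?_, ?_⟩
    · simpa using Fr_inv_mem p hxa
    · simpa using neg_mem (mul_mem (Fr_inv_mem p hxa) hxb)

/-- the subgroup of elements with multiplier in `F_p^*` -/
def N0 : Subgroup (Aff p) where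
  carrier := {x | (x.a : F2 p) ∈ Fr p}
  mul_mem' := by
    rintro x y hxa hya
    simpa using mul_mem hxa hya
  one_mem' := by simp only [Set.mem_setOf_eq, one_a, Units.val_one]; exact one_mem _
  inv_mem' := by
    rintro x hxa
    simpa using Fr_inv_mem p hxa

lemma H0_le_N0 : H0 p ≤ N0 p := fun x hx => hx.1

abbrev Om : Type := Aff p ⧸ H0 p

end

end Stmt5Aux

namespace Stmt5Aux
noncomputable section
open Equiv
variable (p : ℕ) [hp : Fact p.Prime]

lemma conj_a (g x : Aff p) : (x⁻¹ * g * x).a = g.a := by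
  have : x.a⁻¹ * g.a * x.a = g.a := by
    rw [mul_comm (x.a⁻¹ * g.a) x.a, ← mul_assoc, mul_inv_cancel, one_mul]
  simp [this]

lemma conj_b (g x : Aff p) :
    (x⁻¹ * g * x).b = (x.a⁻¹ : F2 p) * ((g.a : F2 p) * x.b + g.b - x.b) := by
  simp; ring

lemma fix_iff (g x : Aff p) :
    g • (QuotientGroup.mk x : Om p) = QuotientGroup.mk x ↔ x⁻¹ * g * x ∈ H0 p := by
  have h1 : (g * x)⁻¹ * x = (x⁻¹ * g * x)⁻¹ := by group
  rw [MulAction.Quotient.smul_mk, smul_eq_mul, QuotientGroup.eq, h1, inv_mem_iff]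

lemma not_fix_of_not_mem (g : Aff p) (hg : (g.a : F2 p) ∉ Fr p) (ω : Om p) : g • ω ≠ ω := by
  induction ω using QuotientGroup.induction_on with
  | H x =>
    intro h
    rw [fix_iff] at h
    have := h.1
    rw [show ((x⁻¹ * g * x).a : F2 p) = (g.a : F2 p) from congrArg Units.val (conj_a p g x)] at this
    exact hg this

lemma exists_not_mem_Fr : ∃ u : F2 p, u ∉ Fr p := by
  by_contra h
  push_neg at h
  have hsurj : Function.Surjective (algebraMap (ZMod p) (F2 p)) := fun u => h u
  have h1 : Nat.card (F2 p) ≤ Nat.card (ZMod p) := Nat.card_le_card_of_surjective _ hsurj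
  rw [GaloisField.card p 2 (by norm_num), Nat.card_zmod] at h1
  have h2 := hp.out.two_le
  nlinarith

lemma mem_N_fix (g : Aff p) (hg : (g.a : F2 p) ∈ Fr p) : ∃ ω : Om p, g • ω = ω := by
  by_cases ha : g.a = 1
  · by_cases hb : g.b = 0
    · have : g = 1 := Aff.ext ha hb
      exact ⟨QuotientGroup.mk 1, by rw [this, one_smul]⟩
    · refine ⟨QuotientGroup.mk ⟨Units.mk0 g.b hb, 0⟩, ?_⟩
      rw [fix_iff]
      constructor
      · rw [show ((_ * g * _).a : F2 p) = (g.a : F2 p) from congrArg Units.val (conj_a p g _)]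
        rw [ha]; exact one_mem _
      · rw [conj_b]
        simp only [ha, Units.val_one, one_mul]
        rw [show (((⟨Units.mk0 g.b hb, 0⟩ : Aff p) : Aff p).a⁻¹ : F2 p)
            * ((((⟨Units.mk0 g.b hb, 0⟩ : Aff p) : Aff p)).b + g.b
              - (((⟨Units.mk0 g.b hb, 0⟩ : Aff p) : Aff p)).b) = g.b⁻¹ * (0 + g.b - 0) from rfl]
        rw [show (0 : F2 p) + g.b - 0 = g.b by ring, inv_mul_cancel₀ hb]
        exact one_mem _
  · have hc : (g.a : F2 p) ≠ 1 := fun h => ha (Units.ext h)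
    refine ⟨QuotientGroup.mk ⟨1, g.b / (1 - (g.a : F2 p))⟩, ?_⟩
    rw [fix_iff]
    constructor
    · rw [show ((_ * g * _).a : F2 p) = (g.a : F2 p) from congrArg Units.val (conj_a p g _)]
      exact hg
    · rw [conj_b]
      have h1 : (1 : F2 p) - (g.a : F2 p) ≠ 0 := by
        intro h; apply hc; linear_combination -h
      rw [show (((⟨1, g.b / (1 - (g.a : F2 p))⟩ : Aff p)).a⁻¹ : F2 p) = 1 by simp]
      rw [show (((⟨1, g.b / (1 - (g.a : F2 p))⟩ : Aff p)).b) = g.b / (1 - (g.a : F2 p)) from rfl]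
      have : (g.a : F2 p) * (g.b / (1 - (g.a : F2 p))) + g.b - g.b / (1 - (g.a : F2 p)) = 0 := by
        field_simp
        ring
      rw [this]
      simpa using zero_mem (Fr p)

end
end Stmt5Aux

namespace Stmt5Aux
noncomputable section
open Equiv
variable (p : ℕ) [hp : Fact p.Prime]

lemma faithful (g : Aff p) (h : ∀ ω : Om p, g • ω = ω) : g = 1 := by
  obtain ⟨u, hu⟩ := exists_not_mem_Fr p
  have hu0 : u ≠ 0 := fun h0 => hu (h0 ▸ zero_mem (Fr p))
  -- first : g.b = 0
  have hb : g.b = 0 := by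
    by_contra hb
    have h1 := (fix_iff p g ⟨Units.mk0 (g.b * u⁻¹) (by
      exact mul_ne_zero hb (inv_ne_zero hu0)), 0⟩).mp (h _)
    have h2 := h1.2
    rw [conj_b] at h2
    rw [show (((⟨Units.mk0 (g.b * u⁻¹) _, 0⟩ : Aff p) : Aff p).a⁻¹ : F2 p)
        * (((g.a : F2 p)) * ((⟨Units.mk0 (g.b * u⁻¹) _, 0⟩ : Aff p) : Aff p).b + g.b
          - ((⟨Units.mk0 (g.b * u⁻¹) _, 0⟩ : Aff p) : Aff p).b)
        = (g.b * u⁻¹)⁻¹ * ((g.a : F2 p) * 0 + g.b - 0) from rfl] at h2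
    have : (g.b * u⁻¹)⁻¹ * ((g.a : F2 p) * 0 + g.b - 0) = u := by
      field_simp
      ring
    rw [this] at h2
    exact hu h2
  -- then : g.a = 1
  have ha : g.a = 1 := by
    by_contra ha
    have hc : (g.a : F2 p) ≠ 1 := fun hh => ha (Units.ext (by simpa using hh))
    have h1 := (fix_iff p g ⟨1, u / ((g.a : F2 p) - 1)⟩).mp (h _)
    have h2 := h1.2
    rw [conj_b] at h2
    rw [show (((⟨1, u / ((g.a : F2 p) - 1)⟩ : Aff p) : Aff p).a⁻¹ : F2 p) = 1 by simp] at h2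
    rw [show ((⟨1, u / ((g.a : F2 p) - 1)⟩ : Aff p) : Aff p).b = u / ((g.a : F2 p) - 1)
      from rfl] at h2
    have hne : (g.a : F2 p) - 1 ≠ 0 := sub_ne_zero_of_ne hc
    have : (1 : F2 p) * ((g.a : F2 p) * (u / ((g.a : F2 p) - 1)) + g.b
        - u / ((g.a : F2 p) - 1)) = u := by
      rw [hb]; field_simp; ring
    rw [this] at h2
    exact hu h2
  exact Aff.ext ha hb

def phi : Aff p →* Equiv.Perm (Om p) := MulAction.toPermHom (Aff p) (Om p)

lemma phi_apply (g : Aff p) (ω : Om p) : phi p g ω = g • ω := rfl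

lemma phi_injective : Function.Injective (phi p) := by
  intro g g' h
  have h2 : g'⁻¹ * g = 1 := by
    apply faithful
    intro ω
    have hgg : g • ω = g' • ω := by
      rw [← phi_apply p g ω, ← phi_apply p g' ω, h]
    rw [mul_smul, hgg, inv_smul_smul]
  exact (inv_mul_eq_one.mp h2).symm

/-- The permutation group: image of `Aff p` in `Perm Ω`. -/
def GG : Subgroup (Equiv.Perm (Om p)) := (phi p).range

/-- iso onto the range -/
def e : Aff p ≃* GG p := MonoidHom.ofInjective (phi_injective p)

lemma e_smul (g : Aff p) (ω : Om p) : (e p g : Equiv.Perm (Om p)) ω = g • ω := by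
  have : ((e p g : GG p) : Equiv.Perm (Om p)) = phi p g :=
    MonoidHom.ofInjective_apply (phi_injective p)
  rw [this, phi_apply]

end
end Stmt5Aux

namespace Stmt5Aux
noncomputable section
open Equiv
variable (p : ℕ) [hp : Fact p.Prime]

lemma gg_smul_def (x : GG p) (ω : Om p) : x • ω = (x : Equiv.Perm (Om p)) ω := rfl

instance : MulAction.IsPretransitive (GG p) (Om p) := by
  constructor
  intro ω1 ω2
  induction ω1 using QuotientGroup.induction_on with
  | H x =>
    induction ω2 using QuotientGroup.induction_on with
    | H y =>
      refine ⟨e p (y * x⁻¹), ?_⟩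
      rw [gg_smul_def, e_smul, MulAction.Quotient.smul_mk, smul_eq_mul,
        inv_mul_cancel_right]

/-- the distinguished point -/
def om0 : Om p := QuotientGroup.mk 1

/-- the big intersecting subgroup inside `GG p` -/
def NG : Subgroup (GG p) := Subgroup.comap ((e p).symm : GG p ≃* Aff p).toMonoidHom (N0 p)

lemma mem_NG (x : GG p) : x ∈ NG p ↔ (((e p).symm x).a : F2 p) ∈ Fr p := Iff.rfl

/-- If two elements of `GG p` agree somewhere, their ratio lies in `NG p`. -/
lemma ratio_mem_NG (x y : GG p) (α : Om p) (h : x • α = y • α) : y⁻¹ * x ∈ NG p := by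
  set g : Aff p := (e p).symm (y⁻¹ * x) with hg
  have hfix : g • α = α := by
    have h1 : (y⁻¹ * x) • α = α := by
      rw [mul_smul, h, inv_smul_smul]
    have h2 : (y⁻¹ * x) • α = g • α := by
      rw [gg_smul_def]
      rw [show ((y⁻¹ * x : GG p) : Equiv.Perm (Om p)) = ((e p g : GG p) : Equiv.Perm (Om p)) by
        rw [hg, MulEquiv.apply_symm_apply]]
      rw [e_smul]
    rwa [← h2]
  rw [mem_NG]
  by_contra hmem
  exact not_fix_of_not_mem p g hmem α hfix

/-- Conversely, ratios in `NG p` fix a common point. -/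
lemma NG_pair_common (x y : GG p) (h : y⁻¹ * x ∈ NG p) : ∃ α : Om p, x • α = y • α := by
  set g : Aff p := (e p).symm (y⁻¹ * x) with hg
  obtain ⟨α, hα⟩ := mem_N_fix p g ((mem_NG p _).mp h)
  refine ⟨α, ?_⟩
  have h2 : (y⁻¹ * x) • α = α := by
    rw [gg_smul_def]
    rw [show ((y⁻¹ * x : GG p) : Equiv.Perm (Om p)) = ((e p g : GG p) : Equiv.Perm (Om p)) by
      rw [hg, MulEquiv.apply_symm_apply]]
    rw [e_smul, hα]
  calc x • α = (y * (y⁻¹ * x)) • α := by rw [mul_inv_cancel_left]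
  _ = y • ((y⁻¹ * x) • α) := by rw [mul_smul]
  _ = y • α := by rw [h2]

end
end Stmt5Aux

namespace Stmt5Aux
noncomputable section
open Equiv
variable (p : ℕ) [hp : Fact p.Prime]

/-- `Aff p` as a product, for counting. -/
def affEquivProd : Aff p ≃ (F2 p)ˣ × F2 p where
  toFun x := (x.a, x.b)
  invFun y := ⟨y.1, y.2⟩
  left_inv x := rfl
  right_inv y := rfl

instance : Finite (Aff p) := Finite.of_equiv _ (affEquivProd p).symm
instance : Finite (Om p) := Quotient.finite _
instance : Finite (GG p) := by
  have : Finite (Equiv.Perm (Om p)) := Equiv.finite_left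
  exact Subtype.finite

lemma card_Aff : Nat.card (Aff p) = (p ^ 2 - 1) * p ^ 2 := by
  rw [Nat.card_congr (affEquivProd p), Nat.card_prod, Nat.card_units,
    GaloisField.card p 2 (by norm_num)]

/-- units with value in the subfield, equivalent to `(ZMod p)ˣ` -/
def unitsFrEquiv : (ZMod p)ˣ ≃ {a : (F2 p)ˣ // (a : F2 p) ∈ Fr p} := by
  refine Equiv.ofBijective
    (fun u => ⟨Units.map (algebraMap (ZMod p) (F2 p)).toMonoidHom u, ⟨u, rfl⟩⟩) ⟨?_, ?_⟩
  · intro u v huv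
    apply Units.ext
    apply (algebraMap (ZMod p) (F2 p)).injective
    have := congrArg (fun z => ((z : {a : (F2 p)ˣ // (a : F2 p) ∈ Fr p}).1 : F2 p)) huv
    simpa using this
  · rintro ⟨a, ⟨k, hk⟩⟩
    have hk0 : k ≠ 0 := by
      intro h0
      rw [h0, map_zero] at hk
      exact a.ne_zero hk.symm
    refine ⟨Units.mk0 k hk0, ?_⟩
    apply Subtype.ext
    apply Units.ext
    simpa using hk

/-- the subfield as a type, equivalent to `ZMod p` -/
def frEquiv : ZMod p ≃ {b : F2 p // b ∈ Fr p} := by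
  refine Equiv.ofBijective (fun k => ⟨algebraMap (ZMod p) (F2 p) k, ⟨k, rfl⟩⟩) ⟨?_, ?_⟩
  · intro u v huv
    apply (algebraMap (ZMod p) (F2 p)).injective
    simpa using congrArg (fun z => (z : {b : F2 p // b ∈ Fr p}).1 : _) huv
  · rintro ⟨b, ⟨k, rfl⟩⟩
    exact ⟨k, rfl⟩

def H0Equiv : H0 p ≃ {a : (F2 p)ˣ // (a : F2 p) ∈ Fr p} × {b : F2 p // b ∈ Fr p} where
  toFun h := (⟨h.1.a, h.2.1⟩, ⟨h.1.b, h.2.2⟩)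
  invFun y := ⟨⟨y.1.1, y.2.1⟩, ⟨y.1.2, y.2.2⟩⟩
  left_inv h := rfl
  right_inv y := rfl

def N0Equiv : N0 p ≃ {a : (F2 p)ˣ // (a : F2 p) ∈ Fr p} × F2 p where
  toFun h := (⟨h.1.a, h.2⟩, h.1.b)
  invFun y := ⟨⟨y.1.1, y.2⟩, y.1.2⟩
  left_inv h := rfl
  right_inv y := rfl

lemma card_unitsFr : Nat.card {a : (F2 p)ˣ // (a : F2 p) ∈ Fr p} = p - 1 := by
  rw [← Nat.card_congr (unitsFrEquiv p), Nat.card_units, Nat.card_zmod]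

lemma card_H0 : Nat.card (H0 p) = (p - 1) * p := by
  rw [Nat.card_congr (H0Equiv p), Nat.card_prod, card_unitsFr,
    ← Nat.card_congr (frEquiv p), Nat.card_zmod]

lemma card_N0 : Nat.card (N0 p) = (p - 1) * p ^ 2 := by
  rw [Nat.card_congr (N0Equiv p), Nat.card_prod, card_unitsFr,
    GaloisField.card p 2 (by norm_num)]

lemma card_Om : Nat.card (Om p) = p * (p + 1) := by
  have h := Subgroup.card_eq_card_quotient_mul_card_subgroup (H0 p)
  rw [card_Aff, card_H0] at h
  have hp2 := hp.out.two_le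
  obtain ⟨t, rfl⟩ : ∃ t, p = 2 + t := ⟨p - 2, by omega⟩
  have e1 : ((2 + t) ^ 2 - 1) * (2 + t) ^ 2 = (t * t + 4 * t + 3) * (t * t + 4 * t + 4) := by
    have h4 : (2 + t) ^ 2 = t * t + 4 * t + 4 := by ring
    rw [h4]
    have h5 : t * t + 4 * t + 4 - 1 = t * t + 4 * t + 3 := by omega
    rw [h5]
  have e2 : ((2 + t) * (2 + t + 1)) * ((2 + t - 1) * (2 + t)) =
      (t * t + 4 * t + 3) * (t * t + 4 * t + 4) := by
    have h3 : 2 + t - 1 = t + 1 := by omega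
    rw [h3]; ring
  rw [e1] at h
  have hpos : 0 < (2 + t - 1) * (2 + t) := by
    have : 2 + t - 1 = t + 1 := by omega
    rw [this]; positivity
  apply Nat.eq_of_mul_eq_mul_right hpos
  rw [← h, ← e2]

end
end Stmt5Aux

namespace Stmt5Aux
noncomputable section
open Equiv
variable (p : ℕ) [hp : Fact p.Prime]

lemma e_mem_stab_iff (g : Aff p) : (e p g) • (om0 p) = om0 p ↔ g ∈ H0 p := by
  rw [gg_smul_def, e_smul, om0, MulAction.Quotient.smul_mk, smul_eq_mul, mul_one,
    QuotientGroup.eq]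
  rw [mul_one]
  exact inv_mem_iff

def stabEquiv : H0 p ≃ MulAction.stabilizer (GG p) (om0 p) := by
  refine Equiv.ofBijective
    (fun h => ⟨e p h.1, (e_mem_stab_iff p h.1).mpr h.2⟩) ⟨?_, ?_⟩
  · intro h1 h2 h12
    have := congrArg (fun z => (e p).symm (z : MulAction.stabilizer (GG p) (om0 p)).1 : _) h12
    simp only [MulEquiv.symm_apply_apply] at this
    exact Subtype.ext this
  · rintro ⟨x, hx⟩
    refine ⟨⟨(e p).symm x, ?_⟩, ?_⟩
    · rw [← e_mem_stab_iff, MulEquiv.apply_symm_apply]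
      exact hx
    · apply Subtype.ext
      simp only [MulEquiv.apply_symm_apply]

lemma card_stab : Nat.card (MulAction.stabilizer (GG p) (om0 p)) = (p - 1) * p := by
  rw [← Nat.card_congr (stabEquiv p), card_H0]

def ngEquiv : N0 p ≃ NG p := by
  refine Equiv.ofBijective
    (fun h => ⟨e p h.1, by rw [mem_NG, MulEquiv.symm_apply_apply]; exact h.2⟩) ⟨?_, ?_⟩
  · intro h1 h2 h12
    have := congrArg (fun z => (e p).symm (z : NG p).1 : _) h12
    simp only [MulEquiv.symm_apply_apply] at this
    exact Subtype.ext this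
  · rintro ⟨x, hx⟩
    refine ⟨⟨(e p).symm x, (mem_NG p x).mp hx⟩, ?_⟩
    apply Subtype.ext
    simp only [MulEquiv.apply_symm_apply]

lemma card_NG : Nat.card (NG p) = (p - 1) * p ^ 2 := by
  rw [← Nat.card_congr (ngEquiv p), card_N0]

/-- the exact maximum intersecting size -/
lemma lower_bound :
    ∃ S : Set (GG p), (∀ x ∈ S, ∀ y ∈ S, ∃ α : Om p, x • α = y • α) ∧
      S.ncard = (p - 1) * p ^ 2 := by
  refine ⟨(NG p : Set (GG p)), ?_, ?_⟩
  · intro x hx y hy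
    exact NG_pair_common p x y (mul_mem (inv_mem hy) hx)
  · rw [← Nat.card_coe_set_eq]
    exact card_NG p

open Pointwise in
lemma upper_bound (S : Set (GG p)) (hS : ∀ x ∈ S, ∀ y ∈ S, ∃ α : Om p, x • α = y • α) :
    S.ncard ≤ (p - 1) * p ^ 2 := by
  rcases Set.eq_empty_or_nonempty S with rfl | ⟨x₀, hx₀⟩
  · simp
  · have hsub : S ⊆ x₀ • (NG p : Set (GG p)) := by
      intro x hx
      rw [Set.mem_smul_set_iff_inv_smul_mem]
      obtain ⟨α, hα⟩ := hS x hx x₀ hx₀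
      exact ratio_mem_NG p x x₀ α hα
    calc S.ncard ≤ (x₀ • (NG p : Set (GG p))).ncard :=
          Set.ncard_le_ncard hsub (Set.toFinite _)
      _ = (NG p : Set (GG p)).ncard := Set.ncard_smul_set x₀ _
      _ = (p - 1) * p ^ 2 := by rw [← Nat.card_coe_set_eq]; exact card_NG p

lemma not_power (hp2 : 2 ≤ p) : ¬ ∃ n m : ℕ, 2 ≤ m ∧ Nat.card (Om p) = n ^ m := by
  rintro ⟨n, m, hm, hnm⟩
  rw [card_Om] at hnm
  have hdvd : p ∣ n ^ m := ⟨p + 1, hnm.symm⟩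
  have hpn : p ∣ n := hp.out.dvd_of_dvd_pow hdvd
  have h2 : p * p ∣ n ^ m := by
    obtain ⟨k, rfl⟩ := hpn
    calc p * p ∣ (p * k) ^ 2 := ⟨k * k, by ring⟩
      _ ∣ (p * k) ^ m := pow_dvd_pow _ hm
  rw [← hnm] at h2
  obtain ⟨c, hc⟩ := h2
  have : p + 1 = p * c := by
    have hppos : 0 < p := by omega
    apply Nat.eq_of_mul_eq_mul_left hppos
    rw [show p * (p + 1) = p * p * c from hc]; ring
  have hdvd1 : p ∣ 1 := (Nat.dvd_add_right (dvd_refl p)).mp ⟨c, this⟩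
  have := Nat.le_of_dvd one_pos hdvd1
  omega

end
end Stmt5Aux


open Stmt5Aux in


/-- For every `M > 0` and every real `ε ∈ (0,1)` there exist a
finite nonempty set `Ω` and a transitive permutation group `G ≤ Sym(Ω)` such that
`|Ω|` is not a perfect power (hence `G` admits no product decomposition), and the
maximum size `s` of an intersecting set in `G` satisfies `s > M·|G_ω|` and
`(1-ε)·√|Ω|·|G_ω| < s < √|Ω|·|G_ω|` for a point stabilizer `G_ω`. -/
theorem stmt5 (M : ℕ) (hM : 0 < M) (ε : ℝ) (hε0 : 0 < ε) (hε1 : ε < 1) :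
    ∃ (Ω : Type) (_ : Fintype Ω) (_ : Nonempty Ω) (G : Subgroup (Equiv.Perm Ω)),
      MulAction.IsPretransitive G Ω ∧
      (¬ ∃ n m : ℕ, 2 ≤ m ∧ Nat.card Ω = n ^ m) ∧
      ∃ (ω : Ω) (s : ℕ),
        (∃ S : Set G, (∀ x ∈ S, ∀ y ∈ S, ∃ α : Ω, x • α = y • α) ∧ S.ncard = s) ∧
        (∀ S : Set G, (∀ x ∈ S, ∀ y ∈ S, ∃ α : Ω, x • α = y • α) → S.ncard ≤ s) ∧
        s > M * Nat.card (MulAction.stabilizer G ω) ∧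
        (1 - ε) * Real.sqrt (Nat.card Ω) * (Nat.card (MulAction.stabilizer G ω) : ℝ) < (s : ℝ) ∧
        (s : ℝ) < Real.sqrt (Nat.card Ω) * (Nat.card (MulAction.stabilizer G ω) : ℝ) := by
  -- choose a large prime
  obtain ⟨p, hple, hpprime⟩ := Nat.exists_infinite_primes (max M ⌈1 / ε⌉₊ + 2)
  haveI : Fact p.Prime := ⟨hpprime⟩
  have hp2 : 2 ≤ p := hpprime.two_le
  have hpM : M < p := by
    have := le_max_left M ⌈1 / ε⌉₊
    omega
  have hpε : (1 : ℝ) / ε < p := by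
    have h1 : (⌈1 / ε⌉₊ : ℝ) < p := by
      have : ⌈1 / ε⌉₊ < p := by
        have := le_max_right M ⌈1 / ε⌉₊
        omega
      exact_mod_cast this
    calc (1 : ℝ) / ε ≤ ⌈1 / ε⌉₊ := Nat.le_ceil _
      _ < p := h1
  refine ⟨Om p, Fintype.ofFinite _, ⟨om0 p⟩, GG p, inferInstance, not_power p hp2,
    om0 p, (p - 1) * p ^ 2, lower_bound p, upper_bound p, ?_, ?_, ?_⟩
  · -- s > M * |stab|
    rw [card_stab]
    have hHcn : 0 < (p - 1) * p := Nat.mul_pos (by omega) (by omega)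
    calc M * ((p - 1) * p) < p * ((p - 1) * p) :=
          (Nat.mul_lt_mul_right hHcn).mpr hpM
      _ = (p - 1) * p ^ 2 := by ring
  · -- lower bound
    rw [card_stab, card_Om]
    have hp0 : (0 : ℝ) < p := by positivity
    have hHcn : 0 < (p - 1) * p := Nat.mul_pos (by omega) (by omega)
    have hHc : (0 : ℝ) < ((p - 1) * p : ℕ) := by exact_mod_cast hHcn
    have hs : (((p - 1) * p ^ 2 : ℕ) : ℝ) = (((p - 1) * p : ℕ) : ℝ) * p := by
      push_cast
      ring
    have hn : ((p * (p + 1) : ℕ) : ℝ) = (p : ℝ) * ((p : ℝ) + 1) := by push_cast; ring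
    set r := Real.sqrt ((p * (p + 1) : ℕ)) with hr
    have hrsq : r ^ 2 = (p : ℝ) * ((p : ℝ) + 1) := by
      rw [hr, Real.sq_sqrt (by positivity), hn]
    have hrpos : 0 ≤ r := Real.sqrt_nonneg _
    have hlt2 : r < (p : ℝ) + 1 := by nlinarith
    rw [hs]
    have key : (1 - ε) * r < p := by
      have hεp : 1 < ε * ((p : ℝ) + 1) := by
        have h5 : 1 < ε * p := by
          rw [div_lt_iff₀ hε0] at hpε
          nlinarith
        nlinarith
      nlinarith
    calc (1 - ε) * r * (((p - 1) * p : ℕ) : ℝ) < (p : ℝ) * (((p - 1) * p : ℕ) : ℝ) :=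
          mul_lt_mul_of_pos_right key hHc
      _ = (((p - 1) * p : ℕ) : ℝ) * p := by ring
  · -- upper bound
    rw [card_stab, card_Om]
    have hp0 : (0 : ℝ) < p := by positivity
    have hHcn : 0 < (p - 1) * p := Nat.mul_pos (by omega) (by omega)
    have hHc : (0 : ℝ) < ((p - 1) * p : ℕ) := by exact_mod_cast hHcn
    have hs : (((p - 1) * p ^ 2 : ℕ) : ℝ) = (((p - 1) * p : ℕ) : ℝ) * p := by
      push_cast
      ring
    have hn : ((p * (p + 1) : ℕ) : ℝ) = (p : ℝ) * ((p : ℝ) + 1) := by push_cast; ring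
    set r := Real.sqrt ((p * (p + 1) : ℕ)) with hr
    have hrsq : r ^ 2 = (p : ℝ) * ((p : ℝ) + 1) := by
      rw [hr, Real.sq_sqrt (by positivity), hn]
    have hrpos : 0 ≤ r := Real.sqrt_nonneg _
    have hlt1 : (p : ℝ) < r := by nlinarith
    rw [hs]
    calc (((p - 1) * p : ℕ) : ℝ) * (p : ℝ) < (((p - 1) * p : ℕ) : ℝ) * r :=
          mul_lt_mul_of_pos_left hlt1 hHc
      _ = r * (((p - 1) * p : ℕ) : ℝ) := by ring
end

section
/- Let ℓ be a prime, let G be a group acting on a set Ω, and let S ≤ G be a subgroup every element of which fixes some point of Ω. Then for every function f : ZMod ℓ → S and every m ∈ ZMod ℓ, there exists a function π : ZMod ℓ → Ω such that f(i−m)·π(i−m) = π(i) for all i ∈ ZMod ℓ. (Equivalently, every element (f; m) of the wreath product S ≀ ZMod ℓ fixes a point of Ω^{ZMod ℓ}, so S ≀ ZMod ℓ is an intersecting subgroup of G ≀ ZMod ℓ.) -/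
/-- Let `ℓ` be a prime, let `G` act on `Ω`, and let `S ≤ G` be a
subgroup each of whose elements fixes some point of `Ω`.  Then for every
`f : ZMod ℓ → S` and every `m : ZMod ℓ` there is `π : ZMod ℓ → Ω` with
`f (i - m) • π (i - m) = π i` for all `i`; i.e. every element `(f; m)` of the
wreath product `S ≀ ZMod ℓ` fixes a point of `Ω ^ (ZMod ℓ)`, so `S ≀ ZMod ℓ` is an
intersecting subgroup of `G ≀ ZMod ℓ`. -/
theorem stmt6 (ℓ : ℕ) (hℓ : ℓ.Prime) {G : Type*} [Group G] {Ω : Type*}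
    [MulAction G Ω] (S : Subgroup G) (hS : ∀ s ∈ S, ∃ α : Ω, s • α = α)
    (f : ZMod ℓ → S) (m : ZMod ℓ) :
    ∃ π : ZMod ℓ → Ω, ∀ i : ZMod ℓ, (f (i - m) : G) • π (i - m) = π i := by
  haveI := Fact.mk hℓ
  rcases eq_or_ne m 0 with rfl | hm
  · choose π hπ using fun i => hS (f i) (f i).2
    exact ⟨π, fun i => by simpa using hπ (i - 0)⟩
  · -- the cumulative products along the cycle generated by m
    set c : ℕ → G := fun n => Nat.rec 1 (fun j cj => (f ((j : ZMod ℓ) * m) : G) * cj) n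
      with hc
    have hc0 : c 0 = 1 := rfl
    have hcsucc : ∀ j, c (j + 1) = (f ((j : ZMod ℓ) * m) : G) * c j := fun j => rfl
    have hcS : ∀ n, c n ∈ S := by
      intro n
      induction n with
      | zero => simpa [hc0] using S.one_mem
      | succ j ih => rw [hcsucc]; exact S.mul_mem (f _).2 ih
    obtain ⟨α, hα⟩ := hS (c ℓ) (hcS ℓ)
    have hmm : m⁻¹ * m = 1 := inv_mul_cancel₀ hm
    refine ⟨fun i => c ((i * m⁻¹).val) • α, fun i => ?_⟩
    have hjm : (i * m⁻¹) * m = i := by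
      rw [mul_assoc, hmm, mul_one]
    have hsub : (i - m) * m⁻¹ = i * m⁻¹ - 1 := by
      rw [sub_mul, mul_comm m m⁻¹, hmm]
    rcases Nat.eq_zero_or_eq_succ_pred (i * m⁻¹).val with h0 | hsucc
    · -- i = 0, wrap-around case
      have hj0 : i * m⁻¹ = 0 := by
        have h : (((i * m⁻¹).val : ℕ) : ZMod ℓ) = i * m⁻¹ := by
          rw [ZMod.natCast_val, ZMod.cast_id]
        rw [← h, h0]; simp
      have hi0 : i = 0 := by rw [← hjm, hj0, zero_mul]
      have hval : ((i - m) * m⁻¹).val = ℓ - 1 := by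
        rw [hsub, hj0, zero_sub]
        have h1 : ((-1 : ZMod ℓ)) = (((ℓ - 1 : ℕ)) : ZMod ℓ) := by
          have : ((ℓ : ℕ) : ZMod ℓ) = 0 := ZMod.natCast_self ℓ
          push_cast [Nat.cast_sub hℓ.one_le]
          rw [this]; ring
        rw [h1, ZMod.val_cast_of_lt (Nat.sub_lt hℓ.pos one_pos)]
      have him : i - m = ((ℓ - 1 : ℕ) : ZMod ℓ) * m := by
        have : ((ℓ - 1 : ℕ) : ZMod ℓ) = -1 := by
          have h0' : ((ℓ : ℕ) : ZMod ℓ) = 0 := ZMod.natCast_self ℓ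
          push_cast [Nat.cast_sub hℓ.one_le]
          rw [h0']; ring
        rw [this, hi0, zero_sub, neg_one_mul]
      have hℓsucc : ℓ = (ℓ - 1) + 1 := (Nat.succ_pred_eq_of_pos hℓ.pos).symm
      show (f (i - m) : G) • c (((i - m) * m⁻¹).val) • α = c ((i * m⁻¹).val) • α
      rw [hval, hj0]
      simp only [ZMod.val_zero, hc0, one_smul]
      rw [him, ← mul_smul, ← hcsucc, ← hℓsucc, hα]
    · -- generic case
      set t := (i * m⁻¹).val - 1 with ht
      have hvt : (i * m⁻¹).val = t + 1 := hsucc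
      have hjcast : ((t + 1 : ℕ) : ZMod ℓ) = i * m⁻¹ := by
        rw [← hvt, ZMod.natCast_val, ZMod.cast_id]
      have htlt : t < ℓ := by have := ZMod.val_lt (i * m⁻¹); omega
      have hval : ((i - m) * m⁻¹).val = t := by
        rw [hsub, ← hjcast]
        push_cast
        rw [add_sub_cancel_right, ZMod.val_cast_of_lt htlt]
      have him : i - m = ((t : ℕ) : ZMod ℓ) * m := by
        have : i = ((t + 1 : ℕ) : ZMod ℓ) * m := by rw [hjcast, hjm]
        rw [this]
        push_cast
        ring
      show (f (i - m) : G) • c (((i - m) * m⁻¹).val) • α = c ((i * m⁻¹).val) • α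
      rw [hval, hvt, hcsucc, him, ← mul_smul]
end

section
/- Let F be a finite field of characteristic 2 with |F| = q ≥ 4. For all a ∈ F and b ∈ Fˣ, the invertible matrix [[1, a], [0, b]] fixes setwise some unordered pair {P, S} of two distinct points of the projective line ℙ(F²). Consequently, the image S̄ in PGL(2, F) of the subgroup { [[1, a], [0, b]] : a ∈ F, b ∈ Fˣ } is an intersecting subgroup for the action of PGL(2, F) on the set Δ of 2-element subsets of ℙ(F²); moreover |S̄| = q(q−1), while the setwise stabilizer in PGL(2, F) of the pair {[1:0], [0:1]} has order 2(q−1), so |S̄| = (q/2)·|stabilizer|. -/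
open scoped LinearAlgebra.Projectivization Pointwise
open Matrix

/-- The permutation of projective space induced by a linear automorphism. -/
noncomputable def projPerm {F V : Type*} [Field F] [AddCommGroup V] [Module F V]
    (e : V ≃ₗ[F] V) : Equiv.Perm (ℙ F V) where
  toFun := Projectivization.map (e : V →ₗ[F] V) e.injective
  invFun := Projectivization.map (e.symm : V →ₗ[F] V) e.symm.injective
  left_inv x := by
    induction x using Projectivization.ind with
    | h v hv =>
      rw [Projectivization.map_mk, Projectivization.map_mk]
      exact (Projectivization.mk_eq_mk_iff F _ _ _ hv).mpr ⟨1, by simp⟩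
  right_inv x := by
    induction x using Projectivization.ind with
    | h v hv =>
      rw [Projectivization.map_mk, Projectivization.map_mk]
      exact (Projectivization.mk_eq_mk_iff F _ _ _ hv).mpr ⟨1, by simp⟩

lemma projPerm_one {F V : Type*} [Field F] [AddCommGroup V] [Module F V] :
    projPerm (1 : V ≃ₗ[F] V) = 1 := by
  ext x
  induction x using Projectivization.ind with
  | h v hv => rfl

lemma projPerm_mul {F V : Type*} [Field F] [AddCommGroup V] [Module F V]
    (e₁ e₂ : V ≃ₗ[F] V) : projPerm (e₁ * e₂) = projPerm e₁ * projPerm e₂ := by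
  ext x
  induction x using Projectivization.ind with
  | h v hv => rfl

/-- The natural homomorphism `GL(2, F) →* Sym(ℙ¹(F))`; its range is the
projective general linear group `PGL(2, F)`, acting on the projective line. -/
noncomputable def glToPerm {F : Type*} [Field F] :
    GL (Fin 2) F →* Equiv.Perm (ℙ F (Fin 2 → F)) where
  toFun g :=
    projPerm ((LinearMap.GeneralLinearGroup.generalLinearEquiv F (Fin 2 → F))
      (Matrix.GeneralLinearGroup.toLin g))
  map_one' := by simp only [_root_.map_one, projPerm_one]
  map_mul' g h := by simp only [_root_.map_mul, projPerm_mul]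

lemma GL_mulVec_ne_zero {F : Type*} [Field F] (g : GL (Fin 2) F) (v : Fin 2 → F) (hv : v ≠ 0) :
    (g : Matrix (Fin 2) (Fin 2) F) *ᵥ v ≠ 0 := by
  intro h
  apply hv
  have := congrArg (fun w => ((g⁻¹ : GL (Fin 2) F) : Matrix (Fin 2) (Fin 2) F) *ᵥ w) h
  simp only [Matrix.mulVec_mulVec, ← Units.val_mul, inv_mul_cancel, Units.val_one,
    Matrix.one_mulVec, Matrix.mulVec_zero] at this
  exact this

lemma glToPerm_apply {F : Type*} [Field F] (g : GL (Fin 2) F) (v : Fin 2 → F) (hv : v ≠ 0) :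
    glToPerm g (Projectivization.mk F v hv) =
      Projectivization.mk F ((g : Matrix (Fin 2) (Fin 2) F) *ᵥ v) (GL_mulVec_ne_zero g v hv) := by
  rfl

lemma glToPerm_eq_of_smul {F : Type*} [Field F] (c : Fˣ) (g h : GL (Fin 2) F)
    (hgh : (h : Matrix (Fin 2) (Fin 2) F) = (c : F) • (g : Matrix (Fin 2) (Fin 2) F)) :
    glToPerm h = glToPerm g := by
  ext x
  induction x using Projectivization.ind with
  | h v hv =>
    rw [glToPerm_apply, glToPerm_apply, Projectivization.mk_eq_mk_iff]
    exact ⟨c, by rw [hgh, Matrix.smul_mulVec]; rfl⟩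

lemma perm_smul_pair {F : Type*} [Field F] (σ : Equiv.Perm (ℙ F (Fin 2 → F)))
    (P Q : ℙ F (Fin 2 → F)) :
    σ • ({P, Q} : Set (ℙ F (Fin 2 → F))) = {σ P, σ Q} := by
  simp [Set.smul_set_insert, Set.smul_set_singleton, Equiv.Perm.smul_def]

lemma vne₂ {F : Type*} [Field F] {x y : F} (hy : y ≠ 0) : (![x, y] : Fin 2 → F) ≠ 0 :=
  fun h => hy (by simpa using congrFun h 1)

lemma vne₁ {F : Type*} [Field F] {x y : F} (hx : x ≠ 0) : (![x, y] : Fin 2 → F) ≠ 0 :=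
  fun h => hx (by simpa using congrFun h 0)

lemma mk_ne_snd {F : Type*} [Field F] {x y z : F} (hy : y ≠ 0)
    (h : (![x, y] : Fin 2 → F) ≠ 0) (h2 : (![z, 0] : Fin 2 → F) ≠ 0) :
    Projectivization.mk F ![x, y] h ≠ Projectivization.mk F ![z, 0] h2 := by
  rw [Ne, Projectivization.mk_eq_mk_iff]
  rintro ⟨c, hc⟩
  have := congrFun hc 1
  simp at this
  exact hy this.symm

lemma fix_pair {F : Type*} [Field F] (h2 : ∀ x : F, x + x = 0)
    (g : GL (Fin 2) F) (a : F) (b : Fˣ)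
    (hg : (g : Matrix (Fin 2) (Fin 2) F) = !![1, a; 0, (b : F)]) :
    ∃ P Q : ℙ F (Fin 2 → F), P ≠ Q ∧
      glToPerm g • ({P, Q} : Set (ℙ F (Fin 2 → F))) = {P, Q} := by
  by_cases hb : (b : F) = 1
  · by_cases ha : a = 0
    · -- identity
      have hg1 : g = 1 := by
        ext i j
        rw [hg, hb, ha]
        fin_cases i <;> fin_cases j <;> simp
      refine ⟨Projectivization.mk F ![1, 0] (vne₁ one_ne_zero),
        Projectivization.mk F ![0, 1] (vne₂ one_ne_zero), ?_, ?_⟩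
      · exact (mk_ne_snd one_ne_zero _ _).symm
      · rw [hg1, _root_.map_one, one_smul]
    · -- involution case
      set P := Projectivization.mk F ![(0:F), 1] (vne₂ one_ne_zero) with hP
      set Q := Projectivization.mk F ![a, 1] (vne₂ one_ne_zero) with hQ
      have hPQ : P ≠ Q := by
        rw [hP, hQ, Ne, Projectivization.mk_eq_mk_iff]
        rintro ⟨c, hc⟩
        have h0 := congrFun hc 0
        have h1 := congrFun hc 1
        simp [Units.smul_def] at h0 h1
        exact ha h0
      have hgP : glToPerm g P = Q := by
        rw [hP, hQ, glToPerm_apply, Projectivization.mk_eq_mk_iff]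
        refine ⟨1, ?_⟩
        funext i
        fin_cases i <;>
          simp [hg, hb, Matrix.mulVec, dotProduct, Fin.sum_univ_two]
      have hgQ : glToPerm g Q = P := by
        rw [hP, hQ, glToPerm_apply, Projectivization.mk_eq_mk_iff]
        refine ⟨1, ?_⟩
        funext i
        fin_cases i <;>
          simp [hg, hb, Matrix.mulVec, dotProduct, Fin.sum_univ_two]
        exact (h2 a).symm
      refine ⟨P, Q, hPQ, ?_⟩
      rw [perm_smul_pair, hgP, hgQ, Set.pair_comm]
  · -- two eigenvectors
    have hb' : (b : F) - 1 ≠ 0 := sub_ne_zero_of_ne hb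
    set P := Projectivization.mk F ![(1:F), 0] (vne₁ one_ne_zero) with hP
    set Q := Projectivization.mk F ![a, (b : F) - 1] (vne₂ hb') with hQ
    have hPQ : P ≠ Q := (mk_ne_snd hb' _ _).symm.symm |>.symm
    have hgP : glToPerm g P = P := by
      rw [hP, glToPerm_apply, Projectivization.mk_eq_mk_iff]
      refine ⟨1, ?_⟩
      funext i
      fin_cases i <;>
        simp [hg, Matrix.mulVec, dotProduct, Fin.sum_univ_two]
    have hgQ : glToPerm g Q = Q := by
      rw [hQ, glToPerm_apply, Projectivization.mk_eq_mk_iff']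
      refine ⟨(b : F), ?_⟩
      funext i
      fin_cases i <;>
        simp [hg, smul_eq_mul, Pi.smul_apply, Matrix.mulVec, dotProduct,
          Fin.sum_univ_two] <;> ring
    refine ⟨P, Q, hPQ, ?_⟩
    rw [perm_smul_pair, hgP, hgQ]

lemma ker_lemma {F : Type*} [Field F] (g : GL (Fin 2) F) (a : F) (b : Fˣ)
    (hg : (g : Matrix (Fin 2) (Fin 2) F) = !![1, a; 0, (b : F)])
    (h1 : glToPerm g = 1) : g = 1 := by
  have e1 : glToPerm g (Projectivization.mk F ![0, 1] (vne₂ one_ne_zero)) =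
      Projectivization.mk F ![0, 1] (vne₂ one_ne_zero) := by rw [h1]; rfl
  have e2 : glToPerm g (Projectivization.mk F ![1, 1] (vne₂ one_ne_zero)) =
      Projectivization.mk F ![1, 1] (vne₂ one_ne_zero) := by rw [h1]; rfl
  rw [glToPerm_apply, Projectivization.mk_eq_mk_iff'] at e1 e2
  obtain ⟨c, hc⟩ := e1
  obtain ⟨d, hd⟩ := e2
  have hc0 := congrFun hc 0
  have hc1 := congrFun hc 1
  have hd0 := congrFun hd 0
  have hd1 := congrFun hd 1
  simp [hg, Matrix.mulVec, dotProduct, Fin.sum_univ_two] at hc0 hc1 hd0 hd1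
  -- hc0 : 0 = a ; hc1 : c = b ; hd0 : d = 1 + a ; hd1 : d = b
  ext i j
  rw [hg]
  fin_cases i <;> fin_cases j <;>
    simp [← hc0, ← hd1, hd0, ← hc0]

lemma card_S0 {F : Type*} [Field F] [Fintype F] (S₀ : Subgroup (GL (Fin 2) F))
    (hS₀ : ∀ g : GL (Fin 2) F, g ∈ S₀ ↔
      ∃ (a : F) (b : Fˣ), (g : Matrix (Fin 2) (Fin 2) F) = !![1, a; 0, (b : F)]) :
    Nat.card S₀ = Fintype.card F * (Fintype.card F - 1) := by
  classical
  have hdet : ∀ (a : F) (b : Fˣ), (!![1, a; 0, (b : F)]).det ≠ 0 := by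
    intro a b
    simp [Matrix.det_fin_two_of]
  let f : F × Fˣ → S₀ := fun p =>
    ⟨Matrix.GeneralLinearGroup.mkOfDetNeZero _ (hdet p.1 p.2),
      (hS₀ _).mpr ⟨p.1, p.2, rfl⟩⟩
  have hfval : ∀ p : F × Fˣ, ((f p : GL (Fin 2) F) : Matrix (Fin 2) (Fin 2) F)
      = !![1, p.1; 0, (p.2 : F)] := fun p => rfl
  have hbij : Function.Bijective f := by
    constructor
    · rintro ⟨a, b⟩ ⟨a', b'⟩ h
      have := congrArg (fun x : S₀ => ((x : GL (Fin 2) F) : Matrix (Fin 2) (Fin 2) F)) h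
      simp only [hfval] at this
      have ha := congrFun (congrFun this 0) 1
      have hb := congrFun (congrFun this 1) 1
      simp at ha hb
      exact Prod.ext ha (Units.ext hb)
    · rintro ⟨g, hgmem⟩
      obtain ⟨a, b, hab⟩ := (hS₀ g).mp hgmem
      refine ⟨(a, b), ?_⟩
      apply Subtype.ext
      apply Units.ext
      rw [hfval, hab]
  rw [← Nat.card_eq_of_bijective f hbij, Nat.card_eq_fintype_card,
    Fintype.card_prod, Fintype.card_units]

lemma subgroup_smul_set {G X : Type*} [Group G] [MulAction G X] (H : Subgroup G)
    (h : ↥H) (s : Set X) : h • s = (h : G) • s := rfl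

noncomputable def dMat {F : Type*} [Field F] (u : Fˣ) : GL (Fin 2) F :=
  Matrix.GeneralLinearGroup.mkOfDetNeZero !![(u : F), 0; 0, 1]
    (by simp [Matrix.det_fin_two_of])

noncomputable def wMat {F : Type*} [Field F] (u : Fˣ) : GL (Fin 2) F :=
  Matrix.GeneralLinearGroup.mkOfDetNeZero !![0, (u : F); 1, 0]
    (by simp [Matrix.det_fin_two_of])

@[simp] lemma dMat_val {F : Type*} [Field F] (u : Fˣ) :
    ((dMat u : GL (Fin 2) F) : Matrix (Fin 2) (Fin 2) F) = !![(u : F), 0; 0, 1] := rfl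

@[simp] lemma wMat_val {F : Type*} [Field F] (u : Fˣ) :
    ((wMat u : GL (Fin 2) F) : Matrix (Fin 2) (Fin 2) F) = !![0, (u : F); 1, 0] := rfl

lemma dMat_P0 {F : Type*} [Field F] (u : Fˣ) (h : (![1, 0] : Fin 2 → F) ≠ 0) :
    glToPerm (dMat u) (Projectivization.mk F ![1, 0] h) = Projectivization.mk F ![1, 0] h := by
  rw [glToPerm_apply, Projectivization.mk_eq_mk_iff']
  refine ⟨(u : F), ?_⟩
  funext i
  fin_cases i <;> simp [Matrix.mulVec, dotProduct, Fin.sum_univ_two]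

lemma dMat_P1 {F : Type*} [Field F] (u : Fˣ) (h : (![0, 1] : Fin 2 → F) ≠ 0) :
    glToPerm (dMat u) (Projectivization.mk F ![0, 1] h) = Projectivization.mk F ![0, 1] h := by
  rw [glToPerm_apply, Projectivization.mk_eq_mk_iff']
  refine ⟨1, ?_⟩
  funext i
  fin_cases i <;> simp [Matrix.mulVec, dotProduct, Fin.sum_univ_two]

lemma wMat_P0 {F : Type*} [Field F] (u : Fˣ) (h : (![1, 0] : Fin 2 → F) ≠ 0)
    (h' : (![0, 1] : Fin 2 → F) ≠ 0) :
    glToPerm (wMat u) (Projectivization.mk F ![1, 0] h) = Projectivization.mk F ![0, 1] h' := by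
  rw [glToPerm_apply, Projectivization.mk_eq_mk_iff']
  refine ⟨1, ?_⟩
  funext i
  fin_cases i <;> simp [Matrix.mulVec, dotProduct, Fin.sum_univ_two]

lemma wMat_P1 {F : Type*} [Field F] (u : Fˣ) (h : (![0, 1] : Fin 2 → F) ≠ 0)
    (h' : (![1, 0] : Fin 2 → F) ≠ 0) :
    glToPerm (wMat u) (Projectivization.mk F ![0, 1] h) = Projectivization.mk F ![1, 0] h' := by
  rw [glToPerm_apply, Projectivization.mk_eq_mk_iff']
  refine ⟨(u : F), ?_⟩
  funext i
  fin_cases i <;> simp [Matrix.mulVec, dotProduct, Fin.sum_univ_two]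

lemma card_stab {F : Type*} [Field F] [Fintype F]
    (h0 : (![1, 0] : Fin 2 → F) ≠ 0) (h1 : (![0, 1] : Fin 2 → F) ≠ 0) :
    Nat.card (MulAction.stabilizer (glToPerm (F := F)).range
      ({Projectivization.mk F ![1, 0] h0, Projectivization.mk F ![0, 1] h1} :
        Set (ℙ F (Fin 2 → F)))) = 2 * (Fintype.card F - 1) := by
  classical
  set P₀ : ℙ F (Fin 2 → F) := Projectivization.mk F ![1, 0] h0 with hP₀
  set P₁ : ℙ F (Fin 2 → F) := Projectivization.mk F ![0, 1] h1 with hP₁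
  have hP : P₀ ≠ P₁ := (mk_ne_snd one_ne_zero _ _).symm
  set H := (glToPerm (F := F)).range with hH
  set T := MulAction.stabilizer H ({P₀, P₁} : Set (ℙ F (Fin 2 → F))) with hT
  have hd : ∀ u : Fˣ, (⟨glToPerm (dMat u), ⟨dMat u, rfl⟩⟩ : H) ∈ T := by
    intro u
    rw [hT, MulAction.mem_stabilizer_iff, subgroup_smul_set]
    show glToPerm (dMat u) • _ = _
    rw [perm_smul_pair, hP₀, hP₁, dMat_P0, dMat_P1]
  have hw : ∀ u : Fˣ, (⟨glToPerm (wMat u), ⟨wMat u, rfl⟩⟩ : H) ∈ T := by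
    intro u
    rw [hT, MulAction.mem_stabilizer_iff, subgroup_smul_set]
    show glToPerm (wMat u) • _ = _
    rw [perm_smul_pair, hP₀, hP₁, wMat_P0 u h0 h1, wMat_P1 u h1 h0, Set.pair_comm]
  let f : Fˣ × Bool → T := fun p =>
    if hb : p.2 = true then ⟨⟨glToPerm (wMat p.1), ⟨wMat p.1, rfl⟩⟩, hw p.1⟩
    else ⟨⟨glToPerm (dMat p.1), ⟨dMat p.1, rfl⟩⟩, hd p.1⟩
  have fval : ∀ p : Fˣ × Bool,
      ((f p : H) : Equiv.Perm (ℙ F (Fin 2 → F))) =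
        if p.2 = true then glToPerm (wMat p.1) else glToPerm (dMat p.1) := by
    intro p
    by_cases hb : p.2 = true <;> simp [f, hb]
  have dMat_inj : ∀ u v : Fˣ, glToPerm (dMat u) = glToPerm (dMat v) → u = v := by
    intro u v h
    have := DFunLike.congr_fun h (Projectivization.mk F ![1, 1] (vne₂ one_ne_zero))
    rw [glToPerm_apply, glToPerm_apply, Projectivization.mk_eq_mk_iff'] at this
    obtain ⟨c, hc⟩ := this
    have e0 := congrFun hc 0
    have e1 := congrFun hc 1
    simp [Matrix.mulVec, dotProduct, Fin.sum_univ_two] at e0 e1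
    apply Units.ext
    rw [← e0, e1, one_mul]
  have wMat_inj : ∀ u v : Fˣ, glToPerm (wMat u) = glToPerm (wMat v) → u = v := by
    intro u v h
    have := DFunLike.congr_fun h (Projectivization.mk F ![1, 1] (vne₂ one_ne_zero))
    rw [glToPerm_apply, glToPerm_apply, Projectivization.mk_eq_mk_iff'] at this
    obtain ⟨c, hc⟩ := this
    have e0 := congrFun hc 0
    have e1 := congrFun hc 1
    simp [Matrix.mulVec, dotProduct, Fin.sum_univ_two] at e0 e1
    apply Units.ext
    rw [← e0, e1, one_mul]
  have dw_ne : ∀ u v : Fˣ, glToPerm (dMat u) ≠ glToPerm (wMat v) := by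
    intro u v h
    apply hP
    rw [hP₀, hP₁, ← dMat_P0 u h0, h, wMat_P0 v h0 h1]
  have hbij : Function.Bijective f := by
    constructor
    · rintro ⟨u, su⟩ ⟨v, sv⟩ h
      have hperm := congrArg (fun t : T => ((t : H) : Equiv.Perm (ℙ F (Fin 2 → F)))) h
      simp only [fval] at hperm
      cases su <;> cases sv <;> simp only [Bool.false_eq_true, if_false, if_true] at hperm
      · exact Prod.ext (dMat_inj _ _ hperm) rfl
      · exact absurd hperm (dw_ne _ _)
      · exact absurd hperm.symm (dw_ne _ _)
      · exact Prod.ext (wMat_inj _ _ hperm) rfl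
    · rintro ⟨⟨σ, hσ⟩, hstab⟩
      obtain ⟨g, rfl⟩ := hσ
      rw [hT, MulAction.mem_stabilizer_iff, subgroup_smul_set] at hstab
      have hstab' : ({glToPerm g P₀, glToPerm g P₁} : Set (ℙ F (Fin 2 → F))) = {P₀, P₁} := by
        rw [← perm_smul_pair]; exact hstab
      rw [Set.pair_eq_pair_iff] at hstab'
      rcases hstab' with ⟨e0, e1⟩ | ⟨e0, e1⟩
      · -- diagonal case
        rw [hP₀, glToPerm_apply, Projectivization.mk_eq_mk_iff'] at e0
        rw [hP₁, glToPerm_apply, Projectivization.mk_eq_mk_iff'] at e1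
        obtain ⟨c, hc⟩ := e0
        obtain ⟨d, hdd⟩ := e1
        have hcne : c ≠ 0 := by
          rintro rfl
          exact GL_mulVec_ne_zero g ![1, 0] h0 (by rw [← hc]; funext i; fin_cases i <;> simp)
        have hdne : d ≠ 0 := by
          rintro rfl
          exact GL_mulVec_ne_zero g ![0, 1] h1 (by rw [← hdd]; funext i; fin_cases i <;> simp)
        have hc0 := congrFun hc 0
        have hc1 := congrFun hc 1
        have hd0 := congrFun hdd 0
        have hd1 := congrFun hdd 1
        simp [Matrix.mulVec, dotProduct, Fin.sum_univ_two] at hc0 hc1 hd0 hd1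
        -- hc0 : c = g 0 0 ; hc1 : 0 = g 1 0 ; hd0 : 0 = g 0 1 ; hd1 : d = g 1 1
        refine ⟨(Units.mk0 ((g : Matrix (Fin 2) (Fin 2) F) 0 0 *
          ((g : Matrix (Fin 2) (Fin 2) F) 1 1)⁻¹)
          (mul_ne_zero (hc0 ▸ hcne) (inv_ne_zero (hd1 ▸ hdne))), false), ?_⟩
        apply Subtype.ext
        apply Subtype.ext
        rw [fval]
        simp only [Bool.false_eq_true, if_false]
        apply glToPerm_eq_of_smul ((Units.mk0 _ (hd1 ▸ hdne))⁻¹) g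
        ext i j
        rw [Units.val_inv_eq_inv_val]
        fin_cases i <;> fin_cases j <;>
          simp [Matrix.smul_apply, ← hc1, ← hd0, mul_comm,
            inv_mul_cancel₀ (hd1 ▸ hdne)]
      · -- antidiagonal case
        rw [hP₀, glToPerm_apply, Projectivization.mk_eq_mk_iff'] at e0
        rw [hP₁, glToPerm_apply, Projectivization.mk_eq_mk_iff'] at e1
        obtain ⟨c, hc⟩ := e0
        obtain ⟨d, hdd⟩ := e1
        have hcne : c ≠ 0 := by
          rintro rfl
          exact GL_mulVec_ne_zero g ![1, 0] h0 (by rw [← hc]; funext i; fin_cases i <;> simp)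
        have hdne : d ≠ 0 := by
          rintro rfl
          exact GL_mulVec_ne_zero g ![0, 1] h1 (by rw [← hdd]; funext i; fin_cases i <;> simp)
        have hc0 := congrFun hc 0
        have hc1 := congrFun hc 1
        have hd0 := congrFun hdd 0
        have hd1 := congrFun hdd 1
        simp [Matrix.mulVec, dotProduct, Fin.sum_univ_two] at hc0 hc1 hd0 hd1
        refine ⟨(Units.mk0 ((g : Matrix (Fin 2) (Fin 2) F) 0 1 *
          ((g : Matrix (Fin 2) (Fin 2) F) 1 0)⁻¹)
          (mul_ne_zero (hd0 ▸ hdne) (inv_ne_zero (hc1 ▸ hcne))), true), ?_⟩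
        apply Subtype.ext
        apply Subtype.ext
        rw [fval]
        simp only [if_true]
        apply glToPerm_eq_of_smul ((Units.mk0 _ (hc1 ▸ hcne))⁻¹) g
        ext i j
        rw [Units.val_inv_eq_inv_val]
        fin_cases i <;> fin_cases j <;>
          simp [Matrix.smul_apply, ← hc0, ← hd1, mul_comm,
            inv_mul_cancel₀ (hc1 ▸ hcne)]
  rw [← Nat.card_eq_of_bijective f hbij, Nat.card_eq_fintype_card,
    Fintype.card_prod, Fintype.card_units, Fintype.card_bool, Nat.mul_comm]


/-- Let `F` be a finite field of characteristic `2` with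
`|F| = q ≥ 4`.  Every matrix `[[1, a], [0, b]]` (`a ∈ F`, `b ∈ Fˣ`) fixes
setwise some unordered pair of distinct points of the projective line
`ℙ(F²)`.  Consequently, the image `S̄` in `PGL(2, F)` of the subgroup
`{ [[1, a], [0, b]] : a ∈ F, b ∈ Fˣ }` is an intersecting subgroup for the
action of `PGL(2, F)` on `2`-element subsets of `ℙ(F²)`; moreover
`|S̄| = q(q - 1)` while the setwise stabilizer of `{[1:0], [0:1]}` in
`PGL(2, F)` has order `2(q - 1)`, so `|S̄| = (q/2)·|stabilizer|`. -/
theorem stmt8 (F : Type*) [Field F] [Fintype F] (hchar : ringChar F = 2)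
    (q : ℕ) (hq : Fintype.card F = q) (hq4 : 4 ≤ q)
    (S₀ : Subgroup (GL (Fin 2) F))
    (hS₀ : ∀ g : GL (Fin 2) F, g ∈ S₀ ↔
      ∃ (a : F) (b : Fˣ), (g : Matrix (Fin 2) (Fin 2) F) = !![1, a; 0, (b : F)]) :
    (∀ (g : GL (Fin 2) F) (a : F) (b : Fˣ),
        (g : Matrix (Fin 2) (Fin 2) F) = !![1, a; 0, (b : F)] →
        ∃ P Q : ℙ F (Fin 2 → F), P ≠ Q ∧
          glToPerm g • ({P, Q} : Set (ℙ F (Fin 2 → F))) = {P, Q}) ∧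
    Subgroup.map glToPerm S₀ ≤ (glToPerm (F := F)).range ∧
    (∀ x ∈ Subgroup.map glToPerm S₀, ∀ y ∈ Subgroup.map glToPerm S₀,
        ∃ P Q : ℙ F (Fin 2 → F), P ≠ Q ∧
          x • ({P, Q} : Set (ℙ F (Fin 2 → F))) =
            y • ({P, Q} : Set (ℙ F (Fin 2 → F)))) ∧
    Nat.card (Subgroup.map glToPerm S₀) = q * (q - 1) ∧
    Nat.card (MulAction.stabilizer (glToPerm (F := F)).range
        ({Projectivization.mk F ![1, 0] (fun h => one_ne_zero (congrFun h 0)),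
          Projectivization.mk F ![0, 1] (fun h => one_ne_zero (congrFun h 1))} :
            Set (ℙ F (Fin 2 → F)))) = 2 * (q - 1) ∧
    2 * Nat.card (Subgroup.map glToPerm S₀) =
      q * Nat.card (MulAction.stabilizer (glToPerm (F := F)).range
        ({Projectivization.mk F ![1, 0] (fun h => one_ne_zero (congrFun h 0)),
          Projectivization.mk F ![0, 1] (fun h => one_ne_zero (congrFun h 1))} :
            Set (ℙ F (Fin 2 → F)))) := by
  haveI : CharP F 2 := hchar ▸ ringChar.charP F
  have h2 : ∀ x : F, x + x = 0 := fun x => CharTwo.add_self_eq_zero x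
  have hcard4 : Nat.card (Subgroup.map (glToPerm (F := F)) S₀) = q * (q - 1) := by
    have hinj : Set.InjOn (glToPerm (F := F)) (S₀ : Set (GL (Fin 2) F)) := by
      intro g hg h hh heq
      have hmem : g * h⁻¹ ∈ S₀ := S₀.mul_mem hg (S₀.inv_mem hh)
      obtain ⟨a, b, hm⟩ := (hS₀ _).mp hmem
      have h1 : glToPerm (g * h⁻¹) = 1 := by
        rw [_root_.map_mul, _root_.map_inv, heq, mul_inv_cancel]
      have := ker_lemma _ a b hm h1
      rwa [mul_inv_eq_one] at this
    calc Nat.card (Subgroup.map (glToPerm (F := F)) S₀)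
        = Nat.card (glToPerm '' (S₀ : Set (GL (Fin 2) F)) : Set _) :=
          Nat.card_congr (Equiv.setCongr (Subgroup.coe_map _ _))
      _ = Nat.card (S₀ : Set (GL (Fin 2) F)) := Nat.card_image_of_injOn hinj
      _ = q * (q - 1) := by
          rw [← hq]
          exact card_S0 S₀ hS₀
  have hcard5 : Nat.card (MulAction.stabilizer (glToPerm (F := F)).range
      ({Projectivization.mk F ![1, 0] (fun h => one_ne_zero (congrFun h 0)),
        Projectivization.mk F ![0, 1] (fun h => one_ne_zero (congrFun h 1))} :
          Set (ℙ F (Fin 2 → F)))) = 2 * (q - 1) := by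
    rw [← hq]
    exact card_stab _ _
  refine ⟨fun g a b hg => fix_pair h2 g a b hg, ?_, ?_, hcard4, hcard5, ?_⟩
  · rintro x hx
    obtain ⟨g, -, rfl⟩ := hx
    exact ⟨g, rfl⟩
  · rintro x hx y hy
    obtain ⟨g, hgS, rfl⟩ := hx
    obtain ⟨h, hhS, rfl⟩ := hy
    have hk : h⁻¹ * g ∈ S₀ := S₀.mul_mem (S₀.inv_mem hhS) hgS
    obtain ⟨a, b, hm⟩ := (hS₀ _).mp hk
    obtain ⟨P, Q, hPQ, hfix⟩ := fix_pair h2 _ a b hm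
    refine ⟨P, Q, hPQ, ?_⟩
    have : g = h * (h⁻¹ * g) := by group
    rw [this, _root_.map_mul, mul_smul, hfix]
  · rw [hcard4, hcard5]
    ring
end

section
/- For every natural number M > 0 there exist a finite nonempty set Δ, a primitive transitive permutation group T ≤ Sym(Δ) which is a nonabelian simple group, a point α ∈ Δ, and an intersecting subgroup S ≤ T with |S| > M·|T_α|. (Such groups are obtained from PSL(2, 2^f) ≅ PGL(2, 2^f) acting on unordered pairs of projective points; hence ρ can be arbitrarily large for almost simple primitive groups.) -/
open Matrix Projectivization Pointwise
open scoped commutatorElement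
set_option linter.unusedSectionVars false

namespace Stmt9

variable {F : Type} [Field F]

abbrev G (F : Type) [Field F] := Matrix.SpecialLinearGroup (Fin 2) F
abbrev X (F : Type) [Field F] := Projectivization F (Fin 2 → F)

lemma vec_ext {v w : Fin 2 → F} (h0 : v 0 = w 0) (h1 : v 1 = w 1) : v = w := by
  funext i; fin_cases i <;> assumption

lemma vec_ne_zero {v : Fin 2 → F} (h : v ≠ 0) : v 0 ≠ 0 ∨ v 1 ≠ 0 := by
  by_contra hc
  push_neg at hc
  exact h (vec_ext hc.1 hc.2)

lemma mk_eq_mk_of {v w : Fin 2 → F} (hv : v ≠ 0) (hw : w ≠ 0) (c : F) (h : c • w = v) :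
    Projectivization.mk F v hv = Projectivization.mk F w hw :=
  (Projectivization.mk_eq_mk_iff' F v w hv hw).2 ⟨c, h⟩

lemma mulVec_e0 (M : Matrix (Fin 2) (Fin 2) F) (v : Fin 2 → F) :
    (M.mulVec v) 0 = M 0 0 * v 0 + M 0 1 * v 1 := by
  simp [Matrix.mulVec, dotProduct, Fin.sum_univ_two]

lemma mulVec_e1 (M : Matrix (Fin 2) (Fin 2) F) (v : Fin 2 → F) :
    (M.mulVec v) 1 = M 1 0 * v 0 + M 1 1 * v 1 := by
  simp [Matrix.mulVec, dotProduct, Fin.sum_univ_two]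

lemma mulVec_two (M : Matrix (Fin 2) (Fin 2) F) (v : Fin 2 → F) :
    M.mulVec v = ![M 0 0 * v 0 + M 0 1 * v 1, M 1 0 * v 0 + M 1 1 * v 1] := by
  funext i
  fin_cases i <;>
    simp [Matrix.mulVec, dotProduct, Fin.sum_univ_two]

lemma mulVec_inj (g : G F) : Function.Injective (g.val.mulVec) := by
  intro v w h
  have h2 : (g⁻¹).val.mulVec (g.val.mulVec v) = (g⁻¹).val.mulVec (g.val.mulVec w) := by rw [h]
  rwa [Matrix.mulVec_mulVec, Matrix.mulVec_mulVec, ← Matrix.SpecialLinearGroup.coe_mul,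
    inv_mul_cancel, Matrix.SpecialLinearGroup.coe_one, Matrix.one_mulVec,
    Matrix.one_mulVec] at h2

lemma mulVec_ne_zero (g : G F) {v : Fin 2 → F} (hv : v ≠ 0) : g.val.mulVec v ≠ 0 := by
  intro h
  exact hv (mulVec_inj g (h.trans (Matrix.mulVec_zero _).symm))

instance : MulAction (G F) (X F) where
  smul g x := Projectivization.map (Matrix.mulVecLin g.val) (by
    simpa [Matrix.coe_mulVecLin] using mulVec_inj g) x
  one_smul x := by
    induction x using Projectivization.ind with
    | h v hv =>
      show Projectivization.map _ _ _ = _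
      rw [Projectivization.map_mk]
      simp only [Matrix.mulVecLin_apply]
      congr 1
      simp [Matrix.one_mulVec]
  mul_smul a b x := by
    induction x using Projectivization.ind with
    | h v hv =>
      show Projectivization.map _ _ _ = Projectivization.map _ _ (Projectivization.map _ _ _)
      rw [Projectivization.map_mk, Projectivization.map_mk, Projectivization.map_mk]
      simp only [Matrix.mulVecLin_apply]
      congr 1
      rw [Matrix.mulVec_mulVec, ← Matrix.SpecialLinearGroup.coe_mul]

lemma smul_mk (g : G F) (v : Fin 2 → F) (hv : v ≠ 0) :
    g • Projectivization.mk F v hv = Projectivization.mk F (g.val.mulVec v) (mulVec_ne_zero g hv) := by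
  show Projectivization.map _ _ _ = _
  rw [Projectivization.map_mk]
  simp only [Matrix.mulVecLin_apply]

lemma mk_congr (v w : Fin 2 → F) (hv : v ≠ 0) (hw : w ≠ 0) (h : v = w) :
    Projectivization.mk F v hv = Projectivization.mk F w hw := by subst h; rfl

/-- The three standard points of the projective line. -/
def x₁ : X F := Projectivization.mk F ![1, 0] (by intro h; simpa using congrFun h 0)
def x₂ : X F := Projectivization.mk F ![0, 1] (by intro h; simpa using congrFun h 1)
def x₃ : X F := Projectivization.mk F ![1, 1] (by intro h; simpa using congrFun h 0)

lemma x12_ne : (x₁ : X F) ≠ x₂ := by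
  intro h
  rw [x₁, x₂, Projectivization.mk_eq_mk_iff] at h
  obtain ⟨a, ha⟩ := h
  have := congrFun ha 0
  simpa using this

lemma x13_ne : (x₁ : X F) ≠ x₃ := by
  intro h
  rw [x₁, x₃, Projectivization.mk_eq_mk_iff] at h
  obtain ⟨a, ha⟩ := h
  have h0 := congrFun ha 0
  have h1 := congrFun ha 1
  simp at h0 h1
  simp [h0] at h1

lemma x23_ne : (x₂ : X F) ≠ x₃ := by
  intro h
  rw [x₂, x₃, Projectivization.mk_eq_mk_iff] at h
  obtain ⟨a, ha⟩ := h
  have h0 := congrFun ha 0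
  simp [Units.smul_def] at h0

/-- Two nonzero vectors with vanishing "determinant" give the same projective point. -/
lemma mk_eq_of_det {v w : Fin 2 → F} (hv : v ≠ 0) (hw : w ≠ 0)
    (h : v 0 * w 1 - v 1 * w 0 = 0) :
    Projectivization.mk F v hv = Projectivization.mk F w hw := by
  rw [Projectivization.mk_eq_mk_iff']
  rcases vec_ne_zero hw with h0 | h1
  · refine ⟨v 0 / w 0, ?_⟩
    funext i
    fin_cases i
    · simp [div_mul_cancel₀, h0]
    · show v 0 / w 0 * w 1 = v 1
      field_simp
      linear_combination h
  · refine ⟨v 1 / w 1, ?_⟩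
    funext i
    fin_cases i
    · show v 1 / w 1 * w 0 = v 0
      field_simp
      linear_combination -h
    · simp [div_mul_cancel₀, h1]

lemma det_ne_of_ne {v w : Fin 2 → F} (hv : v ≠ 0) (hw : w ≠ 0)
    (h : Projectivization.mk F v hv ≠ Projectivization.mk F w hw) :
    v 0 * w 1 - v 1 * w 0 ≠ 0 :=
  fun hd => h (mk_eq_of_det hv hw hd)

section Trans
variable {F : Type} [Field F]

/-- 2-transitivity: map the standard points x₁, x₂ to any two distinct points. -/
lemma exists_smul_two {a b : X F} (hab : a ≠ b) :
    ∃ g : G F, g • (x₁ : X F) = a ∧ g • (x₂ : X F) = b := by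
  induction a using Projectivization.ind with | h v hv =>
  induction b using Projectivization.ind with | h w hw =>
  have hd : v 0 * w 1 - v 1 * w 0 ≠ 0 := det_ne_of_ne hv hw hab
  set d := v 0 * w 1 - v 1 * w 0 with hd_def
  refine ⟨⟨!![v 0, w 0 / d; v 1, w 1 / d], by
    rw [Matrix.det_fin_two_of]; field_simp; ring⟩, ?_, ?_⟩
  · rw [x₁]; refine (smul_mk _ _ _).trans ?_
    refine mk_eq_mk_of _ _ 1 (vec_ext ?_ ?_) <;>
      simp [mulVec_e0, mulVec_e1]
  · rw [x₂]; refine (smul_mk _ _ _).trans ?_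
    refine mk_eq_mk_of _ _ d⁻¹ (vec_ext ?_ ?_) <;>
    · simp [mulVec_e0, mulVec_e1]
      field_simp

lemma smul_smul_eq {g : G F} {a b : X F} (h : g • a = b) : g⁻¹ • b = a := by
  rw [← h, inv_smul_smul]

/-- Move any two distinct points to any two distinct points. -/
lemma exists_two_maps {a b a' b' : X F} (hab : a ≠ b) (hab' : a' ≠ b') :
    ∃ g : G F, g • a = a' ∧ g • b = b' := by
  obtain ⟨g₁, h11, h12⟩ := exists_smul_two hab
  obtain ⟨g₂, h21, h22⟩ := exists_smul_two hab'
  refine ⟨g₂ * g₁⁻¹, ?_, ?_⟩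
  · rw [mul_smul, smul_smul_eq h11, h21]
  · rw [mul_smul, smul_smul_eq h12, h22]

end Trans

section CharTwo
variable {F : Type} [Field F] (h2 : (2 : F) = 0)
include h2

lemma sq_eq_one (a : F) (h : a * a = 1) : a = 1 := by
  have : (a - 1) * (a - 1) = 0 := by linear_combination h + (1 - a) * h2
  have h1 : a - 1 = 0 := by
    rcases mul_eq_zero.1 this with h' | h' <;> exact h'
  have := sub_eq_zero.mp h1
  exact this

lemma sq_surj [Fintype F] (t : F) : ∃ s : F, s * s = t := by
  have hinj : Function.Injective (fun s : F => s * s) := by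
    intro a b hab
    simp only at hab
    have : (a - b) * (a - b) = 0 := by linear_combination hab + (b * b - a * b) * h2
    have h1 : a - b = 0 := by
      rcases mul_eq_zero.1 this with h' | h' <;> exact h'
    exact sub_eq_zero.mp h1
  have hsurj := Finite.injective_iff_surjective.mp hinj
  exact hsurj t

end CharTwo

section Trans2
variable {F : Type} [Field F] [Fintype F] (h2 : (2 : F) = 0)

/-- 3-transitivity: map the standard points to any three distinct points. -/
lemma exists_smul_three (h2 : (2 : F) = 0) {a b c : X F} (hab : a ≠ b) (hac : a ≠ c) (hbc : b ≠ c) :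
    ∃ g : G F, g • (x₁ : X F) = a ∧ g • (x₂ : X F) = b ∧ g • (x₃ : X F) = c := by
  induction a using Projectivization.ind with | h v hv =>
  induction b using Projectivization.ind with | h w hw =>
  induction c using Projectivization.ind with | h u hu =>
  have hd : v 0 * w 1 - v 1 * w 0 ≠ 0 := det_ne_of_ne hv hw hab
  set d := v 0 * w 1 - v 1 * w 0 with hd_def
  set xx := (u 0 * w 1 - u 1 * w 0) / d with hx_def
  set yy := (v 0 * u 1 - v 1 * u 0) / d with hy_def
  have hxx : xx ≠ 0 := by
    intro h
    rw [hx_def, div_eq_zero_iff] at h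
    rcases h with h | h
    · exact hbc (mk_eq_of_det hw hu (by linear_combination -h))
    · exact hd h
  have hyy : yy ≠ 0 := by
    intro h
    rw [hy_def, div_eq_zero_iff] at h
    rcases h with h | h
    · exact hac (mk_eq_of_det hv hu h)
    · exact hd h
  have hu0 : xx * v 0 + yy * w 0 = u 0 := by
    rw [hx_def, hy_def]; field_simp; ring
  have hu1 : xx * v 1 + yy * w 1 = u 1 := by
    rw [hx_def, hy_def]; field_simp; ring
  obtain ⟨s, hs⟩ := sq_surj h2 (xx * yy * d)⁻¹
  have hxyd : xx * yy * d ≠ 0 := by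
    exact mul_ne_zero (mul_ne_zero hxx hyy) hd
  have hss : s * s ≠ 0 := by rw [hs]; exact inv_ne_zero hxyd
  have hsne : s ≠ 0 := fun h => hss (by rw [h, mul_zero])
  refine ⟨⟨!![s * xx * v 0, s * yy * w 0; s * xx * v 1, s * yy * w 1], ?_⟩, ?_, ?_, ?_⟩
  · rw [Matrix.det_fin_two_of]
    have : s * xx * v 0 * (s * yy * w 1) - s * yy * w 0 * (s * xx * v 1)
        = (s * s) * (xx * yy * d) := by rw [hd_def]; ring
    rw [this, hs, inv_mul_cancel₀ hxyd]
  · rw [x₁]; refine (smul_mk _ _ _).trans ?_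
    refine mk_eq_mk_of _ _ (s * xx) (vec_ext ?_ ?_) <;>
      simp [mulVec_e0, mulVec_e1]
  · rw [x₂]; refine (smul_mk _ _ _).trans ?_
    refine mk_eq_mk_of _ _ (s * yy) (vec_ext ?_ ?_) <;>
      simp [mulVec_e0, mulVec_e1]
  · rw [x₃]; refine (smul_mk _ _ _).trans ?_
    refine mk_eq_mk_of _ _ s (vec_ext ?_ ?_) <;>
      simp only [mulVec_e0, mulVec_e1, Pi.smul_apply, smul_eq_mul] <;>
      simp <;> [skip; skip] <;> first
        | (calc s * u 0 = s * (xx * v 0 + yy * w 0) := by rw [hu0]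
            _ = s * xx * v 0 + s * yy * w 0 := by ring)
        | (calc s * u 1 = s * (xx * v 1 + yy * w 1) := by rw [hu1]
            _ = s * xx * v 1 + s * yy * w 1 := by ring)

/-- Move any three distinct points to any three distinct points. -/
lemma exists_three_maps (h2 : (2 : F) = 0) {a b c a' b' c' : X F} (hab : a ≠ b) (hac : a ≠ c)
    (hbc : b ≠ c) (hab' : a' ≠ b') (hac' : a' ≠ c') (hbc' : b' ≠ c') :
    ∃ g : G F, g • a = a' ∧ g • b = b' ∧ g • c = c' := by
  obtain ⟨g₁, h11, h12, h13⟩ := exists_smul_three h2 hab hac hbc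
  obtain ⟨g₂, h21, h22, h23⟩ := exists_smul_three h2 hab' hac' hbc'
  exact ⟨g₂ * g₁⁻¹, by rw [mul_smul, smul_smul_eq h11, h21],
    by rw [mul_smul, smul_smul_eq h12, h22],
    by rw [mul_smul, smul_smul_eq h13, h23]⟩

end Trans2

section Stab
variable {F : Type} [Field F]

lemma fix_x1 {g : G F} (h : g • (x₁ : X F) = x₁) : g.val 1 0 = 0 := by
  rw [x₁, smul_mk, Projectivization.mk_eq_mk_iff] at h
  obtain ⟨t, ht⟩ := h
  have h1 := congrFun ht 1
  simp [mulVec_e1, Units.smul_def] at h1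
  exact h1.symm

lemma fix_x2 {g : G F} (h : g • (x₂ : X F) = x₂) : g.val 0 1 = 0 := by
  rw [x₂, smul_mk, Projectivization.mk_eq_mk_iff] at h
  obtain ⟨t, ht⟩ := h
  have h0 := congrFun ht 0
  simp [mulVec_e0, Units.smul_def] at h0
  exact h0.symm

lemma x1_to_x2 {g : G F} (h : g • (x₁ : X F) = x₂) : g.val 0 0 = 0 := by
  rw [x₁, x₂, smul_mk, Projectivization.mk_eq_mk_iff] at h
  obtain ⟨t, ht⟩ := h
  have h0 := congrFun ht 0
  simp [mulVec_e0, Units.smul_def] at h0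
  exact h0.symm

lemma x2_to_x1 {g : G F} (h : g • (x₂ : X F) = x₁) : g.val 1 1 = 0 := by
  rw [x₁, x₂, smul_mk, Projectivization.mk_eq_mk_iff] at h
  obtain ⟨t, ht⟩ := h
  have h1 := congrFun ht 1
  simp [mulVec_e1, Units.smul_def] at h1
  exact h1.symm

lemma diag_det {g : G F} (h10 : g.val 1 0 = 0) : g.val 0 0 * g.val 1 1 = 1 := by
  have hdet := g.2
  rw [Matrix.det_fin_two] at hdet
  rw [h10, mul_zero, sub_zero] at hdet
  exact hdet

/-- An element fixing the three standard points is the identity (char 2). -/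
lemma stab_std (h2 : (2 : F) = 0) {g : G F} (f1 : g • (x₁ : X F) = x₁) (f2 : g • (x₂ : X F) = x₂)
    (f3 : g • (x₃ : X F) = x₃) : g = 1 := by
  have h10 := fix_x1 f1
  have h01 := fix_x2 f2
  rw [x₃, smul_mk, Projectivization.mk_eq_mk_iff] at f3
  obtain ⟨t, ht⟩ := f3
  have e0 := congrFun ht 0
  have e1 := congrFun ht 1
  simp [mulVec_e0, mulVec_e1, Units.smul_def, h10, h01] at e0 e1
  -- e0 : ↑t = g00 ; e1 : ↑t = g11
  have hdet := diag_det (g := g) h10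
  rw [← e0, ← e1] at hdet
  have ht1 : (t : F) = 1 := sq_eq_one h2 _ hdet
  apply Subtype.ext
  rw [Matrix.eta_fin_two g.val, h10, h01, ← e0, ← e1, ht1]
  simp [Matrix.SpecialLinearGroup.coe_one, Matrix.one_fin_two]

/-- An element fixing three distinct points is the identity. -/
lemma stab_three [Fintype F] (h2 : (2 : F) = 0) {g : G F} {a b c : X F} (hab : a ≠ b)
    (hac : a ≠ c) (hbc : b ≠ c) (fa : g • a = a) (fb : g • b = b) (fc : g • c = c) : g = 1 := by
  obtain ⟨k, hk1, hk2, hk3⟩ := exists_smul_three h2 hab hac hbc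
  have m1 : (k⁻¹ * g * k) • (x₁ : X F) = x₁ := by
    rw [mul_smul, mul_smul, hk1, fa, smul_smul_eq hk1]
  have m2 : (k⁻¹ * g * k) • (x₂ : X F) = x₂ := by
    rw [mul_smul, mul_smul, hk2, fb, smul_smul_eq hk2]
  have m3 : (k⁻¹ * g * k) • (x₃ : X F) = x₃ := by
    rw [mul_smul, mul_smul, hk3, fc, smul_smul_eq hk3]
  have := stab_std h2 m1 m2 m3
  have : g * k = k := by
    have h' : k * (k⁻¹ * g * k) = k * 1 := by rw [this]
    rwa [← mul_assoc, ← mul_assoc, mul_inv_cancel, one_mul, mul_one] at h'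
  exact mul_right_cancel (this.trans (one_mul k).symm)

/-- A nontrivial element fixing two distinct points is not an involution (char 2). -/
lemma not_invol_of_fix_two [Fintype F] (h2 : (2 : F) = 0) {g : G F} {a b : X F} (hab : a ≠ b)
    (fa : g • a = a) (fb : g • b = b) (hg : g ≠ 1) : g * g ≠ 1 := by
  intro hsq
  obtain ⟨k, hk1, hk2⟩ := exists_smul_two hab
  set m := k⁻¹ * g * k with hm
  have m1 : m • (x₁ : X F) = x₁ := by
    rw [hm, mul_smul, mul_smul, hk1, fa, smul_smul_eq hk1]
  have m2 : m • (x₂ : X F) = x₂ := by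
    rw [hm, mul_smul, mul_smul, hk2, fb, smul_smul_eq hk2]
  have h10 := fix_x1 m1
  have h01 := fix_x2 m2
  have hdet := diag_det (g := m) h10
  have hmsq : m * m = 1 := by
    rw [hm]
    calc k⁻¹ * g * k * (k⁻¹ * g * k) = k⁻¹ * (g * g) * k := by group
    _ = 1 := by rw [hsq]; group
  have e00 : (m * m).val 0 0 = m.val 0 0 * m.val 0 0 := by
    rw [Matrix.SpecialLinearGroup.coe_mul]
    rw [Matrix.eta_fin_two m.val, h10, h01]
    rw [Matrix.eta_fin_two m.val, h10, h01] -- might be needed twice?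
    simp [Matrix.mul_fin_two]
  have h00 : m.val 0 0 * m.val 0 0 = 1 := by
    rw [← e00, hmsq]
    simp
  have h001 : m.val 0 0 = 1 := sq_eq_one h2 _ h00
  have h111 : m.val 1 1 = 1 := by
    have := hdet
    rw [h001, one_mul] at this
    exact this
  have hmone : m = 1 := by
    apply Subtype.ext
    rw [Matrix.eta_fin_two m.val, h10, h01, h001, h111]
    simp [Matrix.SpecialLinearGroup.coe_one, Matrix.one_fin_two]
  apply hg
  have : g * k = k := by
    have h' : k * m = k * 1 := by rw [hmone]
    rwa [hm, ← mul_assoc, ← mul_assoc, mul_inv_cancel, one_mul, mul_one] at h'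
  exact mul_right_cancel (this.trans (one_mul k).symm)

end Stab
section Pairs
variable {F : Type} [Field F]

abbrev Δ (F : Type) [Field F] := {p : Sym2 (X F) // ¬ p.IsDiag}

/-- The unordered pair of two distinct points. -/
def pr (a b : X F) (h : a ≠ b) : Δ F := ⟨s(a, b), by simpa using h⟩

instance : MulAction (G F) (Δ F) where
  smul g p := ⟨Sym2.map (g • ·) p.1, by
    obtain ⟨z, hz⟩ := p
    induction z using Sym2.ind with
    | _ a b =>
      simp only [Sym2.map_pair_eq, Sym2.mk_isDiag_iff] at *
      intro h
      exact hz (smul_left_cancel_iff g |>.mp h)⟩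
  one_smul p := by
    apply Subtype.ext
    obtain ⟨z, hz⟩ := p
    show Sym2.map _ _ = _
    induction z using Sym2.ind with
    | _ a b => simp [Sym2.map_pair_eq]
  mul_smul g₁ g₂ p := by
    apply Subtype.ext
    obtain ⟨z, hz⟩ := p
    show Sym2.map _ _ = Sym2.map _ (Sym2.map _ _)
    induction z using Sym2.ind with
    | _ a b => simp [Sym2.map_pair_eq, mul_smul]

instance finX {F : Type} [Field F] [Finite F] : Finite (X F) := Quotient.finite _

instance finDelta {F : Type} [Field F] [Finite F] : Finite (Δ F) := by
  haveI : Finite (Sym2 (X F)) :=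
    Finite.of_surjective (fun p : X F × X F => s(p.1, p.2))
      (fun z => Sym2.ind (fun x y => ⟨(x, y), rfl⟩) z)
  exact Subtype.finite

lemma smul_ne (g : G F) {a b : X F} (h : a ≠ b) : g • a ≠ g • b :=
  fun e => h (smul_left_cancel_iff g |>.mp e)

lemma pr_smul (g : G F) (a b : X F) (h : a ≠ b) :
    g • pr a b h = pr (g • a) (g • b) (smul_ne g h) := by
  apply Subtype.ext
  show Sym2.map (g • ·) s(a, b) = s(g • a, g • b)
  rw [Sym2.map_pair_eq]

lemma pr_congr {a b c d : X F} (h : a ≠ b) (h' : c ≠ d) (hac : a = c) (hbd : b = d) :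
    pr a b h = pr c d h' := by subst hac; subst hbd; rfl

lemma pr_comm (a b : X F) (h : a ≠ b) : pr a b h = pr b a h.symm := by
  apply Subtype.ext
  show s(a, b) = s(b, a)
  exact Sym2.eq_swap

lemma pr_eq_iff {a b c d : X F} (h : a ≠ b) (h' : c ≠ d) :
    pr a b h = pr c d h' ↔ (a = c ∧ b = d) ∨ (a = d ∧ b = c) := by
  rw [Subtype.ext_iff]
  exact Sym2.eq_iff

lemma delta_cases (δ : Δ F) : ∃ (a b : X F) (h : a ≠ b), δ = pr a b h := by
  obtain ⟨z, hz⟩ := δ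
  induction z using Sym2.ind with
  | _ a b =>
    have hab : a ≠ b := by simpa using hz
    exact ⟨a, b, hab, rfl⟩

lemma delta_trans (δ δ' : Δ F) : ∃ g : G F, g • δ = δ' := by
  obtain ⟨a, b, hab, rfl⟩ := delta_cases δ
  obtain ⟨c, d, hcd, rfl⟩ := delta_cases δ'
  obtain ⟨g, hg1, hg2⟩ := exists_two_maps hab hcd
  exact ⟨g, by rw [pr_smul]; exact pr_congr _ _ hg1 hg2⟩

end Pairs

section Prim
variable {F : Type} [Field F] [Fintype F]

/-- Case 1 of the primitivity argument: a "block-like" set containing two pairs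
sharing a point contains everything. -/
lemma case_one (h2 : (2 : F) = 0) (B : Set (Δ F))
    (hmem : ∀ (g : G F) (δ δ' : Δ F), δ ∈ B → g • δ ∈ B → δ' ∈ B → g • δ' ∈ B)
    {a b c : X F} (hab : a ≠ b) (hac : a ≠ c) (hbc : b ≠ c)
    (hB1 : pr a b hab ∈ B) (hB2 : pr a c hac ∈ B) : ∀ δ : Δ F, δ ∈ B := by
  have claim1 : ∀ (x : X F) (hx : a ≠ x), pr a x hx ∈ B := by
    intro x hx
    by_cases hxb : x = b
    · subst hxb; exact hB1
    · have hbx : b ≠ x := fun e => hxb e.symm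
      obtain ⟨g, hg1, hg2, hg3⟩ := exists_three_maps h2 hab hac hbc hab hx hbx
      have hfix : g • pr a b hab = pr a b hab := by
        rw [pr_smul]; exact pr_congr _ _ hg1 hg2
      have := hmem g (pr a b hab) (pr a c hac) hB1 (by rw [hfix]; exact hB1) hB2
      rw [pr_smul] at this
      rwa [pr_congr (smul_ne g hac) hx hg1 hg3] at this
  have claim2 : ∀ (x y : X F) (hx : a ≠ x) (hy : a ≠ y) (hxy : x ≠ y), pr x y hxy ∈ B := by
    intro x y hx hy hxy
    have p1 := claim1 x hx
    have p2 := claim1 y hy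
    obtain ⟨g, hg1, hg2, hg3⟩ :=
      exists_three_maps h2 hx hy hxy (Ne.symm hxy) (Ne.symm hy) (Ne.symm hx)
    -- g : a ↦ y, x ↦ x, y ↦ a
    have hfix : g • pr a y hy = pr a y hy := by
      rw [pr_smul, pr_congr (smul_ne g hy) (Ne.symm hy) hg1 hg3, ← pr_comm a y hy]
    have := hmem g (pr a y hy) (pr a x hx) p2 (by rw [hfix]; exact p2) p1
    rw [pr_smul, pr_congr (smul_ne g hx) (Ne.symm hxy) hg1 hg2, ← pr_comm x y hxy] at this
    exact this
  intro δ
  obtain ⟨x, y, hxy, rfl⟩ := delta_cases δ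
  by_cases hxa : x = a
  · subst hxa; exact claim1 y hxy
  by_cases hya : y = a
  · rw [pr_comm x y hxy]
    have hax : a ≠ x := fun e => hxa e.symm
    rw [pr_congr (Ne.symm hxy) hax hya rfl]
    exact claim1 x hax
  · exact claim2 x y (fun e => hxa e.symm) (fun e => hya e.symm) hxy

/-- Any "block-like" set containing two distinct pairs contains everything. -/
lemma block_univ (h2 : (2 : F) = 0) (B : Set (Δ F))
    (hmem : ∀ (g : G F) (δ δ' : Δ F), δ ∈ B → g • δ ∈ B → δ' ∈ B → g • δ' ∈ B)
    {δ₁ δ₂ : Δ F} (h1 : δ₁ ∈ B) (h2' : δ₂ ∈ B) (hne : δ₁ ≠ δ₂) : ∀ δ : Δ F, δ ∈ B := by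
  obtain ⟨a, b, hab, rfl⟩ := delta_cases δ₁
  obtain ⟨c, d, hcd, rfl⟩ := delta_cases δ₂
  rw [Ne, pr_eq_iff] at hne
  push_neg at hne
  obtain ⟨hne1, hne2⟩ := hne
  by_cases hac : a = c
  · subst hac
    exact case_one h2 B hmem hab hcd (hne1 rfl) h1 h2'
  by_cases had : a = d
  · subst had
    rw [pr_comm c a hcd] at h2'
    exact case_one h2 B hmem hab (Ne.symm hcd) (hne2 rfl) h1 h2'
  by_cases hbc : b = c
  · subst hbc
    rw [pr_comm a b hab] at h1
    have had' : a ≠ d := had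
    exact case_one h2 B hmem (Ne.symm hab) hcd had' h1 h2'
  by_cases hbd : b = d
  · subst hbd
    rw [pr_comm a b hab] at h1
    rw [pr_comm c b hcd] at h2'
    exact case_one h2 B hmem (Ne.symm hab) (Ne.symm hcd) (fun e => hne1 e rfl) h1 h2'
  -- disjoint case
  · obtain ⟨h, hh1, hh2, hh3⟩ := exists_three_maps h2 hab hac hbc (Ne.symm hab) hbc hac
    -- h : a ↦ b, b ↦ a, c ↦ c
    have hfix : h • pr a b hab = pr a b hab := by
      rw [pr_smul, pr_congr (smul_ne h hab) (Ne.symm hab) hh1 hh2, ← pr_comm a b hab]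
    have hcd' : h • pr c d hcd ∈ B :=
      hmem h (pr a b hab) (pr c d hcd) h1 (by rw [hfix]; exact h1) h2'
    have hchd : c ≠ h • d := by
      rw [← hh3]; exact smul_ne h hcd
    rw [pr_smul, pr_congr (smul_ne h hcd) hchd hh3 rfl] at hcd'
    by_cases hfd : h • d = d
    · exfalso
      have hne1' : h ≠ 1 := by
        intro e
        rw [e, one_smul] at hh1
        exact hab hh1
      have hsq : h * h = 1 := by
        refine stab_three h2 hab hac hbc ?_ ?_ ?_
        · rw [mul_smul, hh1, hh2]
        · rw [mul_smul, hh2, hh1]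
        · rw [mul_smul, hh3, hh3]
      exact not_invol_of_fix_two h2 hcd hh3 hfd hne1' hsq
    · exact case_one h2 B hmem hcd hchd (fun e => hfd e.symm) h2' hcd'

/-- Key primitivity statement: a subgroup containing the stabilizer of a pair and
moving that pair must be everything. -/
lemma prim_key (h2 : (2 : F) = 0) (δ₀ : Δ F) (K : Subgroup (G F))
    (hstab : ∀ g : G F, g • δ₀ = δ₀ → g ∈ K)
    (hne : ∃ k ∈ K, k • δ₀ ≠ δ₀) : ∀ g : G F, g ∈ K := by
  set B : Set (Δ F) := {δ | ∃ k ∈ K, k • δ₀ = δ} with hB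
  have hB0 : δ₀ ∈ B := ⟨1, K.one_mem, one_smul _ _⟩
  have hmemK : ∀ (g : G F) (δ : Δ F), δ ∈ B → g • δ ∈ B → g ∈ K := by
    rintro g δ ⟨k₁, hk₁, rfl⟩ ⟨k₂, hk₂, hk₂'⟩
    have hst : (k₂⁻¹ * (g * k₁)) • δ₀ = δ₀ := by
      rw [mul_smul, mul_smul, ← hk₂', inv_smul_smul]
    have := hstab _ hst
    have hgk : g * k₁ ∈ K := by
      have := K.mul_mem hk₂ this
      rwa [← mul_assoc, mul_inv_cancel, one_mul] at this
    have := K.mul_mem hgk (K.inv_mem hk₁)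
    rwa [mul_assoc, mul_inv_cancel, mul_one] at this
  have hmem : ∀ (g : G F) (δ δ' : Δ F), δ ∈ B → g • δ ∈ B → δ' ∈ B → g • δ' ∈ B := by
    rintro g δ δ' hδ hgδ ⟨k₃, hk₃, rfl⟩
    have hgK := hmemK g δ hδ hgδ
    exact ⟨g * k₃, K.mul_mem hgK hk₃, mul_smul g k₃ δ₀⟩
  obtain ⟨k, hk, hkne⟩ := hne
  have hBk : k • δ₀ ∈ B := ⟨k, hk, rfl⟩
  have hall : ∀ δ : Δ F, δ ∈ B := block_univ h2 B hmem hB0 hBk (fun e => hkne e.symm)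
  intro g
  obtain ⟨k', hk', hk''⟩ := hall (g • δ₀)
  have hst : (g⁻¹ * k') • δ₀ = δ₀ := by
    rw [mul_smul, hk'', inv_smul_smul]
  have := hstab _ hst
  have := K.mul_mem hk' (K.inv_mem this)
  rwa [_root_.mul_inv_rev, inv_inv, ← mul_assoc, mul_inv_cancel, one_mul] at this

end Prim
section Elem
variable {F : Type} [Field F]

lemma mat2_ext {a b c d a' b' c' d' : F} (h00 : a = a') (h01 : b = b') (h10 : c = c')
    (h11 : d = d') : (!![a, b; c, d] : Matrix (Fin 2) (Fin 2) F) = !![a', b'; c', d'] := by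
  subst h00; subst h01; subst h10; subst h11; rfl

def uu (b : F) : G F := ⟨!![1, b; 0, 1], by simp [Matrix.det_fin_two_of]⟩
def ll (c : F) : G F := ⟨!![1, 0; c, 1], by simp [Matrix.det_fin_two_of]⟩
def ww : G F := ⟨!![0, -1; 1, 0], by simp [Matrix.det_fin_two_of]⟩
def dd (a : F) (ha : a ≠ 0) : G F := ⟨!![a, 0; 0, a⁻¹], by simp [Matrix.det_fin_two_of, ha]⟩

lemma uu_add (b c : F) : uu b * uu c = uu (b + c) := by
  apply Subtype.ext
  rw [Matrix.SpecialLinearGroup.coe_mul]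
  show (!![1, b; 0, 1] : Matrix (Fin 2) (Fin 2) F) * !![1, c; 0, 1] = _
  rw [Matrix.mul_fin_two]
  show _ = (!![1, b + c; 0, 1] : Matrix (Fin 2) (Fin 2) F)
  apply mat2_ext <;> ring

lemma uu_zero : (uu 0 : G F) = 1 := by
  apply Subtype.ext
  show (!![1, (0:F); 0, 1]) = _
  rw [Matrix.SpecialLinearGroup.coe_one, Matrix.one_fin_two]

lemma uu_inv (b : F) : (uu b)⁻¹ = uu (-b) := by
  apply inv_eq_of_mul_eq_one_right
  rw [uu_add, add_neg_cancel, uu_zero]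

lemma uu_comm (b c : F) : uu b * uu c = uu c * uu b := by
  rw [uu_add, uu_add, add_comm]

/-- Conjugation of `uu` by an upper triangular matrix. -/
lemma upper_conj (aa bb b : F) (ha : aa ≠ 0) (g : G F)
    (hg : g = ⟨!![aa, bb; 0, aa⁻¹], by simp [Matrix.det_fin_two_of, ha]⟩) :
    g * uu b * g⁻¹ = uu (aa * aa * b) := by
  have key : g * uu b = uu (aa * aa * b) * g := by
    apply Subtype.ext
    rw [Matrix.SpecialLinearGroup.coe_mul, Matrix.SpecialLinearGroup.coe_mul, hg]
    show (!![aa, bb; 0, aa⁻¹] : Matrix (Fin 2) (Fin 2) F) * !![1, b; 0, 1]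
        = !![1, aa * aa * b; 0, 1] * !![aa, bb; 0, aa⁻¹]
    rw [Matrix.mul_fin_two, Matrix.mul_fin_two]
    apply mat2_ext <;> field_simp <;> ring
  calc g * uu b * g⁻¹ = uu (aa * aa * b) * g * g⁻¹ := by rw [key]
  _ = uu (aa * aa * b) := by rw [mul_assoc, mul_inv_cancel, mul_one]

lemma ww_conj (b : F) : ww * uu (-b) * ww⁻¹ = ll b := by
  have key : ww * uu (-b) = ll b * ww := by
    apply Subtype.ext
    rw [Matrix.SpecialLinearGroup.coe_mul, Matrix.SpecialLinearGroup.coe_mul]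
    show (!![0, -1; 1, 0] : Matrix (Fin 2) (Fin 2) F) * !![1, -b; 0, 1]
        = !![1, 0; b, 1] * !![0, -1; 1, 0]
    rw [Matrix.mul_fin_two, Matrix.mul_fin_two]
    apply mat2_ext <;> ring
  calc ww * uu (-b) * ww⁻¹ = ll b * ww * ww⁻¹ := by rw [key]
  _ = ll b := by rw [mul_assoc, mul_inv_cancel, mul_one]

/-- A subgroup containing all elementary matrices is everything. -/
lemma gen_elem (H : Subgroup (G F)) (hu : ∀ b, uu b ∈ H) (hl : ∀ c, ll c ∈ H) :
    ∀ A : G F, A ∈ H := by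
  have main : ∀ A : G F, A.val 1 0 ≠ 0 → A ∈ H := by
    intro A
    induction A using Matrix.SpecialLinearGroup.fin_two_induction with
    | _ a b c d hdet =>
      intro hc
      have hc' : c ≠ 0 := by simpa using hc
      have key : (⟨!![a, b; c, d], by rwa [Matrix.det_fin_two_of]⟩ : G F)
          = uu ((a - 1) / c) * ll c * uu ((d - 1) / c) := by
        apply Subtype.ext
        rw [Matrix.SpecialLinearGroup.coe_mul, Matrix.SpecialLinearGroup.coe_mul]
        show (!![a, b; c, d] : Matrix (Fin 2) (Fin 2) F)
            = !![1, (a-1)/c; 0, 1] * !![1, 0; c, 1] * !![1, (d-1)/c; 0, 1]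
        rw [Matrix.mul_fin_two, Matrix.mul_fin_two]
        apply mat2_ext <;> field_simp <;>
          first
            | ring1
            | linear_combination hdet
            | linear_combination -hdet
            | linear_combination c * hdet
            | linear_combination -c * hdet
            | linear_combination hdet * c
            | linear_combination b * hdet
      rw [key]
      exact H.mul_mem (H.mul_mem (hu _) (hl _)) (hu _)
  intro A
  by_cases hc : A.val 1 0 ≠ 0
  · exact main A hc
  · push_neg at hc
    have h11 : (A * ll 1).val 1 0 = A.val 1 1 := by
      rw [Matrix.SpecialLinearGroup.coe_mul]
      show (A.val * (!![1, 0; 1, 1] : Matrix (Fin 2) (Fin 2) F)) 1 0 = _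
      rw [Matrix.mul_apply, Fin.sum_univ_two]
      simp [hc]
    have hd : A.val 1 1 ≠ 0 := by
      intro h
      have hdet := A.2
      rw [Matrix.det_fin_two, hc, h] at hdet
      simp at hdet
    have : A * ll 1 ∈ H := main _ (by rw [h11]; exact hd)
    have h2 := H.mul_mem this (H.inv_mem (hl 1))
    rwa [mul_assoc, mul_inv_cancel, mul_one] at h2

/-- `G` is perfect (needs an element with `a² ≠ 1`). -/
lemma perfect_G (ha : ∃ a : F, a ≠ 0 ∧ a * a ≠ 1) : commutator (G F) = ⊤ := by
  obtain ⟨a, ha0, ha1⟩ := ha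
  have key : ∀ b : F, uu b ∈ commutator (G F) := by
    intro b
    have hsub : a * a - 1 ≠ 0 := sub_ne_zero.mpr ha1
    have expr : uu b = ⁅dd a ha0, uu (b / (a * a - 1))⁆ := by
      rw [commutatorElement_def]
      rw [upper_conj a 0 (b / (a * a - 1)) ha0 (dd a ha0) rfl]
      rw [uu_inv, uu_add]
      congr 1
      field_simp
      have hsub2 : -1 + a ^ 2 ≠ 0 := by intro h; apply hsub; linear_combination h
      have hx : (-1 + a ^ 2) * (-1 + a ^ 2)⁻¹ = 1 := mul_inv_cancel₀ hsub2
      linear_combination -b * hx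
    rw [expr]
    exact Subgroup.commutator_mem_commutator (Subgroup.mem_top _) (Subgroup.mem_top _)
  have keyl : ∀ c : F, ll c ∈ commutator (G F) := by
    intro c
    rw [← ww_conj]
    exact Subgroup.Normal.conj_mem (Subgroup.commutator_normal ⊤ ⊤) _ (key _) _
  rw [eq_top_iff]
  intro A _
  exact gen_elem _ key keyl A

end Elem
section Simple
variable {F : Type} [Field F] [Fintype F]

lemma uu_ne_one : (uu (1 : F)) ≠ 1 := by
  intro h
  have := congr_fun (congr_fun (congr_arg Subtype.val h) 0) 1
  simp [uu, Matrix.SpecialLinearGroup.coe_one, Matrix.one_fin_two] at this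

lemma nontrivial_G : Nontrivial (G F) := ⟨⟨uu 1, 1, uu_ne_one⟩⟩

lemma point_trans (x : X F) : ∃ g : G F, g • (x₁ : X F) = x := by
  by_cases h : x = x₁
  · exact ⟨1, by rw [one_smul, h]⟩
  · obtain ⟨g, hg1, _⟩ := exists_two_maps (x12_ne (F := F)) (h : x ≠ x₁)
    exact ⟨g, hg1⟩

lemma stab_x1_max (K : Subgroup (G F)) (hK : MulAction.stabilizer (G F) (x₁ : X F) ≤ K)
    (hne : ∃ k ∈ K, k • (x₁ : X F) ≠ x₁) : ∀ g : G F, g ∈ K := by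
  obtain ⟨k, hkK, hk⟩ := hne
  intro g
  by_cases hg : g • (x₁ : X F) = x₁
  · exact hK (MulAction.mem_stabilizer_iff.mpr hg)
  · obtain ⟨h, hh1, hh2⟩ := exists_two_maps (a := (x₁ : X F)) (b := k • x₁)
      (a' := (x₁ : X F)) (b' := g • x₁) (fun e => hk e.symm) (fun e => hg e.symm)
    have hhK : h ∈ K := hK (MulAction.mem_stabilizer_iff.mpr hh1)
    have hst : ((h * k)⁻¹ * g) • (x₁ : X F) = x₁ := by
      have e : h • k • (x₁ : X F) = (h * k) • x₁ := (mul_smul h k x₁).symm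
      rw [mul_smul, ← hh2, e, inv_smul_smul]
    have hmem := hK (MulAction.mem_stabilizer_iff.mpr hst)
    have := K.mul_mem (K.mul_mem hhK hkK) hmem
    rwa [← mul_assoc, mul_inv_cancel, one_mul] at this

theorem simple_G (h2 : (2 : F) = 0) (ha : ∃ a : F, a ≠ 0 ∧ a * a ≠ 1) :
    IsSimpleGroup (G F) := by
  haveI : Nontrivial (G F) := nontrivial_G
  constructor
  intro N hN
  by_cases hbot : N = ⊥
  · left; exact hbot
  right
  obtain ⟨n₀, hn₀N, hn₀⟩ : ∃ n ∈ N, n ≠ 1 := by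
    by_contra hc
    push_neg at hc
    exact hbot ((Subgroup.eq_bot_iff_forall N).mpr hc)
  have hNstab : ∃ n ∈ N, n • (x₁ : X F) ≠ x₁ := by
    by_contra hc
    push_neg at hc
    apply hn₀
    have hfix : ∀ x : X F, n₀ • x = x := by
      intro x
      obtain ⟨g, rfl⟩ := point_trans x
      have hmem : (g⁻¹ * n₀ * g) ∈ N := hN.conj_mem' n₀ hn₀N g
      have h1 := hc _ hmem
      rw [mul_smul, mul_smul] at h1
      have h2 : g • (g⁻¹ • (n₀ • g • (x₁ : X F))) = g • x₁ := by rw [h1]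
      rwa [smul_inv_smul] at h2
    exact stab_three h2 x12_ne x13_ne x23_ne (hfix x₁) (hfix x₂) (hfix x₃)
  obtain ⟨n₁, hn₁N, hn₁⟩ := hNstab
  have htop : (MulAction.stabilizer (G F) (x₁ : X F)) ⊔ N = ⊤ := by
    rw [eq_top_iff]
    intro g _
    exact stab_x1_max _ le_sup_left ⟨n₁, Subgroup.mem_sup_right hn₁N, hn₁⟩ g
  set A : Subgroup (G F) :=
    { carrier := Set.range uu
      one_mem' := ⟨0, uu_zero⟩
      mul_mem' := by
        rintro x y ⟨b, rfl⟩ ⟨c, rfl⟩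
        exact ⟨b + c, (uu_add b c).symm⟩
      inv_mem' := by
        rintro x ⟨b, rfl⟩
        exact ⟨-b, (uu_inv b).symm⟩ } with hA
  have hmemA : ∀ b : F, uu b ∈ A := by
    intro b
    show uu b ∈ Set.range uu
    exact ⟨b, rfl⟩
  have hconj : ∀ (g : G F) (b : F), g * uu b * g⁻¹ ∈ A ⊔ N := by
    intro g b
    have hg : g ∈ (MulAction.stabilizer (G F) (x₁ : X F)) ⊔ N := by rw [htop]; trivial
    have hg' : g ∈ ((MulAction.stabilizer (G F) (x₁ : X F)) : Set (G F)) * (N : Set (G F)) := by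
      rw [← Subgroup.mul_normal]
      exact hg
    obtain ⟨h, hh, n, hn, rfl⟩ := hg'
    obtain ⟨aa, bb, haa, hform⟩ :=
      Matrix.SpecialLinearGroup.fin_two_exists_eq_mk_of_apply_zero_one_eq_zero h
        (fix_x1 (MulAction.mem_stabilizer_iff.mp hh))
    have hmain : h * uu b * h⁻¹ = uu (aa * aa * b) := upper_conj aa bb b haa h hform
    have key : (h * n) * uu b * (h * n)⁻¹
        = (h * uu b * h⁻¹) * (h * ((uu b)⁻¹ * n * uu b * n⁻¹) * h⁻¹) := by group
    rw [key, hmain]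
    refine Subgroup.mul_mem _ (Subgroup.mem_sup_left (hmemA _))
      (Subgroup.mem_sup_right ?_)
    refine hN.conj_mem _ ?_ h
    have h1 : (uu b)⁻¹ * n * uu b ∈ N := hN.conj_mem' n hn (uu b)
    exact N.mul_mem h1 (N.inv_mem hn)
  have hAN : A ⊔ N = ⊤ := by
    rw [eq_top_iff]
    intro g _
    refine gen_elem _ (fun b => Subgroup.mem_sup_left (hmemA b)) (fun c => ?_) g
    rw [← ww_conj]
    exact hconj ww (-c)
  have hcomm : ∀ x y : G F, ⁅x, y⁆ ∈ N := by
    intro x y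
    have hx : x ∈ ((A : Set (G F)) * (N : Set (G F))) := by
      rw [← Subgroup.mul_normal, hAN]; trivial
    have hy : y ∈ ((A : Set (G F)) * (N : Set (G F))) := by
      rw [← Subgroup.mul_normal, hAN]; trivial
    obtain ⟨ax, hax, nx, hnx, rfl⟩ := hx
    obtain ⟨ay, hay, ny, hny, rfl⟩ := hy
    have hax' : ax ∈ Set.range uu := hax
    have hay' : ay ∈ Set.range uu := hay
    obtain ⟨bx, rfl⟩ := hax'
    obtain ⟨by', rfl⟩ := hay'
    rw [← QuotientGroup.eq_one_iff]
    have hrfl : ((⁅uu bx * nx, uu by' * ny⁆ : G F) : (G F) ⧸ N)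
        = ⁅((uu bx * nx : G F) : (G F) ⧸ N), ((uu by' * ny : G F) : (G F) ⧸ N)⁆ := rfl
    rw [hrfl]
    refine commutatorElement_eq_one_iff_mul_comm.mpr ?_
    have enx : ((nx : G F) : (G F) ⧸ N) = 1 := (QuotientGroup.eq_one_iff _).mpr hnx
    have eny : ((ny : G F) : (G F) ⧸ N) = 1 := (QuotientGroup.eq_one_iff _).mpr hny
    have ex : ((uu bx * nx : G F) : (G F) ⧸ N) = ((uu bx : G F) : (G F) ⧸ N) := by
      rw [QuotientGroup.mk_mul, enx, mul_one]
    have ey : ((uu by' * ny : G F) : (G F) ⧸ N) = ((uu by' : G F) : (G F) ⧸ N) := by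
      rw [QuotientGroup.mk_mul, eny, mul_one]
    rw [ex, ey, ← QuotientGroup.mk_mul, ← QuotientGroup.mk_mul, uu_comm]
  have hle : commutator (G F) ≤ N := by
    rw [commutator_def]
    exact Subgroup.commutator_le.mpr (fun x _ y _ => hcomm x y)
  rw [eq_top_iff, ← perfect_G ha]
  exact hle

end Simple
section Borel
variable {F : Type} [Field F]

/-- The Borel subgroup of upper triangular matrices. -/
def Bor (F : Type) [Field F] : Subgroup (G F) where
  carrier := {g | g.val 1 0 = 0}
  one_mem' := by
    show (1 : G F).val 1 0 = 0
    rw [Matrix.SpecialLinearGroup.coe_one, Matrix.one_fin_two]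
    simp
  mul_mem' := by
    intro a b ha hb
    show (a * b).val 1 0 = 0
    rw [Matrix.SpecialLinearGroup.coe_mul, Matrix.mul_apply, Fin.sum_univ_two]
    simp only [Set.mem_setOf_eq] at ha hb
    rw [ha, hb]
    ring
  inv_mem' := by
    intro a ha
    show (a⁻¹).val 1 0 = 0
    rw [Matrix.SpecialLinearGroup.SL2_inv_expl]
    simp only [Set.mem_setOf_eq] at ha
    show -a.val 1 0 = 0
    rw [ha, neg_zero]

lemma mem_Bor_iff (g : G F) : g ∈ Bor F ↔ g.val 1 0 = 0 := Iff.rfl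

lemma fix_x1_of {g : G F} (hg : g.val 1 0 = 0) : g • (x₁ : X F) = x₁ := by
  rw [x₁, smul_mk]
  refine mk_eq_mk_of _ _ (g.val 0 0) (vec_ext ?_ ?_) <;>
    simp [mulVec_e0, mulVec_e1, hg]

/-- Every element of the Borel subgroup fixes some unordered pair (char 2). -/
lemma borel_fix (h2 : (2 : F) = 0) {g : G F} (hg : g ∈ Bor F) : ∃ δ : Δ F, g • δ = δ := by
  rw [mem_Bor_iff] at hg
  obtain ⟨a, b, ha, hform⟩ :=
    Matrix.SpecialLinearGroup.fin_two_exists_eq_mk_of_apply_zero_one_eq_zero g hg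
  have hv : g.val = !![a, b; 0, a⁻¹] := by rw [hform]
  have e00 : g.val 0 0 = a := by rw [hv]; simp
  have e01 : g.val 0 1 = b := by rw [hv]; simp
  have e11 : g.val 1 1 = a⁻¹ := by rw [hv]; simp
  by_cases haa : a * a = 1
  · -- a = 1
    have ha1 : a = 1 := sq_eq_one h2 a haa
    by_cases hb : b = 0
    · refine ⟨pr x₁ x₂ x12_ne, ?_⟩
      have hg1 : g = 1 := by
        apply Subtype.ext
        rw [hv, ha1, hb, inv_one, Matrix.SpecialLinearGroup.coe_one, Matrix.one_fin_two]
      rw [hg1, one_smul]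
    · -- swap pair {x₂, [b,1]}
      have hbv : (![b, 1] : Fin 2 → F) ≠ 0 := fun h => one_ne_zero (congrFun h 1)
      have hne : (x₂ : X F) ≠ Projectivization.mk F ![b, 1] hbv := by
        intro h
        rw [x₂, Projectivization.mk_eq_mk_iff] at h
        obtain ⟨c, hc⟩ := h
        have h0 := congrFun hc 0
        have h1 := congrFun hc 1
        simp [Units.smul_def] at h0 h1
        exact hb h0
      refine ⟨pr x₂ (Projectivization.mk F ![b, 1] hbv) hne, ?_⟩
      have e1 : g • (x₂ : X F) = Projectivization.mk F ![b, 1] hbv := by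
        rw [x₂, smul_mk]
        refine (mk_eq_mk_of _ _ 1 (vec_ext ?_ ?_)) <;>
          simp [mulVec_e0, mulVec_e1, e00, e01, e11, hg, ha1]
      have e2 : g • Projectivization.mk F ![b, 1] hbv = x₂ := by
        rw [x₂, smul_mk]
        refine (mk_eq_mk_of _ _ 1 (vec_ext ?_ ?_)).symm
        · simp [mulVec_e0, e00, e01, ha1]
          linear_combination b * h2
        · simp [mulVec_e1, e11, hg, ha1]
      rw [pr_smul, pr_congr (smul_ne g hne) (Ne.symm hne) e1 e2, ← pr_comm]
  · -- two fixed points x₁ and [b/(a⁻¹ - a), 1]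
    have hd : a⁻¹ - a ≠ 0 := by
      intro h
      have h' : a⁻¹ = a := sub_eq_zero.mp h
      refine haa ?_
      calc a * a = a * a⁻¹ := by rw [h']
      _ = 1 := mul_inv_cancel₀ ha
    have h1sq : 1 - a * a ≠ 0 := by
      intro hz
      have he : a⁻¹ - a = (1 - a * a) * a⁻¹ := by field_simp
      rw [hz, zero_mul] at he
      exact hd he
    set t := b / (a⁻¹ - a) with ht
    have htv : (![t, 1] : Fin 2 → F) ≠ 0 := fun h => one_ne_zero (congrFun h 1)
    have hney : (x₁ : X F) ≠ Projectivization.mk F ![t, 1] htv := by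
      intro h
      rw [x₁, Projectivization.mk_eq_mk_iff] at h
      obtain ⟨c, hc⟩ := h
      have h1 := congrFun hc 1
      simp [Units.smul_def] at h1
    refine ⟨pr x₁ (Projectivization.mk F ![t, 1] htv) hney, ?_⟩
    have e1 : g • (x₁ : X F) = x₁ := fix_x1_of hg
    have e2 : g • Projectivization.mk F ![t, 1] htv = Projectivization.mk F ![t, 1] htv := by
      rw [smul_mk]
      refine mk_eq_mk_of _ _ a⁻¹ (vec_ext ?_ ?_)
      · show a⁻¹ * t = _
        rw [mulVec_e0, e00, e01]
        simp only [Matrix.cons_val_zero, Matrix.cons_val_one, Matrix.head_cons]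
        have h1sq' : 1 - a ^ 2 ≠ 0 := by rwa [pow_two]
        rw [ht]
        field_simp [h1sq']
        ring
      · show a⁻¹ * 1 = _
        rw [mulVec_e1, e11, hg]
        simp only [Matrix.cons_val_zero, Matrix.cons_val_one, Matrix.head_cons]
        ring
    rw [pr_smul, pr_congr (smul_ne g hney) hney e1 e2]

/-- Classification of pair stabilizer elements: diagonal or antidiagonal. -/
lemma stab_pair {g : G F} (hg : g • pr (x₁ : X F) x₂ x12_ne = pr x₁ x₂ x12_ne) :
    (g.val 1 0 = 0 ∧ g.val 0 1 = 0) ∨ (g.val 0 0 = 0 ∧ g.val 1 1 = 0) := by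
  rw [pr_smul, pr_eq_iff] at hg
  rcases hg with ⟨h1, h2⟩ | ⟨h1, h2⟩
  · exact Or.inl ⟨fix_x1 h1, fix_x2 h2⟩
  · exact Or.inr ⟨x1_to_x2 h1, x2_to_x1 h2⟩

end Borel
section Rho
variable {F : Type} [Field F]

def ρ (F : Type) [Field F] : G F →* Equiv.Perm (Δ F) := MulAction.toPermHom (G F) (Δ F)

lemma ρ_apply (g : G F) (δ : Δ F) : ρ F g δ = g • δ := rfl

lemma ρ_inj (h2 : (2 : F) = 0) : Function.Injective (ρ F) := by
  refine (injective_iff_map_eq_one (ρ F)).mpr ?_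
  intro g hg
  have hfix : ∀ δ : Δ F, g • δ = δ := by
    intro δ
    have := congrArg (fun p : Equiv.Perm (Δ F) => p δ) hg
    simpa [ρ_apply] using this
  have h12 := hfix (pr x₁ x₂ x12_ne)
  have h13 := hfix (pr x₁ x₃ x13_ne)
  rw [pr_smul, pr_eq_iff] at h12 h13
  rcases h12 with ⟨f1, f2⟩ | ⟨f1, f2⟩
  · rcases h13 with ⟨g1, g3⟩ | ⟨g1, g3⟩
    · exact stab_std h2 f1 f2 g3
    · exact absurd (f1.symm.trans g1) x13_ne
  · rcases h13 with ⟨g1, g3⟩ | ⟨g1, g3⟩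
    · exact absurd (g1.symm.trans f1) x12_ne
    · exact absurd (f1.symm.trans g1) x23_ne

lemma isSimpleGroup_of_mulEquiv {H K : Type} [Group H] [Group K] (e : H ≃* K)
    (hs : IsSimpleGroup H) : IsSimpleGroup K := by
  haveI : Nontrivial H := hs.toNontrivial
  haveI : Nontrivial K := e.symm.toEquiv.nontrivial
  constructor
  intro N hN
  have hcomap : (N.comap e.toMonoidHom).Normal := Subgroup.Normal.comap hN e.toMonoidHom
  rcases hs.eq_bot_or_eq_top_of_normal _ hcomap with h | h
  · left
    have := congrArg (Subgroup.map e.toMonoidHom) h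
    rwa [Subgroup.map_comap_eq_self_of_surjective e.surjective, Subgroup.map_bot] at this
  · right
    have := congrArg (Subgroup.map e.toMonoidHom) h
    rwa [Subgroup.map_comap_eq_self_of_surjective e.surjective,
      Subgroup.map_top_of_surjective _ e.surjective] at this

end Rho
section Main
variable {F : Type} [Field F] [Fintype F]

theorem main_generic (h2 : (2 : F) = 0) (ha : ∃ a : F, a ≠ 0 ∧ a * a ≠ 1)
    (M : ℕ) (hM : 0 < M) (hq : 2 * M + 1 < Fintype.card F) :
    ∃ (Δ' : Type) (_ : Fintype Δ') (_ : Nonempty Δ') (T : Subgroup (Equiv.Perm Δ')),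
      MulAction.IsPretransitive T Δ' ∧
      (∀ α : Δ', IsCoatom (MulAction.stabilizer T α)) ∧
      IsSimpleGroup T ∧ (∃ a b : T, a * b ≠ b * a) ∧
      ∃ (α : Δ') (S : Subgroup T),
        (∀ x ∈ S, ∀ y ∈ S, ∃ β : Δ', x • β = y • β) ∧
        Nat.card S > M * Nat.card (MulAction.stabilizer T α) := by
  classical
  have hinj := ρ_inj (F := F) h2
  set T : Subgroup (Equiv.Perm (Δ F)) := (ρ F).range with hT
  set e : G F ≃* T := MonoidHom.ofInjective hinj with he
  have compat : ∀ (g : G F) (δ : Δ F), (e g) • δ = g • δ := by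
    intro g δ
    show ((e g : T) : Equiv.Perm (Δ F)) δ = g • δ
    rw [MonoidHom.ofInjective_apply]
    rfl
  have compat' : ∀ (t : T) (δ : Δ F), t • δ = (e.symm t) • δ := by
    intro t δ
    conv_lhs => rw [← MulEquiv.apply_symm_apply e t]
    rw [compat]
  refine ⟨Δ F, Fintype.ofFinite _, ⟨pr x₁ x₂ x12_ne⟩, T, ?_, ?_, ?_, ?_, ?_⟩
  · -- transitive
    constructor
    intro δ δ'
    obtain ⟨g, hg⟩ := delta_trans δ δ'
    exact ⟨e g, by rw [compat]; exact hg⟩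
  · -- coatom
    intro α
    have hnea : pr (x₁ : X F) x₂ x12_ne ≠ pr x₁ x₃ x13_ne := by
      rw [Ne, pr_eq_iff]
      rintro (⟨-, h⟩ | ⟨h, -⟩)
      · exact x23_ne h
      · exact x13_ne h
    have hex : ∃ δ' : Δ F, δ' ≠ α := by
      by_cases h : pr (x₁ : X F) x₂ x12_ne = α
      · exact ⟨pr x₁ x₃ x13_ne, fun hh => hnea (h.trans hh.symm)⟩
      · exact ⟨pr x₁ x₂ x12_ne, h⟩
    obtain ⟨δ', hδ'⟩ := hex
    obtain ⟨g, hg⟩ := delta_trans α δ'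
    constructor
    · intro htop
      have hmem : e g ∈ MulAction.stabilizer T α := htop ▸ Subgroup.mem_top _
      rw [MulAction.mem_stabilizer_iff, compat, hg] at hmem
      exact hδ' hmem
    · intro K' hK'
      set K : Subgroup (G F) := K'.comap e.toMonoidHom with hK
      have hstab : ∀ g' : G F, g' • α = α → g' ∈ K := by
        intro g' hg'
        have : e g' ∈ MulAction.stabilizer T α :=
          MulAction.mem_stabilizer_iff.mpr (by rw [compat]; exact hg')
        exact Subgroup.mem_comap.mpr (hK'.le this)
      have hne2 : ∃ k ∈ K, k • α ≠ α := by
        obtain ⟨t, htK, htns⟩ := SetLike.exists_of_lt hK'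
        refine ⟨e.symm t, Subgroup.mem_comap.mpr (by simpa using htK), ?_⟩
        intro hfix
        apply htns
        refine MulAction.mem_stabilizer_iff.mpr ?_
        rw [compat' t α]
        exact hfix
      have hall := prim_key h2 α K hstab hne2
      rw [eq_top_iff]
      intro t _
      have h1 : e.symm t ∈ K := hall _
      have h2' := Subgroup.mem_comap.mp h1
      simpa using h2'
  · -- simple
    exact isSimpleGroup_of_mulEquiv e (simple_G h2 ha)
  · -- nonabelian
    refine ⟨e (uu 1), e (ll 1), ?_⟩
    intro h
    rw [← _root_.map_mul, ← _root_.map_mul] at h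
    have heq := e.injective h
    have h1 : (uu (1 : F) * ll 1).val 0 0 = 2 := by
      rw [Matrix.SpecialLinearGroup.coe_mul, Matrix.mul_apply, Fin.sum_univ_two]
      simp [uu, ll]
      norm_num
    have h1' : (ll (1 : F) * uu 1).val 0 0 = 1 := by
      rw [Matrix.SpecialLinearGroup.coe_mul, Matrix.mul_apply, Fin.sum_univ_two]
      simp [uu, ll]
    rw [heq, h1'] at h1
    rw [h2] at h1
    exact one_ne_zero h1
  · -- intersecting subgroup with large cardinality
    set α : Δ F := pr x₁ x₂ x12_ne with hα
    set S : Subgroup T := (Bor F).map e.toMonoidHom with hS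
    refine ⟨α, S, ?_, ?_⟩
    · -- intersecting
      intro x hx y hy
      rw [hS, Subgroup.mem_map_equiv] at hx hy
      obtain ⟨δ, hδ⟩ := borel_fix h2 ((Bor F).mul_mem ((Bor F).inv_mem hy) hx)
      refine ⟨δ, ?_⟩
      rw [compat' x δ, compat' y δ]
      rw [mul_smul] at hδ
      have h3 : (e.symm y) • ((e.symm y)⁻¹ • (e.symm x) • δ) = (e.symm y) • δ := by rw [hδ]
      rwa [smul_inv_smul] at h3
    · -- cardinality
      have hstabmap : MulAction.stabilizer T α
          = (MulAction.stabilizer (G F) α).map e.toMonoidHom := by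
        ext t
        rw [Subgroup.mem_map_equiv, MulAction.mem_stabilizer_iff, MulAction.mem_stabilizer_iff,
          compat' t α]
      have hcard_stab_eq : Nat.card (MulAction.stabilizer T α)
          = Nat.card (MulAction.stabilizer (G F) α) := by
        rw [hstabmap]
        exact (Nat.card_congr (Subgroup.equivMapOfInjective _ _ e.injective).toEquiv).symm
      have hcard_S_eq : Nat.card S = Nat.card (Bor F) := by
        rw [hS]
        exact (Nat.card_congr (Subgroup.equivMapOfInjective _ _ e.injective).toEquiv).symm
      have hstabG_le : Nat.card (MulAction.stabilizer (G F) α) ≤ 2 * Fintype.card F := by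
        have hbf : Nat.card (Bool × F) = 2 * Fintype.card F := by
          rw [Nat.card_prod, Nat.card_eq_fintype_card, Nat.card_eq_fintype_card,
            Fintype.card_bool]
        rw [← hbf]
        refine Nat.card_le_card_of_injective (fun gp =>
          if (gp.val.val 1 0 = 0 ∧ gp.val.val 0 1 = 0) then ((false : Bool), gp.val.val 0 0)
          else ((true : Bool), gp.val.val 0 1)) ?_
        rintro ⟨g, hg⟩ ⟨g', hg'⟩ hψ
        rw [MulAction.mem_stabilizer_iff, hα] at hg hg'
        have hcg := stab_pair hg
        have hcg' := stab_pair hg'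
        have hdetg := g.2
        have hdetg' := g'.2
        rw [Matrix.det_fin_two] at hdetg hdetg'
        simp only at hψ
        split_ifs at hψ with hd1 hd2 hd2
        · -- both diagonal
          obtain ⟨e1, e2⟩ := Prod.mk.injEq _ _ _ _ ▸ hψ
          apply Subtype.ext
          apply Subtype.ext
          rw [Matrix.eta_fin_two g.val, Matrix.eta_fin_two g'.val, hd1.1, hd1.2, hd2.1, hd2.2, e2]
          have k1 : g.val 1 1 = (g.val 0 0)⁻¹ := by
            refine eq_inv_of_mul_eq_one_left ?_
            rw [mul_comm]
            calc g.val 0 0 * g.val 1 1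
                = g.val 0 0 * g.val 1 1 - g.val 0 1 * g.val 1 0 := by rw [hd1.2]; ring
            _ = 1 := hdetg
          have k2 : g'.val 1 1 = (g'.val 0 0)⁻¹ := by
            refine eq_inv_of_mul_eq_one_left ?_
            rw [mul_comm]
            calc g'.val 0 0 * g'.val 1 1
                = g'.val 0 0 * g'.val 1 1 - g'.val 0 1 * g'.val 1 0 := by rw [hd2.2]; ring
            _ = 1 := hdetg'
          rw [k1, k2, e2]
        · exact absurd (Prod.mk.injEq _ _ _ _ ▸ hψ).1 (by simp)
        · exact absurd (Prod.mk.injEq _ _ _ _ ▸ hψ).1 (by simp)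
        · -- both antidiagonal
          obtain ⟨e1, e2⟩ := Prod.mk.injEq _ _ _ _ ▸ hψ
          have ha1 : g.val 0 0 = 0 ∧ g.val 1 1 = 0 := by
            rcases hcg with h | h
            · exact absurd h hd1
            · exact h
          have ha2 : g'.val 0 0 = 0 ∧ g'.val 1 1 = 0 := by
            rcases hcg' with h | h
            · exact absurd h hd2
            · exact h
          have hm1 : g.val 0 1 * g.val 1 0 = -1 := by
            have := hdetg
            rw [ha1.1, ha1.2] at this
            linear_combination -this
          have hm2 : g'.val 0 1 * g'.val 1 0 = -1 := by
            have := hdetg'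
            rw [ha2.1, ha2.2] at this
            linear_combination -this
          have hne01 : g.val 0 1 ≠ 0 := by
            intro hz
            rw [hz, zero_mul] at hm1
            exact one_ne_zero (neg_eq_zero.mp hm1.symm)
          have k1 : g.val 1 0 = -(g.val 0 1)⁻¹ := by
            field_simp
            first
              | linear_combination hm1
              | linear_combination -hm1
              | linear_combination g.val 0 1 * hm1
              | linear_combination -(g.val 0 1) * hm1
          have hne01' : g'.val 0 1 ≠ 0 := by
            intro hz
            rw [hz, zero_mul] at hm2
            exact one_ne_zero (neg_eq_zero.mp hm2.symm)
          have k2 : g'.val 1 0 = -(g'.val 0 1)⁻¹ := by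
            field_simp
            first
              | linear_combination hm2
              | linear_combination -hm2
              | linear_combination g'.val 0 1 * hm2
              | linear_combination -(g'.val 0 1) * hm2
          apply Subtype.ext
          apply Subtype.ext
          rw [Matrix.eta_fin_two g.val, Matrix.eta_fin_two g'.val, ha1.1, ha1.2, ha2.1, ha2.2,
            k1, k2, e2]
      have hS_ge : (Fintype.card F - 1) * Fintype.card F ≤ Nat.card (Bor F) := by
        have hcard : Nat.card (Fˣ × F) = (Fintype.card F - 1) * Fintype.card F := by
          rw [Nat.card_prod, Nat.card_eq_fintype_card, Nat.card_eq_fintype_card,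
            Fintype.card_units]
        rw [← hcard]
        refine Nat.card_le_card_of_injective (fun p =>
          (⟨⟨!![(p.1 : F), p.2; 0, (p.1 : F)⁻¹], by
              rw [Matrix.det_fin_two_of]
              field_simp
              simp⟩, by
            refine (mem_Bor_iff _).2 ?_
            show (!![(p.1 : F), p.2; 0, (p.1 : F)⁻¹]) 1 0 = 0
            simp⟩ : Bor F)) ?_
        rintro ⟨u, b⟩ ⟨u', b'⟩ hp
        have hval := congr_arg (fun z : Bor F => (z.val.val : Matrix (Fin 2) (Fin 2) F)) hp
        simp only at hval
        have h00 := congr_fun (congr_fun hval 0) 0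
        have h01 := congr_fun (congr_fun hval 0) 1
        simp only [Matrix.of_apply, Matrix.cons_val', Matrix.cons_val_zero, Matrix.cons_val_one,
          Matrix.head_cons, Matrix.empty_val', Matrix.cons_val_fin_one, Matrix.head_fin_const] at h00 h01
        have : u = u' := Units.ext h00
        subst this
        have : b = b' := h01
        subst this
        rfl
      rw [gt_iff_lt, hcard_S_eq, hcard_stab_eq]
      have hqpos : 0 < Fintype.card F := Fintype.card_pos
      calc M * Nat.card (MulAction.stabilizer (G F) α)
          ≤ M * (2 * Fintype.card F) := Nat.mul_le_mul_left M hstabG_le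
        _ = (2 * M) * Fintype.card F := by ring
        _ < (Fintype.card F - 1) * Fintype.card F := by
            refine mul_lt_mul_of_pos_right ?_ hqpos
            omega
        _ ≤ Nat.card (Bor F) := hS_ge

end Main
end Stmt9

/-- For every natural number `M > 0` there exist a finite nonempty
set `Δ`, a primitive transitive permutation group `T ≤ Sym(Δ)` which is a
nonabelian simple group, a point `α ∈ Δ`, and an intersecting subgroup `S ≤ T`
with `|S| > M · |T_α|`. -/
theorem stmt9 (M : ℕ) (hM : 0 < M) :
    ∃ (Δ : Type) (_ : Fintype Δ) (_ : Nonempty Δ) (T : Subgroup (Equiv.Perm Δ)),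
      MulAction.IsPretransitive T Δ ∧
      (∀ α : Δ, IsCoatom (MulAction.stabilizer T α)) ∧
      IsSimpleGroup T ∧ (∃ a b : T, a * b ≠ b * a) ∧
      ∃ (α : Δ) (S : Subgroup T),
        (∀ x ∈ S, ∀ y ∈ S, ∃ β : Δ, x • β = y • β) ∧
        Nat.card S > M * Nat.card (MulAction.stabilizer T α) := by
  set F := GaloisField 2 (M + 2) with hF
  letI : Fintype F := Fintype.ofFinite F
  classical
  have hcardN : Nat.card F = 2 ^ (M + 2) := GaloisField.card 2 (M + 2) (by omega)
  have hcard : Fintype.card F = 2 ^ (M + 2) := by rw [← Nat.card_eq_fintype_card, hcardN]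
  have h2 : (2 : F) = 0 := by
    have := CharP.cast_eq_zero F 2
    exact_mod_cast this
  have hp1 : 0 < 2 ^ M := pow_pos (by norm_num) M
  have hpM : M < 2 ^ M := Nat.lt_two_pow_self
  have hpow : 2 ^ (M + 2) = 4 * 2 ^ M := by ring
  have hq : 2 * M + 1 < Fintype.card F := by
    rw [hcard]
    omega
  have hcard3 : 2 < Fintype.card F := by
    rw [hcard]
    omega
  have ha : ∃ a : F, a ≠ 0 ∧ a * a ≠ 1 := by
    by_contra hc
    push_neg at hc
    have hall : ∀ a : F, a = 0 ∨ a = 1 := by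
      intro a
      by_cases h0 : a = 0
      · exact Or.inl h0
      · exact Or.inr (Stmt9.sq_eq_one h2 a (hc a h0))
    have hsub : (Finset.univ : Finset F) ⊆ {0, 1} := by
      intro a _
      rcases hall a with h | h <;> simp [h]
    have hcc := Finset.card_le_card hsub
    rw [Finset.card_univ] at hcc
    have hle : Finset.card ({0, 1} : Finset F) ≤ 2 := by
      apply le_trans (Finset.card_insert_le _ _)
      simp
    omega
  exact Stmt9.main_generic h2 ha M hM hq
end

section
/- Let p ≥ 5 be a prime with p ≡ 3 (mod 4), and let G = PSL(2, p) act faithfully, transitively and primitively on a finite set Ω such that the point stabilizer G_ω is isomorphic as a group to the dihedral group of order p + 1. Then G has the EKR property: every intersecting set S ⊆ G satisfies |S| ≤ |G_ω|. -/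
set_option maxRecDepth 4000


/-- `PSL(2, p)`: the quotient of `SL(2, ZMod p)` by its center. -/
abbrev PSL2 (p : ℕ) :=
  Matrix.SpecialLinearGroup (Fin 2) (ZMod p) ⧸
    Subgroup.center (Matrix.SpecialLinearGroup (Fin 2) (ZMod p))

section Aux

open Matrix

variable (p : ℕ) [Fact p.Prime] [NeZero p]

local notation "SL" => Matrix.SpecialLinearGroup (Fin 2) (ZMod p)
local notation "GL2" => Matrix.GeneralLinearGroup (Fin 2) (ZMod p)

/-- The upper triangular subgroup of `SL(2, p)`. -/
def Tsub : Subgroup SL where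
  carrier := {A | A.1 1 0 = 0}
  one_mem' := by simp
  mul_mem' := by
    intro a b ha hb
    show ((a * b : SL).1) 1 0 = 0
    rw [Matrix.SpecialLinearGroup.coe_mul, Matrix.mul_apply, Fin.sum_univ_two]
    simp only [Set.mem_setOf_eq] at ha hb
    rw [ha, hb]; ring
  inv_mem' := by
    intro a ha
    show ((a⁻¹ : SL).1) 1 0 = 0
    rw [Matrix.SpecialLinearGroup.coe_inv, Matrix.adjugate_fin_two]
    simp only [Set.mem_setOf_eq] at ha
    simp [ha]

noncomputable def TsubEquiv : (Tsub p) ≃ (ZMod p)ˣ × ZMod p where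
  toFun A := (Units.mk (A.1.1 0 0) (A.1.1 1 1)
      (by have hd := A.1.2; rw [Matrix.det_fin_two] at hd
          have ha : A.1.1 1 0 = 0 := A.2
          rw [ha] at hd; simpa using hd)
      (by have hd := A.1.2; rw [Matrix.det_fin_two] at hd
          have ha : A.1.1 1 0 = 0 := A.2
          rw [ha] at hd; rw [mul_comm]; simpa using hd),
    A.1.1 0 1)
  invFun x := ⟨⟨!![x.1.val, x.2; 0, x.1.inv], by
      rw [Matrix.det_fin_two_of, x.1.val_inv]; ring⟩, by
      show !![x.1.val, x.2; 0, x.1.inv] 1 0 = 0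
      rfl⟩
  left_inv A := by
    apply Subtype.ext; apply Subtype.ext
    have ha : A.1.1 1 0 = 0 := A.2
    ext i j
    fin_cases i <;> fin_cases j <;> first | rfl | (exact ha.symm)
  right_inv x := by
    refine Prod.ext (Units.ext rfl) rfl

lemma cardTsub : Nat.card (Tsub p) = (p - 1) * p := by
  rw [Nat.card_congr (TsubEquiv p), Nat.card_prod, Nat.card_eq_fintype_card,
    ZMod.card_units_eq_totient, Nat.totient_prime (Fact.out : p.Prime), Nat.card_zmod]

noncomputable def slEquivKer :
    Matrix.SpecialLinearGroup (Fin 2) (ZMod p) ≃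
      (Matrix.GeneralLinearGroup.det (n := Fin 2) (R := ZMod p)).ker where
  toFun A := ⟨Matrix.SpecialLinearGroup.toGL A, by
    have : Matrix.GeneralLinearGroup.det (Matrix.SpecialLinearGroup.toGL A) = 1 := by
      apply Units.ext
      rw [Matrix.GeneralLinearGroup.val_det_apply]
      exact A.2
    simpa [MonoidHom.mem_ker] using this⟩
  invFun g := ⟨(g.1 : Matrix (Fin 2) (Fin 2) (ZMod p)), by
    have hg : Matrix.GeneralLinearGroup.det g.1 = 1 := g.2
    have := congrArg Units.val hg
    rwa [Matrix.GeneralLinearGroup.val_det_apply] at this⟩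
  left_inv A := rfl
  right_inv g := by apply Subtype.ext; apply Units.ext; rfl

omit [NeZero p] in
lemma det_surj : Function.Surjective (Matrix.GeneralLinearGroup.det (n := Fin 2) (R := ZMod p)) := by
  intro u
  have hdet : Matrix.det !![(u : ZMod p), 0; 0, 1] = (u : ZMod p) := by
    rw [Matrix.det_fin_two_of]; ring
  refine ⟨Matrix.GeneralLinearGroup.mk'' !![(u : ZMod p), 0; 0, 1]
    (by rw [hdet]; exact u.isUnit), ?_⟩
  apply Units.ext
  rw [Matrix.GeneralLinearGroup.val_det_apply]
  show Matrix.det !![(u : ZMod p), 0; 0, 1] = (u : ZMod p)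
  exact hdet

lemma cardSL : Nat.card SL = p * (p - 1) * (p + 1) := by
  have hq : Fintype.card (ZMod p) = p := ZMod.card p
  have hGL : Nat.card GL2 = (p ^ 2 - 1) * (p ^ 2 - p) := by
    rw [Matrix.card_GL_field, Fin.prod_univ_two, hq]
    norm_num
  have hker : Nat.card ((Matrix.GeneralLinearGroup.det (n := Fin 2) (R := ZMod p)).ker)
      = Nat.card SL := (Nat.card_congr (slEquivKer p)).symm
  have hquot := Subgroup.card_eq_card_quotient_mul_card_subgroup
    (Matrix.GeneralLinearGroup.det (n := Fin 2) (R := ZMod p)).ker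
  have hrange : Nat.card (GL2 ⧸ (Matrix.GeneralLinearGroup.det (n := Fin 2) (R := ZMod p)).ker)
      = Nat.card (ZMod p)ˣ :=
    Nat.card_congr (QuotientGroup.quotientKerEquivOfSurjective _ (det_surj p)).toEquiv
  have hunits : Nat.card (ZMod p)ˣ = p - 1 := by
    rw [Nat.card_eq_fintype_card, ZMod.card_units_eq_totient,
      Nat.totient_prime (Fact.out : p.Prime)]
  rw [hGL, hrange, hker, hunits] at hquot
  have hp2 : 2 ≤ p := (Fact.out : p.Prime).two_le
  have key : (p ^ 2 - 1) * (p ^ 2 - p) = (p - 1) * (p * (p - 1) * (p + 1)) := by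
    zify [show 1 ≤ p ^ 2 by nlinarith, show p ≤ p ^ 2 by nlinarith, show 1 ≤ p by omega]
    ring
  rw [key] at hquot
  exact (Nat.eq_of_mul_eq_mul_left (by omega) hquot.symm)

lemma zmod_sq_eq_one {x : ZMod p} (hx : x ^ 2 = 1) : x = 1 ∨ x = -1 := by
  have h0 : (x - 1) * (x + 1) = 0 := by linear_combination hx
  rcases mul_eq_zero.mp h0 with h | h
  · exact Or.inl (sub_eq_zero.mp h)
  · exact Or.inr (eq_neg_of_add_eq_zero_left h)

/-- The center of `SL(2,p)` has at most 2 elements. -/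
lemma card_center_le_two (hp5 : 5 ≤ p) :
    Nat.card (Subgroup.center SL) ≤ 2 := by
  classical
  haveI : Fact (2 < p) := ⟨by omega⟩
  have hsq : ∀ A : Subgroup.center SL, ((A.1.1 0 0) = 1 ∨ (A.1.1 0 0) = -1) := by
    intro A
    obtain ⟨r, hr, hr'⟩ := Matrix.SpecialLinearGroup.mem_center_iff.mp A.2
    have h00 : A.1.1 0 0 = r := by
      rw [← hr']
      simp [Matrix.scalar_apply]
    rw [h00]
    exact zmod_sq_eq_one p (by simpa using hr)
  have hscalar : ∀ A : Subgroup.center SL,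
      Matrix.scalar (Fin 2) (A.1.1 0 0) = A.1.1 :=
    fun A => Matrix.SpecialLinearGroup.scalar_eq_coe_self_center A 0
  have hf : Function.Injective
      (fun A : Subgroup.center SL => decide (A.1.1 0 0 = 1)) := by
    intro A B h
    have hiff : (A.1.1 0 0 = 1) ↔ (B.1.1 0 0 = 1) := decide_eq_decide.mp h
    have hAB : A.1.1 0 0 = B.1.1 0 0 := by
      rcases hsq A with hA | hA <;> rcases hsq B with hB | hB
      · rw [hA, hB]
      · exfalso; apply ZMod.neg_one_ne_one (n := p); rw [← hB]; exact hiff.1 hA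
      · exfalso; apply ZMod.neg_one_ne_one (n := p); rw [← hA]; exact hiff.2 hB
      · rw [hA, hB]
    apply Subtype.ext; apply Subtype.ext
    rw [← hscalar A, ← hscalar B, hAB]
  calc Nat.card (Subgroup.center SL)
      ≤ Nat.card Bool := Nat.card_le_card_of_injective _ hf
    _ = 2 := by simp [Nat.card_eq_fintype_card]

/-- Key structural fact: `PSL(2,p)` contains a subgroup whose order divides
`p * ((p-1)/2)` and whose index is at most `p + 1`. -/
lemma psl_key (hp5 : 5 ≤ p) (hp4 : p % 4 = 3) :
    ∃ B : Subgroup (PSL2 p),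
      (Nat.card B ∣ p * ((p - 1) / 2)) ∧
      Nat.card (PSL2 p) ≤ (p + 1) * Nat.card B := by
  classical
  haveI : Fact (2 < p) := ⟨by omega⟩
  haveI : Fact (Even (Fintype.card (Fin 2))) := ⟨by simp⟩
  set Z := Subgroup.center SL with hZ
  let π : SL →* PSL2 p := QuotientGroup.mk' Z
  let ψ : (Tsub p) →* PSL2 p := π.comp (Tsub p).subtype
  suffices h : (Nat.card ψ.range ∣ p * ((p - 1) / 2)) ∧
      Nat.card (PSL2 p) ≤ (p + 1) * Nat.card ψ.range by
    exact ⟨ψ.range, h.1, h.2⟩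
  {
    -- the distinguished central element -1
    have hzT : (-1 : SL) ∈ Tsub p := by
      show ((-1 : SL).1) 1 0 = 0
      rw [Matrix.SpecialLinearGroup.coe_neg]
      simp [Matrix.one_apply]
    have hzZ : (-1 : SL) ∈ Z := by
      rw [hZ]
      exact Subgroup.mem_center_iff.mpr fun g => by rw [mul_neg_one, neg_one_mul]
    have hzne : (-1 : SL) ≠ 1 := by
      intro h
      have h00 := congrArg (fun A : SL => A.1 0 0) h
      simp only [Matrix.SpecialLinearGroup.coe_neg, Matrix.SpecialLinearGroup.coe_one,
        Matrix.neg_apply, Matrix.one_apply_eq] at h00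
      exact ZMod.neg_one_ne_one (n := p) h00
    have hz2 : (-1 : SL) ^ 2 = 1 := by rw [neg_one_sq]
    -- kernel of ψ
    have hker : Nat.card (ψ.ker) = 2 := by
      have hk0 : (⟨-1, hzT⟩ : Tsub p) ∈ ψ.ker := by
        rw [MonoidHom.mem_ker]
        show π (-1 : SL) = 1
        have : (-1 : SL) ∈ MonoidHom.ker π := by
          rw [QuotientGroup.ker_mk']; exact hzZ
        rwa [MonoidHom.mem_ker] at this
      have horder : orderOf (⟨⟨-1, hzT⟩, hk0⟩ : ψ.ker) = 2 := by
        rw [Subgroup.orderOf_mk, Subgroup.orderOf_mk]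
        exact orderOf_eq_prime hz2 hzne
      have h2dvd : 2 ∣ Nat.card ψ.ker := by
        have := orderOf_dvd_natCard (⟨⟨-1, hzT⟩, hk0⟩ : ψ.ker)
        rwa [horder] at this
      have hle : Nat.card ψ.ker ≤ Nat.card Z := by
        have hinj : Function.Injective (fun k : ψ.ker => (⟨k.1.1, by
            have hk := k.2
            rw [MonoidHom.mem_ker] at hk
            have : (k.1.1 : SL) ∈ MonoidHom.ker π := by rw [MonoidHom.mem_ker]; exact hk
            rwa [QuotientGroup.ker_mk'] at this⟩ : Z)) := by
          intro a b h
          have : a.1.1 = b.1.1 := congrArg (fun x : Z => (x : SL)) h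
          exact Subtype.ext (Subtype.ext this)
        exact Nat.card_le_card_of_injective _ hinj
      have hZle : Nat.card Z ≤ 2 := card_center_le_two p hp5
      have hpos : 0 < Nat.card ψ.ker := Nat.card_pos
      omega
    -- counting
    have hT : Nat.card (Tsub p) = (p - 1) * p := cardTsub p
    have hquot := Subgroup.card_eq_card_quotient_mul_card_subgroup ψ.ker
    have hiso : Nat.card ((Tsub p) ⧸ ψ.ker) = Nat.card ψ.range :=
      Nat.card_congr (QuotientGroup.quotientKerEquivRange ψ).toEquiv
    rw [hT, hiso, hker] at hquot
    -- hquot : (p-1) * p = Nat.card ψ.range * 2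
    have hZcard : Nat.card Z = 2 := by
      have h2dvd : 2 ∣ Nat.card Z := by
        have horder : orderOf (⟨-1, hzZ⟩ : Z) = 2 := by
          rw [Subgroup.orderOf_mk]
          exact orderOf_eq_prime hz2 hzne
        have := orderOf_dvd_natCard (⟨-1, hzZ⟩ : Z)
        rwa [horder] at this
      have hZle : Nat.card Z ≤ 2 := card_center_le_two p hp5
      have hpos : 0 < Nat.card Z := Nat.card_pos
      omega
    have hSL := Subgroup.card_eq_card_quotient_mul_card_subgroup Z
    rw [cardSL p, hZcard] at hSL
    -- hSL : p * (p-1) * (p+1) = Nat.card (SL ⧸ Z) * 2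
    obtain ⟨k, hk1, hk2⟩ : ∃ k, p - 1 = 2 * k ∧ k = (p - 1) / 2 :=
      ⟨(p - 1) / 2, by omega, rfl⟩
    rw [hk1] at hquot hSL
    have hB : Nat.card ψ.range = p * k := by
      have : Nat.card ψ.range * 2 = (p * k) * 2 := by rw [← hquot]; ring
      omega
    have hPSL : Nat.card (PSL2 p) = (p + 1) * Nat.card ψ.range := by
      have h2 : Nat.card (PSL2 p) * 2 = ((p + 1) * Nat.card ψ.range) * 2 := by
        have hid : Nat.card (SL ⧸ Z) = Nat.card (PSL2 p) := rfl
        rw [← hid, ← hSL, hB]; ring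
      omega
    constructor
    · rw [hB, hk2]
    · rw [hPSL]
  }

end Aux

lemma coprime_key (p : ℕ) (hp : p.Prime) (hp5 : 5 ≤ p) (hp4 : p % 4 = 3) :
    Nat.Coprime (p * ((p - 1) / 2)) (p + 1) := by
  apply Nat.Coprime.mul
  · have h : Nat.Coprime p (1 + p) := Nat.coprime_add_self_right.mpr (Nat.coprime_one_right p)
    rwa [add_comm] at h
  · set k := (p - 1) / 2 with hk
    have hodd : k % 2 = 1 := by omega
    have h2k : 2 * k = p - 1 := by omega
    have hd2 : Nat.gcd k (p + 1) ∣ 2 := by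
      have h1 : Nat.gcd k (p + 1) ∣ p - 1 := by
        rw [← h2k]; exact Dvd.dvd.mul_left (Nat.gcd_dvd_left _ _) 2
      have h2 : Nat.gcd k (p + 1) ∣ (p + 1) - (p - 1) :=
        Nat.dvd_sub (Nat.gcd_dvd_right _ _) h1
      have h3 : (p + 1) - (p - 1) = 2 := by omega
      rwa [h3] at h2
    rcases (Nat.dvd_prime Nat.prime_two).mp hd2 with h | h
    · exact h
    · exfalso
      have h4 : 2 ∣ k := h ▸ Nat.gcd_dvd_left k (p + 1)
      omega

/-- Let `p ≥ 5` be a prime with `p ≡ 3 (mod 4)`, and let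
`G = PSL(2, p)` act faithfully, transitively and primitively on a finite set `Ω`
whose point stabilizer `G_ω` is isomorphic to the dihedral group of order `p + 1`
(i.e. `DihedralGroup ((p+1)/2)`).  Then `G` has the EKR property: every
intersecting set `S ⊆ G` satisfies `|S| ≤ |G_ω|`. -/
theorem stmt12 (p : ℕ) (hp : p.Prime) (hp5 : 5 ≤ p) (hp4 : p % 4 = 3)
    (G : Type*) [Group G] (e : G ≃* PSL2 p)
    (Ω : Type*) [Fintype Ω] [MulAction G Ω] [FaithfulSMul G Ω]
    [MulAction.IsPretransitive G Ω]
    (hprim : ∀ α : Ω, IsCoatom (MulAction.stabilizer G α)) (ω : Ω)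
    (hstab : Nonempty (MulAction.stabilizer G ω ≃* DihedralGroup ((p + 1) / 2))) :
    ∀ S : Set G, (∀ x ∈ S, ∀ y ∈ S, ∃ α : Ω, x • α = y • α) →
      S.ncard ≤ Nat.card (MulAction.stabilizer G ω) := by
  intro S hS
  haveI hFp : Fact p.Prime := ⟨hp⟩
  haveI : NeZero p := ⟨by omega⟩
  haveI : Finite G := Finite.of_equiv _ e.toEquiv.symm
  classical
  haveI : NeZero ((p + 1) / 2) := ⟨by omega⟩
  have hcardω : Nat.card (MulAction.stabilizer G ω) = p + 1 := by
    obtain ⟨φ⟩ := hstab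
    rw [Nat.card_congr φ.toEquiv, Nat.card_eq_fintype_card, DihedralGroup.card]
    omega
  have hcardstab : ∀ α : Ω, Nat.card (MulAction.stabilizer G α) = p + 1 := by
    intro α
    obtain ⟨g, hg⟩ := MulAction.exists_smul_eq G ω α
    have horb : (MulAction.orbitRel G Ω).r α ω := ⟨g, hg⟩
    rw [Nat.card_congr (MulAction.stabilizerEquivStabilizerOfOrbitRel horb).toEquiv, hcardω]
  have horbstab : Nat.card G = Nat.card Ω * (p + 1) := by
    have h1 := Subgroup.card_eq_card_quotient_mul_card_subgroup (MulAction.stabilizer G ω)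
    have h2 : Nat.card (G ⧸ MulAction.stabilizer G ω) = Nat.card Ω := by
      refine Nat.card_congr ?_
      exact (((MulAction.orbitEquivQuotientStabilizer G ω).symm.trans
        (Equiv.setCongr (MulAction.orbit_eq_univ G ω))).trans (Equiv.Set.univ Ω)).symm.symm
    rw [h1, h2, hcardω]
  obtain ⟨B, hBdvd, hBle⟩ := psl_key p hp5 hp4
  let N : Subgroup G := B.comap e.toMonoidHom
  have hNcard : Nat.card N = Nat.card B :=
    Nat.card_congr (Equiv.subtypeEquiv e.toEquiv fun x => Iff.rfl)
  have hGcard : Nat.card G = Nat.card (PSL2 p) := Nat.card_congr e.toEquiv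
  -- every nontrivial element of N is a derangement
  have hder : ∀ b ∈ N, ∀ α : Ω, b • α = α → b = 1 := by
    intro b hb α hfix
    have h1 : orderOf b ∣ p * ((p - 1) / 2) := by
      have h := orderOf_dvd_natCard (⟨b, hb⟩ : N)
      rw [Subgroup.orderOf_mk] at h
      exact h.trans (hNcard ▸ hBdvd)
    have h2 : orderOf b ∣ p + 1 := by
      have hbs : b ∈ MulAction.stabilizer G α := hfix
      have h := orderOf_dvd_natCard (⟨b, hbs⟩ : MulAction.stabilizer G α)
      rwa [Subgroup.orderOf_mk, hcardstab α] at h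
    have hco : Nat.gcd (p * ((p - 1) / 2)) (p + 1) = 1 := coprime_key p hp hp5 hp4
    have hdvd1 : orderOf b ∣ 1 := by
      have h := Nat.dvd_gcd h1 h2
      rwa [hco] at h
    exact orderOf_eq_one_iff.mp (Nat.dvd_one.mp hdvd1)
  -- the injective product map
  let f : S × N → G := fun x => (x.1 : G) * (x.2 : G)
  have hf : Function.Injective f := by
    rintro ⟨⟨s1, hs1⟩, n1⟩ ⟨⟨s2, hs2⟩, n2⟩ h
    have h' : s1 * (n1 : G) = s2 * (n2 : G) := h
    have hx : s2⁻¹ * s1 = (n2 : G) * (n1 : G)⁻¹ := by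
      have h'' : s1 = s2 * (n2 : G) * (n1 : G)⁻¹ := by rw [← h']; group
      rw [h'']; group
    have hmem : s2⁻¹ * s1 ∈ N := by
      rw [hx]; exact mul_mem n2.2 (inv_mem n1.2)
    obtain ⟨α, hα⟩ := hS s1 hs1 s2 hs2
    have hfix : (s2⁻¹ * s1) • α = α := by rw [mul_smul, hα, inv_smul_smul]
    have h1 := hder _ hmem α hfix
    have hss : s1 = s2 := (inv_mul_eq_one.mp h1).symm
    have hnn : (n1 : G) = (n2 : G) := by
      apply mul_left_cancel (a := s1)
      rw [h', hss]
    exact Prod.ext (Subtype.ext hss) (Subtype.ext hnn)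
  have hcount : Nat.card S * Nat.card N ≤ Nat.card G := by
    have h := Nat.card_le_card_of_injective f hf
    rwa [Nat.card_prod] at h
  have hΩB : Nat.card Ω * (p + 1) ≤ (p + 1) * Nat.card B := by
    rw [← horbstab, hGcard]; exact hBle
  have hNpos : 0 < Nat.card N := Nat.card_pos
  have hfinal : Nat.card S ≤ p + 1 := by
    have hchain : Nat.card S * Nat.card N ≤ (p + 1) * Nat.card N := by
      calc Nat.card S * Nat.card N ≤ Nat.card G := hcount
        _ = Nat.card Ω * (p + 1) := horbstab
        _ ≤ (p + 1) * Nat.card B := hΩB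
        _ = (p + 1) * Nat.card N := by rw [hNcard]
    exact Nat.le_of_mul_le_mul_right hchain hNpos
  rw [hcardω, ← Nat.card_coe_set_eq]
  exact hfinal
end

section
/- Let p > 3 be a prime with p ≡ ±1 (mod 4), and let S ≤ SL(2, ZMod p) be a subgroup isomorphic to SL(2, ZMod 3). Then S acts semi-regularly (freely) on the nonzero vectors of (ZMod p)²: for every g ∈ S with g ≠ 1 and every nonzero v ∈ (ZMod p)², g·v ≠ v. -/
open Matrix

private lemma sq_zero_pow {p : ℕ} [Fact p.Prime] (N : Matrix (Fin 2) (Fin 2) (ZMod p))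
    (hN : N * N = 0) : ∀ n : ℕ, (1 + N) ^ n = 1 + (n : ZMod p) • N := by
  intro n
  induction n with
  | zero => simp
  | succ k ih =>
    rw [pow_succ, ih, add_mul, one_mul, mul_add, mul_one, smul_mul_assoc, hN, smul_zero,
      add_zero, Nat.cast_succ, add_smul, one_smul]
    abel

/-- Let `p > 3` be a prime with `p ≡ ±1 (mod 4)`, and let
`S ≤ SL(2, ZMod p)` be a subgroup isomorphic to `SL(2, ZMod 3)`.  Then `S` acts
semi-regularly (freely) on the nonzero vectors of `(ZMod p)²`: no nonidentity
element of `S` fixes a nonzero vector. -/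
theorem stmt15 (p : ℕ) (hp : p.Prime) (hp3 : 3 < p)
    (hpm : p % 4 = 1 ∨ p % 4 = 3)
    (S : Subgroup (Matrix.SpecialLinearGroup (Fin 2) (ZMod p)))
    (hS : Nonempty (S ≃* Matrix.SpecialLinearGroup (Fin 2) (ZMod 3))) :
    ∀ g ∈ S, g ≠ 1 → ∀ v : Fin 2 → ZMod p, v ≠ 0 →
      ((g : Matrix.SpecialLinearGroup (Fin 2) (ZMod p)) :
          Matrix (Fin 2) (Fin 2) (ZMod p)).mulVec v ≠ v := by
  haveI : Fact p.Prime := ⟨hp⟩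
  intro g hg hg1 v hv hfix
  apply hg1
  set M : Matrix (Fin 2) (Fin 2) (ZMod p) := (g : Matrix (Fin 2) (Fin 2) (ZMod p)) with hM
  -- g ^ 24 = 1
  obtain ⟨e⟩ := hS
  have hcard : Nat.card S = 24 := by
    rw [Nat.card_congr e.toEquiv, Nat.card_eq_fintype_card]; decide
  have h24 : g ^ 24 = 1 := by
    have h : (⟨g, hg⟩ : S) ^ 24 = 1 := by rw [← hcard]; exact pow_card_eq_one'
    have := congrArg (Subtype.val) h
    simpa using this
  have hM24 : M ^ 24 = 1 := by
    have := congrArg (fun x : Matrix.SpecialLinearGroup (Fin 2) (ZMod p) =>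
      (x : Matrix (Fin 2) (Fin 2) (ZMod p))) h24
    simpa using this
  -- determinant and trace facts
  have hdet : M.det = 1 := g.2
  have hker : (M - 1).mulVec v = 0 := by
    rw [sub_mulVec, one_mulVec, hfix, sub_self]
  have hdet0 : (M - 1).det = 0 := by
    rw [← Matrix.exists_mulVec_eq_zero_iff]
    exact ⟨v, hv, hker⟩
  have e1 : M 0 0 * M 1 1 - M 0 1 * M 1 0 = 1 := by rw [← det_fin_two]; exact hdet
  have e2 : (M 0 0 - 1) * (M 1 1 - 1) - M 0 1 * M 1 0 = 0 := by
    have h := hdet0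
    rw [det_fin_two] at h
    simpa [Matrix.sub_apply, Matrix.one_apply] using h
  have htr : M 0 0 + M 1 1 = 2 := by linear_combination e1 - e2
  -- N := M - 1 is square-zero
  set N : Matrix (Fin 2) (Fin 2) (ZMod p) := M - 1 with hNdef
  have hN2 : N * N = 0 := by
    ext i j
    fin_cases i <;> fin_cases j <;>
      simp [hNdef, Matrix.mul_apply, Fin.sum_univ_two, Matrix.sub_apply, Matrix.one_apply]
    · linear_combination (M 0 0) * htr - e1
    · linear_combination (M 0 1) * htr
    · linear_combination (M 1 0) * htr
    · linear_combination (M 1 1) * htr - e1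
  have hpow : (1 + N) ^ 24 = 1 + (24 : ZMod p) • N := sq_zero_pow N hN2 24
  have hMN : M = 1 + N := by rw [hNdef]; abel
  have h240 : (24 : ZMod p) • N = 0 := by
    have : (1 : Matrix (Fin 2) (Fin 2) (ZMod p)) + (24 : ZMod p) • N = 1 := by
      rw [← hpow, ← hMN, hM24]
    linear_combination (norm := abel) this
  have h24ne : (24 : ZMod p) ≠ 0 := by
    intro h
    have hdvd : p ∣ 24 := by
      have := (ZMod.natCast_eq_zero_iff 24 p).mp (by exact_mod_cast h)
      exact this
    have hle := Nat.le_of_dvd (by norm_num) hdvd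
    interval_cases p <;> revert hdvd <;> revert hp <;> decide
  have hN0 : N = 0 := by
    rcases smul_eq_zero.mp h240 with h | h
    · exact absurd h h24ne
    · exact h
  have hM1 : M = 1 := by rw [hMN, hN0, add_zero]
  exact Subtype.ext hM1
end

section
/- Let G be a finite group with a nontrivial normal subgroup K ⊴ G and a nontrivial subgroup H ≤ G such that K ∩ H = {1}, G = K·H, and the conjugation action of H on K is fixed-point-free away from the identity (for all h ∈ H with h ≠ 1 and all k ∈ K with k ≠ 1, h·k·h⁻¹ ≠ k), i.e. G is a Frobenius group with kernel K and complement H. Consider the action of G by left multiplication on the coset space G/H. Then a subset S ⊆ G is an intersecting set if and only if there exists a family (H_c)_{c ∈ K} of pairwise disjoint subsets of H (H_c ⊆ H and H_c ∩ H_d = ∅ for distinct c, d ∈ K) such that S = { h·c : c ∈ K, h ∈ H_c }. -/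
/-- Let `G` be a finite Frobenius group with kernel `K` and
complement `H` (so `K ⊴ G` and `H ≤ G` are nontrivial, `K ∩ H = 1`, `G = K·H`,
and conjugation by nonidentity elements of `H` fixes no nonidentity element of
`K`), acting by left multiplication on `G ⧸ H`.  Then `S ⊆ G` is an intersecting
set if and only if there is a family `(H_c)_{c ∈ K}` of pairwise disjoint subsets
of `H` with `S = { h·c : c ∈ K, h ∈ H_c }`. -/
theorem stmt16 {G : Type*} [Group G] [Finite G] (K H : Subgroup G) [K.Normal]
    (hK : K ≠ ⊥) (hH : H ≠ ⊥) (hKH : K ⊓ H = ⊥)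
    (hprod : ∀ g : G, ∃ k ∈ K, ∃ h ∈ H, g = k * h)
    (hfrob : ∀ h ∈ H, h ≠ 1 → ∀ k ∈ K, k ≠ 1 → h * k * h⁻¹ ≠ k)
    (S : Set G) :
    (∀ x ∈ S, ∀ y ∈ S, ∃ α : G ⧸ H, x • α = y • α) ↔
      ∃ Hc : G → Set G,
        (∀ c ∈ K, Hc c ⊆ (H : Set G)) ∧
        (∀ c ∈ K, ∀ d ∈ K, c ≠ d → Hc c ∩ Hc d = ∅) ∧
        S = {g : G | ∃ c ∈ K, ∃ h ∈ Hc c, g = h * c} := by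
  have hnorm : K.Normal := inferInstance
  constructor
  · intro hS
    refine ⟨fun c => {h : G | h ∈ H ∧ h * c ∈ S}, fun c _ h hh => hh.1, ?_, ?_⟩
    · intro c hc d hd hcd
      ext h
      simp only [Set.mem_empty_iff_false, iff_false]
      rintro ⟨⟨hhH, hhc⟩, -, hhd⟩
      obtain ⟨α, hα⟩ := hS _ hhc _ hhd
      obtain ⟨g, rfl⟩ := QuotientGroup.mk_surjective α
      have h1 : ((h * c) * g : G ⧸ H) = ((h * d) * g : G ⧸ H) := hα
      rw [QuotientGroup.eq] at h1
      have h2 : ((h * c) * g)⁻¹ * ((h * d) * g) = g⁻¹ * (c⁻¹ * d) * g := by group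
      rw [h2] at h1
      have h3 : g⁻¹ * (c⁻¹ * d) * g ∈ K := by
        have : g⁻¹ * (c⁻¹ * d) * g⁻¹⁻¹ ∈ K :=
          hnorm.conj_mem _ (mul_mem (inv_mem hc) hd) g⁻¹
        simpa using this
      have h4 : g⁻¹ * (c⁻¹ * d) * g ∈ K ⊓ H := ⟨h3, h1⟩
      rw [hKH, Subgroup.mem_bot] at h4
      have : c⁻¹ * d = 1 := by
        have := congrArg (fun z => g * z * g⁻¹) h4
        simpa [mul_assoc] using this
      exact hcd (by rw [← mul_one c, ← this]; group)
    · ext s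
      simp only [Set.mem_setOf_eq]
      constructor
      · intro hs
        obtain ⟨k, hk, h, hh, rfl⟩ := hprod s
        refine ⟨h⁻¹ * k * h, ?_, h, ⟨hh, ?_⟩, by group⟩
        · have : h⁻¹ * k * h⁻¹⁻¹ ∈ K := hnorm.conj_mem _ hk h⁻¹
          simpa using this
        · have : h * (h⁻¹ * k * h) = k * h := by group
          rw [this]; exact hs
      · rintro ⟨c, hc, h, ⟨hhH, hhS⟩, rfl⟩
        exact hhS
  · rintro ⟨Hc, hsub, hdisj, rfl⟩ x hx y hy
    obtain ⟨c₁, hc₁, h₁, hh₁, rfl⟩ := hx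
    obtain ⟨c₂, hc₂, h₂, hh₂, rfl⟩ := hy
    have hH₁ : h₁ ∈ H := hsub c₁ hc₁ hh₁
    have hH₂ : h₂ ∈ H := hsub c₂ hc₂ hh₂
    by_cases heq : h₁ = h₂
    · subst heq
      have hcc : c₁ = c₂ := by
        by_contra hne
        have := hdisj c₁ hc₁ c₂ hc₂ hne
        have : h₁ ∈ Hc c₁ ∩ Hc c₂ := ⟨hh₁, hh₂⟩
        rw [hdisj c₁ hc₁ c₂ hc₂ hne] at this
        exact this
      subst hcc
      exact ⟨(1 : G), rfl⟩
    · set h : G := h₂⁻¹ * h₁ with hdef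
      have hhH : h ∈ H := mul_mem (inv_mem hH₂) hH₁
      have hne1 : h ≠ 1 := by
        intro h1
        apply heq
        have := congrArg (fun z => h₂ * z) h1
        simpa [hdef, ← mul_assoc] using this
      -- surjectivity of k ↦ k * (h * k⁻¹ * h⁻¹) on K
      have hmemf : ∀ k : K, (k : G) * (h * (k : G)⁻¹ * h⁻¹) ∈ K := by
        intro k
        exact mul_mem k.2 (hnorm.conj_mem _ (inv_mem k.2) h)
      have hinj : Function.Injective (fun k : K => (⟨(k : G) * (h * (k : G)⁻¹ * h⁻¹),
          hmemf k⟩ : K)) := by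
        intro k₁ k₂ hf
        have hf' : (k₁ : G) * (h * (k₁ : G)⁻¹ * h⁻¹) = (k₂ : G) * (h * (k₂ : G)⁻¹ * h⁻¹) :=
          congrArg Subtype.val hf
        have hcomm : h * ((k₂ : G)⁻¹ * k₁) * h⁻¹ = (k₂ : G)⁻¹ * k₁ := by
          have : (k₂ : G)⁻¹ * (k₁ : G) * (h * (k₁ : G)⁻¹ * h⁻¹) =
              (h * (k₂ : G)⁻¹ * h⁻¹) := by
            rw [show (k₂:G)⁻¹ * (k₁:G) * (h * (k₁:G)⁻¹ * h⁻¹) =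
              (k₂:G)⁻¹ * ((k₁:G) * (h * (k₁:G)⁻¹ * h⁻¹)) by group, hf']
            group
          calc h * ((k₂ : G)⁻¹ * k₁) * h⁻¹
              = ((h * (k₂ : G)⁻¹ * h⁻¹) * (h * (k₁:G) * h⁻¹)) := by group
            _ = ((k₂ : G)⁻¹ * (k₁ : G) * (h * (k₁ : G)⁻¹ * h⁻¹)) * (h * (k₁:G) * h⁻¹) := by
                rw [this]
            _ = (k₂ : G)⁻¹ * k₁ := by group
        have hKmem : (k₂ : G)⁻¹ * (k₁ : G) ∈ K := mul_mem (inv_mem k₂.2) k₁.2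
        by_cases hk1 : (k₂ : G)⁻¹ * (k₁ : G) = 1
        · have : (k₁ : G) = (k₂ : G) := by
            have := congrArg (fun z => (k₂ : G) * z) hk1
            simpa [← mul_assoc] using this
          exact Subtype.ext this
        · exact absurd hcomm (hfrob h hhH hne1 _ hKmem hk1)
      have hsurj := Finite.surjective_of_injective hinj
      have hk₀ : c₂⁻¹ * (h * c₁ * h⁻¹) ∈ K :=
        mul_mem (inv_mem hc₂) (hnorm.conj_mem _ hc₁ h)
      obtain ⟨k, hkeq⟩ := hsurj ⟨c₂⁻¹ * (h * c₁ * h⁻¹), hk₀⟩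
      have hkeq' : (k : G) * (h * (k : G)⁻¹ * h⁻¹) = c₂⁻¹ * (h * c₁ * h⁻¹) :=
        congrArg Subtype.val hkeq
      refine ⟨((k : G) : G ⧸ H), ?_⟩
      show (((h₁ * c₁) * (k : G) : G) : G ⧸ H) = (((h₂ * c₂) * (k : G) : G) : G ⧸ H)
      rw [QuotientGroup.eq]
      have hc₂eq : c₂ = (h * c₁ * h⁻¹) * ((k : G) * (h * (k : G)⁻¹ * h⁻¹))⁻¹ := by
        rw [hkeq']; group
      have key : ((h₁ * c₁) * (k : G))⁻¹ * ((h₂ * c₂) * (k : G)) = h⁻¹ := by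
        rw [hc₂eq, hdef]; group
      rw [key]
      exact inv_mem hhH
end

section
/- Let G be a finite group with a nontrivial normal subgroup K ⊴ G and a nontrivial subgroup H ≤ G such that K ∩ H = {1}, G = K·H, and for all h ∈ H with h ≠ 1 and all k ∈ K with k ≠ 1, h·k·h⁻¹ ≠ k (so G is a Frobenius group with kernel K and complement H), acting by left multiplication on G/H. Then every maximum intersecting set of G is a left coset of a point stabilizer (i.e. of a conjugate of H) if and only if |H| = 2; that is, G has the strict-EKR property if and only if |H| = 2. -/
open scoped Pointwise

/-- Let `G` be a finite Frobenius group with kernel `K` and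
complement `H`, acting by left multiplication on `G ⧸ H`.  Then every maximum
intersecting set of `G` is a left coset of a point stabilizer if and only if
`|H| = 2`; that is, `G` has the strict-EKR property iff `|H| = 2`. -/
theorem stmt17 {G : Type*} [Group G] [Finite G] (K H : Subgroup G) [K.Normal]
    (hK : K ≠ ⊥) (hH : H ≠ ⊥) (hKH : K ⊓ H = ⊥)
    (hprod : ∀ g : G, ∃ k ∈ K, ∃ h ∈ H, g = k * h)
    (hfrob : ∀ h ∈ H, h ≠ 1 → ∀ k ∈ K, k ≠ 1 → h * k * h⁻¹ ≠ k) :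
    (∀ S : Set G,
        (∀ x ∈ S, ∀ y ∈ S, ∃ α : G ⧸ H, x • α = y • α) →
        (∀ T : Set G, (∀ x ∈ T, ∀ y ∈ T, ∃ α : G ⧸ H, x • α = y • α) →
          T.ncard ≤ S.ncard) →
        ∃ (a : G) (q : G ⧸ H),
          S = a • ((MulAction.stabilizer G q : Subgroup G) : Set G)) ↔
      Nat.card H = 2 := by
  classical
  -- Step 1 : an element fixes a point of `G ⧸ H` iff it is trivial or outside `K`.
  have fix_iff : ∀ g : G, (∃ α : G ⧸ H, g • α = α) ↔ (g = 1 ∨ g ∉ K) := by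
    intro g
    constructor
    · rintro ⟨α, hα⟩
      obtain ⟨x, rfl⟩ := QuotientGroup.mk_surjective α
      rw [MulAction.Quotient.smul_mk, QuotientGroup.eq, smul_eq_mul] at hα
      by_cases hgK : g ∈ K
      · left
        have hmem : x⁻¹ * g⁻¹ * x ∈ K := by
          have := ‹K.Normal›.conj_mem g⁻¹ (inv_mem hgK) x⁻¹
          simpa using this
        have hmemH : x⁻¹ * g⁻¹ * x ∈ H := by
          have : (g * x)⁻¹ * x = x⁻¹ * g⁻¹ * x := by group
          rwa [this] at hα
        have : x⁻¹ * g⁻¹ * x ∈ K ⊓ H := ⟨hmem, hmemH⟩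
        rw [hKH, Subgroup.mem_bot] at this
        have : g⁻¹ = 1 := by
          have := congrArg (fun z => x * z * x⁻¹) this
          simpa [mul_assoc] using this
        simpa using congrArg (·⁻¹) this
      · right; exact hgK
    · rintro (rfl | hgK)
      · exact ⟨((1:G) : G ⧸ H), one_smul _ _⟩
      · obtain ⟨k, hk, h, hh, rfl⟩ := hprod g
        have hh1 : h ≠ 1 := by rintro rfl; simp at hgK; exact hgK hk
        set f : K → K := fun m => ⟨(m : G) * (h * (m : G)⁻¹ * h⁻¹),
          mul_mem m.2 (‹K.Normal›.conj_mem _ (inv_mem m.2) h)⟩ with hf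
        have hinj : Function.Injective f := by
          intro m m' he
          have e : (m : G) * (h * (m : G)⁻¹ * h⁻¹) = (m' : G) * (h * (m' : G)⁻¹ * h⁻¹) :=
            congrArg Subtype.val he
          have e4 : (m' : G)⁻¹ * m * h = h * ((m' : G)⁻¹ * m) := by
            calc (m' : G)⁻¹ * m * h
                = (m' : G)⁻¹ * ((m : G) * (h * (m : G)⁻¹ * h⁻¹)) * (h * m) := by group
              _ = (m' : G)⁻¹ * ((m' : G) * (h * (m' : G)⁻¹ * h⁻¹)) * (h * m) := by rw [e]
              _ = h * ((m' : G)⁻¹ * m) := by group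
          have hx : ((m' : G)⁻¹ * m) ∈ K := mul_mem (inv_mem m'.2) m.2
          by_cases hxe : ((m' : G)⁻¹ * m) = 1
          · ext
            have := congrArg (fun z => (m' : G) * z) hxe
            simp only [mul_one] at this
            rw [← this]; group
          · exfalso
            apply hfrob h hh hh1 _ hx hxe
            rw [← e4]; group
        obtain ⟨m, hm⟩ := Finite.surjective_of_injective hinj ⟨k, hk⟩
        have hmv : (m : G) * (h * (m : G)⁻¹ * h⁻¹) = k := congrArg Subtype.val hm
        refine ⟨((m : G) : G ⧸ H), ?_⟩
        rw [MulAction.Quotient.smul_mk, QuotientGroup.eq, smul_eq_mul]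
        have : (k * h * (m : G))⁻¹ * (m : G) = h⁻¹ := by rw [← hmv]; group
        rw [this]; exact inv_mem hh
  -- elements of `K` push to the identity side in `G ⧸ K`
  have hmkKH : ∀ k ∈ K, ∀ h : G, ((k * h : G) : G ⧸ K) = (h : G ⧸ K) := by
    intro k hk h
    rw [QuotientGroup.eq]
    have : (k * h)⁻¹ * h = h⁻¹ * k⁻¹ * h := by group
    rw [this]
    have := ‹K.Normal›.conj_mem k⁻¹ (K.inv_mem hk) h⁻¹
    simpa using this
  -- the quotient map is injective on `H`
  have hmkH : ∀ x ∈ H, ∀ z ∈ H, (x : G ⧸ K) = (z : G ⧸ K) → x = z := by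
    intro x hx z hz he
    rw [QuotientGroup.eq] at he
    have : x⁻¹ * z ∈ K ⊓ H := Subgroup.mem_inf.mpr ⟨he, mul_mem (H.inv_mem hx) hz⟩
    rw [hKH, Subgroup.mem_bot] at this
    have := congrArg (fun w => x * w) this
    simpa [mul_assoc] using this.symm
  -- Step 2 : `Nat.card (G ⧸ K) = Nat.card H`.
  have hcard : Nat.card H = Nat.card (G ⧸ K) := by
    apply Nat.card_eq_of_bijective (fun h : H => ((h : G) : G ⧸ K))
    constructor
    · intro a b he
      exact Subtype.ext (hmkH a a.2 b b.2 he)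
    · intro q
      obtain ⟨g, rfl⟩ := QuotientGroup.mk_surjective q
      obtain ⟨k, hk, h, hh, rfl⟩ := hprod g
      exact ⟨⟨h, hh⟩, (hmkKH k hk h).symm⟩
  -- Step 3 : any intersecting set has at most `Nat.card H` elements.
  have hbound : ∀ T : Set G, (∀ x ∈ T, ∀ y ∈ T, ∃ α : G ⧸ H, x • α = y • α) →
      T.ncard ≤ Nat.card H := by
    intro T hT
    have hinj : Set.InjOn (fun g : G => (g : G ⧸ K)) T := by
      intro x hx y hy he
      obtain ⟨α, hα⟩ := hT x hx y hy
      have hfix : (y⁻¹ * x) • α = α := by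
        rw [mul_smul, hα, inv_smul_smul]
      have := (fix_iff _).1 ⟨α, hfix⟩
      rcases this with h1 | hnK
      · have h1' := congrArg (fun z => y * z) h1
        simp only [mul_one] at h1'
        rw [← h1']; simp [mul_assoc]
      · exfalso
        apply hnK
        rw [QuotientGroup.eq] at he
        simpa using inv_mem he
    calc T.ncard = ((fun g : G => (g : G ⧸ K)) '' T).ncard :=
          (Set.ncard_image_of_injOn hinj).symm
      _ ≤ (Set.univ : Set (G ⧸ K)).ncard :=
          Set.ncard_le_ncard (Set.subset_univ _) Set.finite_univ
      _ = Nat.card (G ⧸ K) := Set.ncard_univ _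
      _ = Nat.card H := hcard.symm
  -- `H` itself is intersecting
  have hHint : ∀ x ∈ (H : Set G), ∀ y ∈ (H : Set G), ∃ α : G ⧸ H, x • α = y • α := by
    intro x hx y hy
    refine ⟨((1:G) : G ⧸ H), ?_⟩
    rw [MulAction.Quotient.smul_mk, MulAction.Quotient.smul_mk, QuotientGroup.eq]
    simpa using mul_mem (inv_mem hx) hy
  have hHcard : (H : Set G).ncard = Nat.card H := by
    rw [← Nat.card_coe_set_eq]; rfl
  constructor
  · -- strict EKR → |H| = 2
    intro hekr
    by_contra h2
    have h1 : Nat.card H ≠ 1 := fun h => hH (Subgroup.card_eq_one.mp h)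
    have h0 : 0 < Nat.card H := Nat.card_pos
    have h3 : 3 ≤ Nat.card H := by omega
    obtain ⟨h₀, hh₀, hh₀1⟩ : ∃ h₀ ∈ H, h₀ ≠ 1 := by
      by_contra hcon
      push_neg at hcon
      exact hH ((Subgroup.eq_bot_iff_forall H).mpr hcon)
    obtain ⟨k₀, hk₀, hk₀1⟩ : ∃ k₀ ∈ K, k₀ ≠ 1 := by
      by_contra hcon
      push_neg at hcon
      exact hK ((Subgroup.eq_bot_iff_forall K).mpr hcon)
    obtain ⟨h₁, hh₁, hh₁1, hh₁0⟩ : ∃ h₁ ∈ H, h₁ ≠ 1 ∧ h₁ ≠ h₀ := by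
      by_contra hcon
      push_neg at hcon
      have hsub : (H : Set G) ⊆ {1, h₀} := by
        intro x hx
        by_cases hx1 : x = 1
        · exact Or.inl hx1
        · exact Or.inr (hcon x hx hx1)
      have : (H : Set G).ncard ≤ 2 := by
        calc (H : Set G).ncard ≤ ({1, h₀} : Set G).ncard :=
              Set.ncard_le_ncard hsub (Set.toFinite _)
          _ ≤ ({h₀} : Set G).ncard + 1 := Set.ncard_insert_le _ _
          _ = 2 := by simp
      omega
    -- the candidate maximum intersecting set that is not a coset
    have hkh0H : k₀ * h₀ ∉ (H : Set G) := by
      intro hmem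
      have hkH : k₀ ∈ H := by
        have := mul_mem (show k₀ * h₀ ∈ H from hmem) (H.inv_mem hh₀)
        simpa [mul_assoc] using this
      have : k₀ ∈ K ⊓ H := Subgroup.mem_inf.mpr ⟨hk₀, hkH⟩
      rw [hKH, Subgroup.mem_bot] at this
      exact hk₀1 this
    set S : Set G := ((H : Set G) \ {h₀}) ∪ {k₀ * h₀} with hSdef
    have hSint : ∀ x ∈ S, ∀ y ∈ S, ∃ α : G ⧸ H, x • α = y • α := by
      have key : ∀ x y : G, (x = y ∨ y⁻¹ * x ∉ K) → ∃ α : G ⧸ H, x • α = y • α := by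
        rintro x y (rfl | hnK)
        · exact ⟨((1:G) : G ⧸ H), rfl⟩
        · obtain ⟨α, hα⟩ := (fix_iff (y⁻¹ * x)).2 (Or.inr hnK)
          refine ⟨α, ?_⟩
          have e : x = y * (y⁻¹ * x) := by group
          conv_lhs => rw [e]
          rw [mul_smul, hα]
      intro x hx y hy
      rcases hx with hx | hx <;> rcases hy with hy | hy
      · apply key
        by_cases hmem : y⁻¹ * x ∈ K
        · exact Or.inl (hmkH y hy.1 x hx.1 (QuotientGroup.eq.mpr hmem)).symm
        · exact Or.inr hmem
      · rw [Set.mem_singleton_iff] at hy; subst hy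
        apply key
        refine Or.inr fun hmem => ?_
        have e1 : ((k₀ * h₀ : G) : G ⧸ K) = (x : G ⧸ K) := QuotientGroup.eq.mpr hmem
        have e2 : ((h₀ : G) : G ⧸ K) = (x : G ⧸ K) := by rw [← hmkKH k₀ hk₀ h₀]; exact e1
        have := hmkH h₀ hh₀ x hx.1 e2
        exact hx.2 (by simpa using this.symm)
      · rw [Set.mem_singleton_iff] at hx; subst hx
        apply key
        refine Or.inr fun hmem => ?_
        have e1 : ((y : G) : G ⧸ K) = ((k₀ * h₀ : G) : G ⧸ K) := QuotientGroup.eq.mpr hmem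
        have e2 : ((y : G) : G ⧸ K) = ((h₀ : G) : G ⧸ K) := by rw [← hmkKH k₀ hk₀ h₀]; exact e1
        have := hmkH y hy.1 h₀ hh₀ e2
        exact hy.2 (by simpa using this)
      · rw [Set.mem_singleton_iff] at hx hy
        exact key x y (Or.inl (hx.trans hy.symm))
    have hScard : S.ncard = Nat.card H := by
      have hdisj : Disjoint ((H : Set G) \ {h₀}) ({k₀ * h₀} : Set G) :=
        Set.disjoint_singleton_right.mpr fun hc => hkh0H hc.1
      rw [hSdef, Set.ncard_union_eq hdisj (Set.toFinite _) (Set.toFinite _),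
        Set.ncard_singleton, ← hHcard]
      exact Set.ncard_diff_singleton_add_one hh₀ (Set.toFinite _)
    have hSmax : ∀ T : Set G, (∀ x ∈ T, ∀ y ∈ T, ∃ α : G ⧸ H, x • α = y • α) →
        T.ncard ≤ S.ncard := fun T hT => by rw [hScard]; exact hbound T hT
    obtain ⟨a, q, hSeq⟩ := hekr S hSint hSmax
    obtain ⟨g, rfl⟩ := QuotientGroup.mk_surjective q
    obtain ⟨k, hk, h, hh, rfl⟩ := hprod g
    -- since `1 ∈ S`, the coset is the stabilizer itself
    have h1S : (1 : G) ∈ S := by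
      refine Or.inl ⟨H.one_mem, fun hc => hh₀1 ?_⟩
      have : (1 : G) = h₀ := by simpa using hc
      exact this.symm
    have haP : a⁻¹ ∈ MulAction.stabilizer G ((k * h : G) : G ⧸ H) := by
      rw [hSeq] at h1S
      obtain ⟨p, hp, hap⟩ := Set.mem_smul_set.mp h1S
      rw [smul_eq_mul] at hap
      rwa [← eq_inv_of_mul_eq_one_right hap]
    have hSP : S = ((MulAction.stabilizer G ((k * h : G) : G ⧸ H) : Subgroup G) : Set G) := by
      rw [hSeq]
      ext z
      rw [Set.mem_smul_set_iff_inv_smul_mem, smul_eq_mul, SetLike.mem_coe, SetLike.mem_coe]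
      exact Subgroup.mul_mem_cancel_left _ haP
    by_cases hk1 : k = 1
    · -- then the stabilizer is `H` itself, but `k₀ * h₀ ∈ S \ H`
      subst hk1
      have e0 : ((1 * h : G) : G ⧸ H) = ((1 : G) : G ⧸ H) := by
        rw [QuotientGroup.eq]
        simpa using H.inv_mem hh
      rw [e0, MulAction.stabilizer_quotient] at hSP
      exact hkh0H (hSP ▸ (Or.inr rfl : k₀ * h₀ ∈ S))
    · -- then `h₁` centralises `k`, contradicting the Frobenius condition
      have hh1S : h₁ ∈ S := Or.inl ⟨hh₁, fun hc => hh₁0 (by simpa using hc)⟩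
      rw [hSP] at hh1S
      have hfix : h₁ • ((k * h : G) : G ⧸ H) = ((k * h : G) : G ⧸ H) := hh1S
      rw [MulAction.Quotient.smul_mk, QuotientGroup.eq, smul_eq_mul] at hfix
      have hw : h⁻¹ * (k⁻¹ * h₁⁻¹ * k) * h ∈ H := by
        have e : (h₁ * (k * h))⁻¹ * (k * h) = h⁻¹ * (k⁻¹ * h₁⁻¹ * k) * h := by group
        rwa [e] at hfix
      have hu : k⁻¹ * h₁⁻¹ * k ∈ H := by
        have e : k⁻¹ * h₁⁻¹ * k = h * (h⁻¹ * (k⁻¹ * h₁⁻¹ * k) * h) * h⁻¹ := by group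
        rw [e]
        exact mul_mem (mul_mem hh hw) (H.inv_mem hh)
      have hKmem : h₁ * (k⁻¹ * h₁⁻¹ * k) ∈ K := by
        have e : h₁ * (k⁻¹ * h₁⁻¹ * k) = (h₁ * k⁻¹ * h₁⁻¹) * k := by group
        rw [e]
        exact mul_mem (‹K.Normal›.conj_mem _ (K.inv_mem hk) h₁) hk
      have hKH1 : h₁ * (k⁻¹ * h₁⁻¹ * k) ∈ K ⊓ H :=
        Subgroup.mem_inf.mpr ⟨hKmem, mul_mem hh₁ hu⟩
      rw [hKH, Subgroup.mem_bot] at hKH1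
      have hu2 : k⁻¹ * h₁⁻¹ * k = h₁⁻¹ := (inv_eq_of_mul_eq_one_right hKH1).symm
      have hc : k * h₁⁻¹ = h₁⁻¹ * k := by
        conv_lhs => rw [← hu2]
        group
      have hcomm : h₁⁻¹ * k * (h₁⁻¹)⁻¹ = k := by
        rw [inv_inv, ← hc]
        group
      exact hfrob h₁⁻¹ (H.inv_mem hh₁) (inv_ne_one.mpr hh₁1) k hk hk1 hcomm
  · -- |H| = 2 → strict EKR
    intro h2 S hSint hSmax
    have hle : S.ncard ≤ 2 := h2 ▸ hbound S hSint
    have hge : 2 ≤ S.ncard := by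
      have := hSmax (H : Set G) hHint
      rwa [hHcard, h2] at this
    obtain ⟨x, y, hxy, rfl⟩ := Set.ncard_eq_two.mp (le_antisymm hle hge)
    have hxS : x ∈ ({x, y} : Set G) := Or.inl rfl
    have hyS : y ∈ ({x, y} : Set G) := Or.inr rfl
    obtain ⟨α, hα⟩ := hSint y hyS x hxS
    have hgP : x⁻¹ * y ∈ MulAction.stabilizer G α := by
      rw [MulAction.mem_stabilizer_iff, mul_smul, hα, inv_smul_smul]
    refine ⟨x, α, ?_⟩
    have hPcard : Nat.card (MulAction.stabilizer G α) = 2 := by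
      obtain ⟨m, rfl⟩ := QuotientGroup.mk_surjective α
      have e1 : ((m : G) : G ⧸ H) = m • ((1 : G) : G ⧸ H) := by
        rw [MulAction.Quotient.smul_mk, smul_eq_mul, mul_one]
      rw [e1, MulAction.stabilizer_smul_eq_stabilizer_map_conj, MulAction.stabilizer_quotient,
        ← h2]
      exact (Nat.card_congr (H.equivMapOfInjective _ (MulAut.conj m).injective).toEquiv).symm
    have hsub : ({x, y} : Set G) ⊆ x • ((MulAction.stabilizer G α : Subgroup G) : Set G) := by
      rintro z (rfl | rfl)
      · exact Set.mem_smul_set.mpr ⟨1, (MulAction.stabilizer G α).one_mem, by simp⟩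
      · refine Set.mem_smul_set.mpr ⟨x⁻¹ * z, hgP, ?_⟩
        rw [smul_eq_mul, mul_inv_cancel_left]
    refine Set.eq_of_subset_of_ncard_le hsub ?_ (Set.toFinite _)
    rw [Set.ncard_smul_set, ← Nat.card_coe_set_eq, Set.ncard_pair hxy]
    exact le_of_eq hPcard
end
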